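/- arXiv:2111.02579 — 13 statements merged into one kernel-verified Lean document; each statement's English description precedes it below -/
import Mathlib

section
/- Let a reallocation instance be given in which d⁺(w) > 0 and d⁻(w) > 0 for every w ∈ W. Define ρ(w) = max( ⌈(∑_{p∈P⁺(w)} size(p)) / d⁺(w)⌉ , ⌈(∑_{p∈P⁻(w)} size(p)) / d⁻(w)⌉ ) and ρ_max = max_{w∈W} ρ(w). Then every schedule φ that satisfies the carry-out and carry-in constraints has completion time max_{p∈P}(φ(p) + τ(p)) ≥ ρ_max + min_{p∈P} τ(p) − 1. -/
open Finset

/-- general lower bound on the completion time of any schedule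
satisfying the carry-out and carry-in constraints. -/
theorem stmt_0 {P W : Type*} [Fintype P] [Nonempty P] [Fintype W] [Nonempty W] [DecidableEq W]
    (s t : P → W) (hst : ∀ p, s p ≠ t p)
    (size : P → ℝ) (hsize : ∀ p, 0 ≤ size p)
    (τ : P → ℕ) (hτ : ∀ p, 1 ≤ τ p)
    (dout din : W → ℝ) (hdout : ∀ w, 0 < dout w) (hdin : ∀ w, 0 < din w)
    (φ : P → ℕ)
    (hout : ∀ (w : W) (θ : ℕ),
      ∑ p ∈ univ.filter (fun p => s p = w ∧ φ p = θ), size p ≤ dout w)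
    (hin : ∀ (w : W) (θ : ℕ),
      ∑ p ∈ univ.filter (fun p => t p = w ∧ φ p + τ p = θ), size p ≤ din w) :
    (univ.sup' univ_nonempty (fun w =>
        max ⌈(∑ p ∈ univ.filter (fun p => s p = w), size p) / dout w⌉
            ⌈(∑ p ∈ univ.filter (fun p => t p = w), size p) / din w⌉))
      + ((univ.inf' univ_nonempty τ : ℕ) : ℤ) - 1
      ≤ ((univ.sup' univ_nonempty (fun p => φ p + τ p) : ℕ) : ℤ) := by
  set T := univ.sup' univ_nonempty (fun p => φ p + τ p) with hTdef
  set m := univ.inf' univ_nonempty τ with hmdef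
  have hmle : ∀ p : P, m ≤ τ p := fun p => inf'_le _ (mem_univ p)
  have hTle : ∀ p : P, φ p + τ p ≤ T := fun p => le_sup' (fun p => φ p + τ p) (mem_univ p)
  have hmT : m ≤ T := by
    obtain ⟨p⟩ := (inferInstance : Nonempty P)
    exact le_trans (hmle p) (le_trans (Nat.le_add_left _ _) (hTle p))
  set N := T - m + 1 with hN
  have hNZ : (N : ℤ) = (T : ℤ) - m + 1 := by omega
  have hNR : ((N : ℤ) : ℝ) = (N : ℕ) := by push_cast; ring
  have key : ∀ w : W,
      max ⌈(∑ p ∈ univ.filter (fun p => s p = w), size p) / dout w⌉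
          ⌈(∑ p ∈ univ.filter (fun p => t p = w), size p) / din w⌉ ≤ (N : ℤ) := by
    intro w
    apply max_le
    · rw [Int.ceil_le, div_le_iff₀ (hdout w)]
      have heq : ∑ p ∈ univ.filter (fun p => s p = w), size p
          = ∑ θ ∈ Finset.range N,
              ∑ p ∈ (univ.filter (fun p => s p = w)).filter (fun p => φ p = θ), size p := by
        rw [Finset.sum_fiberwise_eq_sum_filter]
        congr 1
        rw [Finset.filter_filter]
        apply Finset.filter_congr
        intro p _
        simp only [Finset.mem_range]
        constructor
        · intro h; exact ⟨h, by have := hTle p; have := hmle p; omega⟩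
        · exact fun h => h.1
      rw [heq]
      calc ∑ θ ∈ Finset.range N,
              ∑ p ∈ (univ.filter (fun p => s p = w)).filter (fun p => φ p = θ), size p
          ≤ ∑ _θ ∈ Finset.range N, dout w := by
            apply Finset.sum_le_sum
            intro θ _
            rw [Finset.filter_filter]
            exact hout w θ
        _ = (N : ℕ) * dout w := by rw [Finset.sum_const, Finset.card_range]; push_cast; ring
        _ ≤ ((N : ℤ) : ℝ) * dout w := by rw [hNR]
    · rw [Int.ceil_le, div_le_iff₀ (hdin w)]
      have heq : ∑ p ∈ univ.filter (fun p => t p = w), size p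
          = ∑ θ ∈ Finset.Icc m T,
              ∑ p ∈ (univ.filter (fun p => t p = w)).filter (fun p => φ p + τ p = θ), size p := by
        rw [Finset.sum_fiberwise_eq_sum_filter]
        congr 1
        rw [Finset.filter_filter]
        apply Finset.filter_congr
        intro p _
        simp only [Finset.mem_Icc]
        constructor
        · intro h; exact ⟨h, by have := hTle p; have := hmle p; omega⟩
        · exact fun h => h.1
      rw [heq]
      calc ∑ θ ∈ Finset.Icc m T,
              ∑ p ∈ (univ.filter (fun p => t p = w)).filter (fun p => φ p + τ p = θ), size p
          ≤ ∑ _θ ∈ Finset.Icc m T, din w := by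
            apply Finset.sum_le_sum
            intro θ _
            rw [Finset.filter_filter]
            exact hin w θ
        _ = (N : ℕ) * din w := by
            rw [Finset.sum_const, Nat.card_Icc]
            have : T + 1 - m = N := by omega
            rw [this]; push_cast; ring
        _ ≤ ((N : ℤ) : ℝ) * din w := by rw [hNR]
  have hsup : (univ.sup' univ_nonempty (fun w =>
      max ⌈(∑ p ∈ univ.filter (fun p => s p = w), size p) / dout w⌉
          ⌈(∑ p ∈ univ.filter (fun p => t p = w), size p) / din w⌉)) ≤ (N : ℤ) :=
    Finset.sup'_le _ _ fun w _ => key w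
  omega
end

section
/- Let P be a finite nonempty set, W a finite set, and s, t : P → W maps with s(p) ≠ t(p) for every p ∈ P. Suppose that |{p ∈ P : s(p) = w}| = |{p ∈ P : t(p) = w}| for every w ∈ W, and let K = max_{w∈W} |{p ∈ P : s(p) = w}|. Then P can be partitioned into K (possibly empty) sets P₁, …, P_K such that for each i: the map s is injective on P_i, the map t is injective on P_i, and {s(p) : p ∈ P_i} = {t(p) : p ∈ P_i} (equivalently, the directed edges {(s(p), t(p)) : p ∈ P_i} form a family of vertex-disjoint simple directed cycles on W). -/
open Finset

/-- The fiber of `Sigma.fst` over `w` is equivalent to `β w`. -/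
def sigmaFstFiber {W : Type*} (β : W → Type*) (w : W) :
    {r : Σ v, β v // r.1 = w} ≃ β w where
  toFun r := cast (congrArg β r.2) r.1.2
  invFun b := ⟨⟨w, b⟩, rfl⟩
  left_inv := by rintro ⟨⟨v, b⟩, h⟩; subst h; rfl
  right_inv b := rfl

/-- A `K`-regular bipartite multigraph decomposes into `K` perfect matchings. -/
lemma regular_decomp {W : Type*} [Fintype W] [DecidableEq W] (K : ℕ) :
    ∀ (Q : Type*) [Fintype Q] (f g : Q → W),
      (∀ w, (univ.filter (fun p => f p = w)).card = K) →
      (∀ w, (univ.filter (fun p => g p = w)).card = K) →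
      ∃ ψ : Q → Fin K, ∀ i : Fin K,
        Set.InjOn f {p | ψ p = i} ∧ Set.InjOn g {p | ψ p = i} ∧
        (∀ w, ∃ p, ψ p = i ∧ f p = w) ∧ (∀ w, ∃ p, ψ p = i ∧ g p = w) := by
  induction K with
  | zero =>
    intro Q _ f g hf _
    have hQ : IsEmpty Q := by
      constructor
      intro p
      have hp : p ∈ univ.filter (fun q => f q = f p) := by simp
      have := hf (f p)
      rw [Finset.card_eq_zero] at this
      rw [this] at hp
      exact absurd hp (Finset.notMem_empty p)
    exact ⟨fun p => hQ.elim p, fun i => i.elim0⟩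
  | succ K ih =>
    intro Q _ f g hf hg
    classical
    -- Hall's condition
    have hall : ∀ S : Finset W,
        S.card ≤ (S.biUnion fun w => (univ.filter fun p => f p = w).image g).card := by
      intro S
      set N := S.biUnion fun w => (univ.filter fun p => f p = w).image g with hN
      have h1 : (univ.filter fun p => f p ∈ S).card = (K + 1) * S.card := by
        rw [Finset.card_eq_sum_card_fiberwise
          (f := f) (s := univ.filter fun p => f p ∈ S) (t := S) (fun p hp => (Finset.mem_filter.mp hp).2)]
        rw [Finset.sum_congr rfl (fun w hw => ?_), Finset.sum_const, smul_eq_mul, mul_comm]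
        rw [Finset.filter_filter]
        rw [show (univ.filter fun p => f p ∈ S ∧ f p = w) = univ.filter fun p => f p = w by
          apply Finset.filter_congr; intro p _; constructor
          · exact fun h => h.2
          · exact fun h => ⟨h ▸ hw, h⟩]
        exact hf w
      have h2 : (univ.filter fun p => g p ∈ N).card = (K + 1) * N.card := by
        rw [Finset.card_eq_sum_card_fiberwise
          (f := g) (s := univ.filter fun p => g p ∈ N) (t := N) (fun p hp => (Finset.mem_filter.mp hp).2)]
        rw [Finset.sum_congr rfl (fun w hw => ?_), Finset.sum_const, smul_eq_mul, mul_comm]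
        rw [Finset.filter_filter]
        rw [show (univ.filter fun p => g p ∈ N ∧ g p = w) = univ.filter fun p => g p = w by
          apply Finset.filter_congr; intro p _; constructor
          · exact fun h => h.2
          · exact fun h => ⟨h ▸ hw, h⟩]
        exact hg w
      have h3 : (univ.filter fun p => f p ∈ S) ⊆ (univ.filter fun p => g p ∈ N) := by
        intro p hp
        rw [Finset.mem_filter] at hp ⊢
        refine ⟨Finset.mem_univ p, ?_⟩
        rw [hN, Finset.mem_biUnion]
        exact ⟨f p, hp.2, Finset.mem_image.mpr ⟨p, by simp⟩⟩
      have := Finset.card_le_card h3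
      rw [h1, h2] at this
      exact Nat.le_of_mul_le_mul_left this (Nat.succ_pos K)
    obtain ⟨g', hg'inj, hg'mem⟩ :=
      (Finset.all_card_le_biUnion_card_iff_exists_injective _).mp hall
    have hmem : ∀ w, ∃ p, f p = w ∧ g p = g' w := by
      intro w
      obtain ⟨p, hp1, hp2⟩ := Finset.mem_image.mp (hg'mem w)
      exact ⟨p, (Finset.mem_filter.mp hp1).2, hp2⟩
    choose m hmf hmg using hmem
    have hminj : Function.Injective m := by
      intro a b h
      rw [← hmf a, ← hmf b, h]
    have hg'bij : Function.Bijective g' := (Finite.injective_iff_bijective).mp hg'inj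
    set e : W ≃ W := Equiv.ofBijective g' hg'bij with he
    set M : Finset Q := univ.image m with hM
    -- each f-fiber meets M in exactly {m w}
    have hMf : ∀ w, (univ.filter fun p => f p = w) ∩ M = {m w} := by
      intro w
      ext p
      simp only [Finset.mem_inter, Finset.mem_filter, Finset.mem_univ, true_and,
        hM, Finset.mem_image, Finset.mem_singleton]
      constructor
      · rintro ⟨hfp, v, rfl⟩
        rw [hmf v] at hfp
        rw [hfp]
      · rintro rfl
        exact ⟨hmf w, w, rfl⟩
    have hMg : ∀ w, (univ.filter fun p => g p = w) ∩ M = {m (e.symm w)} := by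
      intro w
      ext p
      simp only [Finset.mem_inter, Finset.mem_filter, Finset.mem_univ, true_and,
        hM, Finset.mem_image, Finset.mem_singleton]
      constructor
      · rintro ⟨hgp, v, rfl⟩
        rw [hmg v] at hgp
        have : e v = w := hgp
        rw [← this, Equiv.symm_apply_apply]
      · rintro rfl
        refine ⟨?_, e.symm w, rfl⟩
        have : g (m (e.symm w)) = e (e.symm w) := hmg (e.symm w)
        rw [Equiv.apply_symm_apply] at this
        exact this
    have hmemM : ∀ w, m w ∈ M := fun w => Finset.mem_image.mpr ⟨w, Finset.mem_univ w, rfl⟩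
    -- the reduced graph
    have hcard_sub : ∀ (h : Q → W), (∀ w, (univ.filter fun p => h p = w) ∩ M = {m (e.symm w)} ∨
        (univ.filter fun p => h p = w) ∩ M = {m w}) →
        (∀ w, (univ.filter fun p => h p = w).card = K + 1) →
        ∀ w, (univ.filter fun q : {p : Q // p ∉ M} => h q.1 = w).card = K := by
      intro h hinter hcard w
      have hbij : (univ.filter fun q : {p : Q // p ∉ M} => h q.1 = w).card =
          ((univ.filter fun p => h p = w) \ M).card := by
        apply Finset.card_bij (fun q _ => q.1)
        · intro q hq
          rw [Finset.mem_sdiff, Finset.mem_filter]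
          exact ⟨⟨Finset.mem_univ _, (Finset.mem_filter.mp hq).2⟩, q.2⟩
        · intro a _ b _ hab
          exact Subtype.ext hab
        · intro p hp
          rw [Finset.mem_sdiff, Finset.mem_filter] at hp
          exact ⟨⟨p, hp.2⟩, Finset.mem_filter.mpr ⟨Finset.mem_univ _, hp.1.2⟩, rfl⟩
      rw [hbij]
      have := Finset.card_inter_add_card_sdiff (univ.filter fun p => h p = w) M
      rcases hinter w with hi | hi <;>
        rw [hi, Finset.card_singleton, hcard w] at this <;> omega
    have hf' : ∀ w, (univ.filter fun q : {p : Q // p ∉ M} => f q.1 = w).card = K :=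
      hcard_sub f (fun w => Or.inr (hMf w)) hf
    have hg' : ∀ w, (univ.filter fun q : {p : Q // p ∉ M} => g q.1 = w).card = K :=
      hcard_sub g (fun w => Or.inl (hMg w)) hg
    obtain ⟨ψ', hψ'⟩ := ih {p : Q // p ∉ M} (fun q => f q.1) (fun q => g q.1) hf' hg'
    refine ⟨fun p => if h : p ∈ M then Fin.last K else (ψ' ⟨p, h⟩).castSucc, ?_⟩
    intro i
    induction i using Fin.lastCases with
    | last =>
      -- i = last : the class is exactly M
      have hclass : ∀ p, (if h : p ∈ M then Fin.last K else (ψ' ⟨p, h⟩).castSucc) = Fin.last K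
          ↔ p ∈ M := by
        intro p
        by_cases h : p ∈ M
        · simp [h]
        · simp only [dif_neg h]
          constructor
          · intro hc
            exact absurd hc (Fin.ne_of_lt (Fin.castSucc_lt_last _))
          · intro hc; exact absurd hc h
      constructor
      · intro p hp q hq hpq
        replace hp := (hclass _).mp hp
        replace hq := (hclass _).mp hq
        obtain ⟨a, _, rfl⟩ := Finset.mem_image.mp hp
        obtain ⟨b, _, rfl⟩ := Finset.mem_image.mp hq
        rw [hmf a, hmf b] at hpq
        rw [hpq]
      refine ⟨?_, ?_, ?_⟩
      · intro p hp q hq hpq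
        replace hp := (hclass _).mp hp
        replace hq := (hclass _).mp hq
        obtain ⟨a, _, rfl⟩ := Finset.mem_image.mp hp
        obtain ⟨b, _, rfl⟩ := Finset.mem_image.mp hq
        rw [hmg a, hmg b] at hpq
        rw [hg'inj hpq]
      · intro w
        refine ⟨m w, ?_, hmf w⟩
        exact (hclass (m w)).mpr (hmemM w)
      · intro w
        refine ⟨m (e.symm w), ?_, ?_⟩
        · exact (hclass _).mpr (hmemM _)
        have : g (m (e.symm w)) = e (e.symm w) := hmg (e.symm w)
        rw [Equiv.apply_symm_apply] at this
        exact this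
    | cast j =>
      have hclass : ∀ p, (if h : p ∈ M then Fin.last K else (ψ' ⟨p, h⟩).castSucc) = j.castSucc
          ↔ ∃ h : p ∉ M, ψ' ⟨p, h⟩ = j := by
        intro p
        by_cases h : p ∈ M
        · simp only [dif_pos h]
          constructor
          · intro hc
            exact absurd hc.symm (Fin.ne_of_lt (Fin.castSucc_lt_last _))
          · rintro ⟨hc, -⟩; exact absurd h hc
        · simp only [dif_neg h]
          constructor
          · intro hc
            exact ⟨h, Fin.castSucc_injective _ hc⟩
          · rintro ⟨h2, hc⟩
            exact congrArg Fin.castSucc hc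
      obtain ⟨hinjf, hinjg, hsurf, hsurg⟩ := hψ' j
      constructor
      · intro p hp q hq hpq
        replace hp := (hclass _).mp hp
        replace hq := (hclass _).mp hq
        obtain ⟨hp1, hp2⟩ := hp
        obtain ⟨hq1, hq2⟩ := hq
        have := hinjf hp2 hq2 hpq
        exact congrArg Subtype.val this
      refine ⟨?_, ?_, ?_⟩
      · intro p hp q hq hpq
        replace hp := (hclass _).mp hp
        replace hq := (hclass _).mp hq
        obtain ⟨hp1, hp2⟩ := hp
        obtain ⟨hq1, hq2⟩ := hq
        have := hinjg hp2 hq2 hpq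
        exact congrArg Subtype.val this
      · intro w
        obtain ⟨q, hq1, hq2⟩ := hsurf w
        refine ⟨q.1, ?_, hq2⟩
        exact (hclass q.1).mpr ⟨q.2, by rwa [Subtype.eta]⟩
      · intro w
        obtain ⟨q, hq1, hq2⟩ := hsurg w
        refine ⟨q.1, ?_, hq2⟩
        exact (hclass q.1).mpr ⟨q.2, by rwa [Subtype.eta]⟩

/-- if every warehouse has equally many outgoing and incoming
products, the product set can be partitioned into `K = max_w |P⁺(w)|` parts,
each of which forms vertex-disjoint simple cycles in the demand graph
(i.e. `s` and `t` are injective on each part and have the same image there). -/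
theorem stmt_2 {P W : Type*} [Fintype P] [Nonempty P] [Fintype W] [DecidableEq W]
    (s t : P → W) (hst : ∀ p, s p ≠ t p)
    (hbal : ∀ w : W,
      (univ.filter (fun p => s p = w)).card = (univ.filter (fun p => t p = w)).card) :
    ∃ ψ : P → Fin (univ.sup (fun w : W => (univ.filter (fun p => s p = w)).card)),
      ∀ i, Set.InjOn s {p | ψ p = i} ∧ Set.InjOn t {p | ψ p = i} ∧
        s '' {p | ψ p = i} = t '' {p | ψ p = i} := by
  classical
  set K := univ.sup (fun w : W => (univ.filter (fun p => s p = w)).card) with hK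
  have hle : ∀ w, (univ.filter (fun p => s p = w)).card ≤ K :=
    fun w => Finset.le_sup (f := fun w : W => (univ.filter (fun p => s p = w)).card)
      (Finset.mem_univ w)
  set R := (Σ w : W, Fin (K - (univ.filter (fun p => s p = w)).card)) with hR
  set f : P ⊕ R → W := Sum.elim s Sigma.fst with hf
  set g : P ⊕ R → W := Sum.elim t Sigma.fst with hg
  have hfib : ∀ (h : P → W) (w : W),
      (univ.filter fun q : P ⊕ R => Sum.elim h Sigma.fst q = w).card =
      (univ.filter fun p : P => h p = w).card + (K - (univ.filter (fun p => s p = w)).card) := by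
    intro h w
    rw [← Fintype.card_subtype, ← Fintype.card_subtype]
    rw [Fintype.card_congr (Equiv.subtypeSum (p := fun q : P ⊕ R => Sum.elim h Sigma.fst q = w))]
    rw [Fintype.card_sum]
    congr 1
    exact (Fintype.card_congr ((Equiv.subtypeEquivRight
      (p := fun b : R => Sum.elim h Sigma.fst (Sum.inr b) = w) (fun r => Iff.rfl)).trans
      (sigmaFstFiber _ w))).trans (Fintype.card_fin _)
  have hfcard : ∀ w, (univ.filter fun q : P ⊕ R => f q = w).card = K := by
    intro w
    rw [hf, hfib s w]
    exact Nat.add_sub_cancel' (hle w)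
  have hgcard : ∀ w, (univ.filter fun q : P ⊕ R => g q = w).card = K := by
    intro w
    rw [hg, hfib t w, ← hbal w]
    exact Nat.add_sub_cancel' (hle w)
  obtain ⟨ψ, hψ⟩ := regular_decomp K (P ⊕ R) f g hfcard hgcard
  refine ⟨fun p => ψ (Sum.inl p), ?_⟩
  intro i
  obtain ⟨hinjf, hinjg, hsurf, hsurg⟩ := hψ i
  refine ⟨?_, ?_, ?_⟩
  · intro p hp q hq hpq
    have := hinjf hp hq hpq
    exact Sum.inl_injective this
  · intro p hp q hq hpq
    have := hinjg hp hq hpq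
    exact Sum.inl_injective this
  · ext w
    simp only [Set.mem_image, Set.mem_setOf_eq]
    have key : ∀ (h : P → W) (hinj : Set.InjOn (Sum.elim h Sigma.fst) {q | ψ q = i})
        (hsur : ∀ w, ∃ q, ψ q = i ∧ Sum.elim h Sigma.fst q = w),
        (∃ p, ψ (Sum.inl p) = i ∧ h p = w) ↔ ¬ ∃ r : R, ψ (Sum.inr r) = i ∧ r.1 = w := by
      intro h hinj hsur
      constructor
      · rintro ⟨p, hp1, hp2⟩ ⟨r, hr1, hr2⟩
        have : (Sum.inl p : P ⊕ R) = Sum.inr r := by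
          apply hinj hp1 hr1
          simp [hp2, hr2]
        exact absurd this (by simp)
      · intro hC
        obtain ⟨q, hq1, hq2⟩ := hsur w
        rcases q with p | r
        · exact ⟨p, hq1, hq2⟩
        · exact absurd ⟨r, hq1, hq2⟩ hC
    have k1 := key s hinjf hsurf
    have k2 := key t hinjg hsurg
    constructor
    · rintro ⟨p, hp1, hp2⟩
      obtain ⟨p', hp'1, hp'2⟩ := k2.mpr (k1.mp ⟨p, hp1, hp2⟩)
      exact ⟨p', hp'1, hp'2⟩
    · rintro ⟨p, hp1, hp2⟩
      obtain ⟨p', hp'1, hp'2⟩ := k1.mpr (k2.mp ⟨p, hp1, hp2⟩)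
      exact ⟨p', hp'1, hp'2⟩
end

section
/- Let a reallocation instance be given satisfying size(p) ≤ d⁺(s(p)) and size(p) ≤ d⁻(t(p)) for every p ∈ P, let m = |P|, and let T ∈ ℕ. A fractional schedule for horizon T is a function x : P × ℕ → ℝ with x(p,θ) ≥ 0 for all p, θ; x(p,θ) = 0 whenever θ + τ(p) > T; ∑_{θ∈ℕ} x(p,θ) = 1 for every p ∈ P; ∑_{p∈P⁺(w)} size(p)·x(p,θ) ≤ d⁺(w) for every w ∈ W and θ ∈ ℕ; and ∑_{p∈P⁻(w), τ(p) ≤ θ} size(p)·x(p, θ−τ(p)) ≤ d⁻(w) for every w ∈ W and θ ∈ ℕ. If a fractional schedule for horizon T exists, then there exists a fractional schedule x* for horizon T satisfying additionally x*(p,θ) = 0 for every p ∈ P and every θ ≥ 2m. -/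
open Finset

/-- A fractional schedule for horizon `T`: a feasible solution of the linear
relaxation of the time-indexed formulation of the reallocation problem
(carry-out and carry-in constraints only). -/
def FracSchedule {P W : Type*} [Fintype P] [DecidableEq W]
    (s t : P → W) (size : P → ℝ) (τ : P → ℕ) (dout din : W → ℝ) (T : ℕ)
    (x : P → ℕ → ℝ) : Prop :=
  (∀ (p : P) (θ : ℕ), 0 ≤ x p θ) ∧
  (∀ (p : P) (θ : ℕ), T < θ + τ p → x p θ = 0) ∧
  (∀ p : P, ∑' θ : ℕ, x p θ = 1) ∧
  (∀ (w : W) (θ : ℕ),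
      ∑ p ∈ univ.filter (fun p => s p = w), size p * x p θ ≤ dout w) ∧
  (∀ (w : W) (θ : ℕ),
      ∑ p ∈ univ.filter (fun p => t p = w ∧ τ p ≤ θ), size p * x p (θ - τ p) ≤ din w)

lemma sum_add_single {α : Type*} [DecidableEq α] (F : Finset α) (f g : α → ℝ) (q : α)
    (h : ∀ p ∈ F, p ≠ q → g p = f p) :
    ∑ p ∈ F, g p = ∑ p ∈ F, f p + (if q ∈ F then g q - f q else 0) := by
  by_cases hq : q ∈ F
  · rw [if_pos hq, ← Finset.sum_erase_add F g hq, ← Finset.sum_erase_add F f hq,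
      Finset.sum_congr rfl
        (fun p hp => h p (Finset.mem_of_mem_erase hp) (Finset.ne_of_mem_erase hp))]
    ring
  · rw [if_neg hq, add_zero]
    exact Finset.sum_congr rfl fun p hp => h p hp (fun e => hq (e ▸ hp))

def iotaF {P : Type*} (T : ℕ) (y : P → Fin (T + 1) → ℝ) (p : P) (θ : ℕ) : ℝ :=
  if h : θ < T + 1 then y p ⟨θ, h⟩ else 0

lemma iotaF_coe {P : Type*} (T : ℕ) (y : P → Fin (T + 1) → ℝ) (p : P) (i : Fin (T + 1)) :
    iotaF T y p ↑i = y p i := by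
  rw [iotaF, dif_pos i.isLt]

lemma iotaF_cont {P : Type*} (T : ℕ) (p : P) (θ : ℕ) :
    Continuous fun y : P → Fin (T + 1) → ℝ => iotaF T y p θ := by
  unfold iotaF
  by_cases h : θ < T + 1
  · simp only [dif_pos h]
    exact (continuous_apply _).comp (continuous_apply p)
  · simp only [dif_neg h]
    exact continuous_const

lemma tsum_iotaF {P : Type*} (T : ℕ) (y : P → Fin (T + 1) → ℝ) (p : P) :
    ∑' θ : ℕ, iotaF T y p θ = ∑ i : Fin (T + 1), y p i := by
  rw [tsum_eq_sum (s := Finset.range (T + 1))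
    (fun θ hθ => by rw [iotaF, dif_neg (by simpa using hθ)]),
    ← Fin.sum_univ_eq_sum_range (fun θ => iotaF T y p θ) (T + 1)]
  exact Finset.sum_congr rfl fun i _ => iotaF_coe T y p i

lemma move_feasible {P W : Type*} [Fintype P] [DecidableEq P] [DecidableEq W]
    (s t : P → W) (size : P → ℝ) (hsize : ∀ p, 0 ≤ size p)
    (τ : P → ℕ) (hτ : ∀ p, 1 ≤ τ p) (dout din : W → ℝ) (T : ℕ)
    (x : P → ℕ → ℝ) (hx : FracSchedule s t size τ dout din T x)
    (q : P) (θ1 θ2 : ℕ) (hne : θ1 ≠ θ2) (h1T : θ1 + τ q ≤ T)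
    (ε : ℝ) (hε0 : 0 < ε) (hεx : ε ≤ x q θ2)
    (hout : (∑ p ∈ univ.filter (fun p => s p = s q), size p * x p θ1) + ε * size q ≤ dout (s q))
    (hin : (∑ p ∈ univ.filter (fun p => t p = t q ∧ τ p ≤ θ1 + τ q),
        size p * x p (θ1 + τ q - τ p)) + ε * size q ≤ din (t q)) :
    FracSchedule s t size τ dout din T
      (fun p θ => x p θ + (if p = q ∧ θ = θ1 then ε else 0) - (if p = q ∧ θ = θ2 then ε else 0)) := by
  obtain ⟨hx0, hxT, hx1, hxout, hxin⟩ := hx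
  have hq2 : θ2 + τ q ≤ T := by
    by_contra h
    have := hxT q θ2 (by omega)
    linarith
  refine ⟨?_, ?_, ?_, ?_, ?_⟩
  · intro p θ
    dsimp only
    by_cases hp : p = q
    · by_cases h1 : θ = θ1
      · rw [if_pos ⟨hp, h1⟩, if_neg (by rintro ⟨-, hh⟩; omega)]
        have := hx0 p θ; linarith
      · by_cases h2 : θ = θ2
        · rw [if_neg (by rintro ⟨-, hh⟩; omega), if_pos ⟨hp, h2⟩]
          rw [hp, h2]
          linarith
        · simp only [h1, h2, and_false, if_false]
          have := hx0 p θ; linarith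
    · simp only [hp, false_and, if_false]
      have := hx0 p θ; linarith
  · intro p θ hT
    dsimp only
    by_cases hp : p = q
    · have hT' : T < θ + τ q := by rw [← hp]; exact hT
      have hθ1 : θ ≠ θ1 := by rintro rfl; omega
      have hθ2 : θ ≠ θ2 := by rintro rfl; omega
      simp [hθ1, hθ2, hxT p θ hT]
    · simp [hp, hxT p θ hT]
  · intro p
    dsimp only
    by_cases hp : p = q
    · rw [hp]
      have hsum : Summable (x q) := by
        apply summable_of_ne_finset_zero (s := Finset.range (T + 1))
        intro θ hθ
        simp only [Finset.mem_range] at hθ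
        exact hxT q θ (by have := hτ q; omega)
      have h1 : Summable (fun θ => if θ = θ1 then ε else 0) := by
        apply summable_of_ne_finset_zero (s := {θ1})
        intro θ hθ; simp only [Finset.mem_singleton] at hθ; simp [hθ]
      have h2 : Summable (fun θ => if θ = θ2 then ε else 0) := by
        apply summable_of_ne_finset_zero (s := {θ2})
        intro θ hθ; simp only [Finset.mem_singleton] at hθ; simp [hθ]
      calc ∑' θ, (x q θ + (if q = q ∧ θ = θ1 then ε else 0) - (if q = q ∧ θ = θ2 then ε else 0))
          = ∑' θ, ((x q θ + (if θ = θ1 then ε else 0)) - (if θ = θ2 then ε else 0)) := by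
            apply tsum_congr; intro θ; simp
        _ = (∑' θ, (x q θ + (if θ = θ1 then ε else 0))) - ∑' θ, (if θ = θ2 then ε else 0) :=
            Summable.tsum_sub (hsum.add h1) h2
        _ = ((∑' θ, x q θ) + ∑' θ, (if θ = θ1 then ε else 0)) - ∑' θ, (if θ = θ2 then ε else 0) := by
            rw [Summable.tsum_add hsum h1]
        _ = 1 := by rw [hx1 q, tsum_ite_eq, tsum_ite_eq]; ring
    · have : ∀ θ, (x p θ + (if p = q ∧ θ = θ1 then ε else 0) - (if p = q ∧ θ = θ2 then ε else 0)) = x p θ := by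
        intro θ; simp [hp]
      calc ∑' θ, (x p θ + (if p = q ∧ θ = θ1 then ε else 0) - (if p = q ∧ θ = θ2 then ε else 0))
          = ∑' θ, x p θ := tsum_congr this
        _ = 1 := hx1 p
  · intro w θ
    dsimp only
    rw [sum_add_single (univ.filter (fun p => s p = w)) (fun p => size p * x p θ)
      (fun p => size p * (x p θ + (if p = q ∧ θ = θ1 then ε else 0) - (if p = q ∧ θ = θ2 then ε else 0)))
      q (by intro p _ hpq; simp [hpq])]
    by_cases hqF : q ∈ univ.filter (fun p => s p = w)
    · have hsq : s q = w := by simpa using hqF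
      rw [if_pos hqF]
      rw [← hsq]
      by_cases h1 : θ = θ1
      · have hd : size q * (x q θ + (if q = q ∧ θ = θ1 then ε else 0) -
            (if q = q ∧ θ = θ2 then ε else 0)) - size q * x q θ = ε * size q := by
          rw [if_pos ⟨rfl, h1⟩, if_neg (by rintro ⟨-, hh⟩; omega)]; ring
        rw [hd, h1]
        exact hout
      · by_cases h2 : θ = θ2
        · have hd : size q * (x q θ + (if q = q ∧ θ = θ1 then ε else 0) -
              (if q = q ∧ θ = θ2 then ε else 0)) - size q * x q θ = -(size q * ε) := by
            rw [if_neg (by rintro ⟨-, hh⟩; omega), if_pos ⟨rfl, h2⟩]; ring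
          rw [hd]
          have := hxout (s q) θ
          have := mul_nonneg (hsize q) hε0.le
          linarith
        · have hd : size q * (x q θ + (if q = q ∧ θ = θ1 then ε else 0) -
              (if q = q ∧ θ = θ2 then ε else 0)) - size q * x q θ = 0 := by
            simp [h1, h2]
          rw [hd, add_zero]
          exact hxout (s q) θ
    · rw [if_neg hqF, add_zero]
      exact hxout w θ
  · intro w θ
    dsimp only
    rw [sum_add_single (univ.filter (fun p => t p = w ∧ τ p ≤ θ)) (fun p => size p * x p (θ - τ p))
      (fun p => size p * (x p (θ - τ p) + (if p = q ∧ θ - τ p = θ1 then ε else 0) -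
        (if p = q ∧ θ - τ p = θ2 then ε else 0)))
      q (by intro p _ hpq; simp [hpq])]
    by_cases hqF : q ∈ univ.filter (fun p => t p = w ∧ τ p ≤ θ)
    · have hq' : t q = w ∧ τ q ≤ θ := by simpa using hqF
      obtain ⟨hqw, hqτ⟩ := hq'
      rw [if_pos hqF, ← hqw]
      by_cases h1 : θ - τ q = θ1
      · have hθ : θ = θ1 + τ q := by omega
        have hd : size q * (x q (θ - τ q) + (if q = q ∧ θ - τ q = θ1 then ε else 0) -
            (if q = q ∧ θ - τ q = θ2 then ε else 0)) - size q * x q (θ - τ q)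
            = ε * size q := by
          rw [if_pos ⟨rfl, h1⟩, if_neg (by rintro ⟨-, hh⟩; omega)]; ring
        rw [hd, hθ]
        exact hin
      · by_cases h2 : θ - τ q = θ2
        · have hd : size q * (x q (θ - τ q) + (if q = q ∧ θ - τ q = θ1 then ε else 0) -
              (if q = q ∧ θ - τ q = θ2 then ε else 0)) - size q * x q (θ - τ q)
              = -(size q * ε) := by
            rw [if_neg (by rintro ⟨-, hh⟩; exact h1 hh), if_pos ⟨rfl, h2⟩]; ring
          rw [hd]
          have := hxin (t q) θ
          have := mul_nonneg (hsize q) hε0.le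
          linarith
        · have hd : size q * (x q (θ - τ q) + (if q = q ∧ θ - τ q = θ1 then ε else 0) -
              (if q = q ∧ θ - τ q = θ2 then ε else 0)) - size q * x q (θ - τ q) = 0 := by
            simp [h1, h2]
          rw [hd, add_zero]
          exact hxin (t q) θ
    · rw [if_neg hqF, add_zero]
      exact hxin w θ

/-- if a fractional schedule for horizon `T` exists, then there is
one which moreover sends nothing at any time `θ ≥ 2m`, where `m = |P|`. -/
theorem stmt_7 {P W : Type*} [Fintype P] [Nonempty P] [Fintype W] [DecidableEq W]
    (s t : P → W) (hst : ∀ p, s p ≠ t p)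
    (size : P → ℝ) (hsize : ∀ p, 0 ≤ size p)
    (τ : P → ℕ) (hτ : ∀ p, 1 ≤ τ p)
    (dout din : W → ℝ)
    (hout0 : ∀ p, size p ≤ dout (s p)) (hin0 : ∀ p, size p ≤ din (t p))
    (T : ℕ)
    (hex : ∃ x : P → ℕ → ℝ, FracSchedule s t size τ dout din T x) :
    ∃ x : P → ℕ → ℝ, FracSchedule s t size τ dout din T x ∧
      ∀ (p : P) (θ : ℕ), 2 * Fintype.card P ≤ θ → x p θ = 0 := by
  classical
  obtain ⟨x₀, hx₀⟩ := hex
  -- the feasible set in a finite-dimensional space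
  set S : Set (P → Fin (T + 1) → ℝ) :=
    {y | FracSchedule s t size τ dout din T (iotaF T y)} with hSdef
  have hS_eq : S =
      {y : P → Fin (T + 1) → ℝ | ∀ (p : P) (θ : ℕ), 0 ≤ iotaF T y p θ} ∩
      ({y | ∀ (p : P) (θ : ℕ), T < θ + τ p → iotaF T y p θ = 0} ∩
      ({y | ∀ p : P, ∑' θ : ℕ, iotaF T y p θ = 1} ∩
      ({y | ∀ (w : W) (θ : ℕ),
          ∑ p ∈ univ.filter (fun p => s p = w), size p * iotaF T y p θ ≤ dout w} ∩
      {y | ∀ (w : W) (θ : ℕ),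
          ∑ p ∈ univ.filter (fun p => t p = w ∧ τ p ≤ θ),
            size p * iotaF T y p (θ - τ p) ≤ din w}))) := rfl
  have hS_closed : IsClosed S := by
    rw [hS_eq]
    refine IsClosed.inter ?_ (IsClosed.inter ?_ (IsClosed.inter ?_ (IsClosed.inter ?_ ?_)))
    · rw [Set.setOf_forall]
      refine isClosed_iInter fun p => ?_
      rw [Set.setOf_forall]
      exact isClosed_iInter fun θ => isClosed_le continuous_const (iotaF_cont T p θ)
    · rw [Set.setOf_forall]
      refine isClosed_iInter fun p => ?_
      rw [Set.setOf_forall]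
      refine isClosed_iInter fun θ => ?_
      by_cases h : T < θ + τ p
      · have : {y : P → Fin (T + 1) → ℝ | T < θ + τ p → iotaF T y p θ = 0}
            = {y | iotaF T y p θ = 0} := by ext y; simp [h]
        rw [this]
        exact isClosed_eq (iotaF_cont T p θ) continuous_const
      · have : {y : P → Fin (T + 1) → ℝ | T < θ + τ p → iotaF T y p θ = 0} = Set.univ := by
          ext y; simp [h]
        rw [this]
        exact isClosed_univ
    · rw [Set.setOf_forall]
      refine isClosed_iInter fun p => ?_
      have : {y : P → Fin (T + 1) → ℝ | ∑' θ : ℕ, iotaF T y p θ = 1}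
          = {y | ∑ i : Fin (T + 1), y p i = 1} := by
        ext y; rw [Set.mem_setOf_eq, tsum_iotaF]; rfl
      rw [this]
      exact isClosed_eq (continuous_finset_sum _ fun i _ =>
        (continuous_apply i).comp (continuous_apply p)) continuous_const
    · rw [Set.setOf_forall]
      refine isClosed_iInter fun w => ?_
      rw [Set.setOf_forall]
      refine isClosed_iInter fun θ => ?_
      exact isClosed_le (continuous_finset_sum _ fun p _ =>
        continuous_const.mul (iotaF_cont T p θ)) continuous_const
    · rw [Set.setOf_forall]
      refine isClosed_iInter fun w => ?_
      rw [Set.setOf_forall]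
      refine isClosed_iInter fun θ => ?_
      exact isClosed_le (continuous_finset_sum _ fun p _ =>
        continuous_const.mul (iotaF_cont T p (θ - τ p))) continuous_const
  have hS_sub : S ⊆ Set.univ.pi fun _p : P => Set.univ.pi fun _i : Fin (T + 1) =>
      Set.Icc (0 : ℝ) 1 := by
    intro y hy
    have h0 : ∀ (p : P) (θ : ℕ), 0 ≤ iotaF T y p θ := hy.1
    have h1 : ∀ p : P, ∑ i : Fin (T + 1), y p i = 1 := fun p => by
      rw [← tsum_iotaF]; exact hy.2.2.1 p
    rw [Set.mem_univ_pi]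
    intro p
    rw [Set.mem_univ_pi]
    intro i
    constructor
    · have := h0 p i
      rwa [iotaF_coe] at this
    · calc y p i ≤ ∑ j : Fin (T + 1), y p j :=
          Finset.single_le_sum (fun j _ => by have := h0 p j; rwa [iotaF_coe] at this)
            (mem_univ i)
        _ = 1 := h1 p
  have hS_cpt : IsCompact S :=
    IsCompact.of_isClosed_subset
      (isCompact_univ_pi fun _ => isCompact_univ_pi fun _ => isCompact_Icc)
      hS_closed hS_sub
  have hy₀mem : (fun p (i : Fin (T + 1)) => x₀ p ↑i) ∈ S := by
    have hid : iotaF T (fun p (i : Fin (T + 1)) => x₀ p ↑i) = x₀ := by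
      funext p θ
      by_cases h : θ < T + 1
      · rw [iotaF, dif_pos h]
      · rw [iotaF, dif_neg h]
        exact (hx₀.2.1 p θ (by have := hτ p; omega)).symm
    simp only [hSdef, Set.mem_setOf_eq, hid]
    exact hx₀
  set Phi : (P → Fin (T + 1) → ℝ) → ℝ :=
    fun y => ∑ p : P, ∑ θ ∈ Finset.range (T + 1), (θ : ℝ) * iotaF T y p θ with hPhidef
  have hPhiC : Continuous Phi := by
    rw [hPhidef]
    exact continuous_finset_sum _ fun p _ => continuous_finset_sum _ fun θ _ =>
      continuous_const.mul (iotaF_cont T p θ)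
  obtain ⟨Y, hYS, hYmin⟩ := hS_cpt.exists_isMinOn ⟨_, hy₀mem⟩ hPhiC.continuousOn
  have hmin : ∀ y ∈ S, Phi Y ≤ Phi y := fun y hy => hYmin hy
  set xs : P → ℕ → ℝ := iotaF T Y with hxsdef
  have hfeas : FracSchedule s t size τ dout din T xs := hYS
  obtain ⟨hv0, hvT, hv1, hvout, hvin⟩ := hfeas
  have hSum : ∀ p, Summable (xs p) := by
    intro p
    apply summable_of_ne_finset_zero (s := Finset.range (T + 1))
    intro θ hθ
    simp only [Finset.mem_range] at hθ
    exact hvT p θ (by have := hτ p; omega)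
  refine ⟨xs, ⟨hv0, hvT, hv1, hvout, hvin⟩, ?_⟩
  intro q θ2 hθ2
  by_contra hne0
  have hpos : 0 < xs q θ2 := (hv0 q θ2).lt_of_ne (Ne.symm hne0)
  have hq2T : θ2 + τ q ≤ T := by
    by_contra h
    exact absurd (hvT q θ2 (by omega)) (ne_of_gt hpos)
  -- the exchange step
  have hmove : ∀ (θ1 : ℕ) (ε : ℝ), θ1 < 2 * Fintype.card P → 0 < ε → ε ≤ xs q θ2 →
      (∑ p ∈ univ.filter (fun p => s p = s q), size p * xs p θ1) + ε * size q ≤ dout (s q) →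
      (∑ p ∈ univ.filter (fun p => t p = t q ∧ τ p ≤ θ1 + τ q),
          size p * xs p (θ1 + τ q - τ p)) + ε * size q ≤ din (t q) → False := by
    intro θ1 ε hθ1 hε0 hεx hOut hIn
    have hlt : θ1 < θ2 := lt_of_lt_of_le hθ1 hθ2
    have h1T : θ1 + τ q ≤ T := by omega
    set x' : P → ℕ → ℝ := fun p θ =>
      xs p θ + (if p = q ∧ θ = θ1 then ε else 0) - (if p = q ∧ θ = θ2 then ε else 0)
      with hx'def
    have hx' : FracSchedule s t size τ dout din T x' :=
      move_feasible s t size hsize τ hτ dout din T xs ⟨hv0, hvT, hv1, hvout, hvin⟩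
        q θ1 θ2 (by omega) h1T ε hε0 hεx hOut hIn
    have hid : iotaF T (fun p (i : Fin (T + 1)) => x' p ↑i) = x' := by
      funext p θ
      by_cases h : θ < T + 1
      · rw [iotaF, dif_pos h]
      · rw [iotaF, dif_neg h]
        exact (hx'.2.1 p θ (by have := hτ p; omega)).symm
    have hY'mem : (fun p (i : Fin (T + 1)) => x' p ↑i) ∈ S := by
      simp only [hSdef, Set.mem_setOf_eq, hid]
      exact hx'
    have hle : Phi Y ≤ Phi (fun p (i : Fin (T + 1)) => x' p ↑i) := hmin _ hY'mem
    have hPhiY : Phi Y = ∑ p : P, ∑ θ ∈ Finset.range (T + 1), (θ : ℝ) * xs p θ := by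
      simp only [hPhidef, hxsdef]
    have hPhiY' : Phi (fun p (i : Fin (T + 1)) => x' p ↑i)
        = ∑ p : P, ∑ θ ∈ Finset.range (T + 1), (θ : ℝ) * x' p θ := by
      simp only [hPhidef, hid]
    have hterm : ∀ θ ∈ Finset.range (T + 1), (θ : ℝ) * x' q θ
        = (θ : ℝ) * xs q θ +
          ((if θ = θ1 then (θ1 : ℝ) * ε else 0) - (if θ = θ2 then (θ2 : ℝ) * ε else 0)) := by
      intro θ _
      simp only [hx'def]
      by_cases h1 : θ = θ1
      · rw [if_pos ⟨by trivial, h1⟩, if_neg (by rintro ⟨-, hh⟩; omega), if_pos h1,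
          if_neg (by omega), h1]
        ring
      · by_cases h2 : θ = θ2
        · rw [if_neg (by rintro ⟨-, hh⟩; omega), if_pos ⟨by trivial, h2⟩, if_neg h1, if_pos h2, h2]
          ring
        · rw [if_neg (by rintro ⟨-, hh⟩; omega), if_neg (by rintro ⟨-, hh⟩; omega),
            if_neg h1, if_neg h2]
          ring
    have hdiff : ∑ p : P, ∑ θ ∈ Finset.range (T + 1), (θ : ℝ) * x' p θ
        = (∑ p : P, ∑ θ ∈ Finset.range (T + 1), (θ : ℝ) * xs p θ)
          + ((θ1 : ℝ) * ε - (θ2 : ℝ) * ε) := by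
      rw [sum_add_single univ (fun p => ∑ θ ∈ Finset.range (T + 1), (θ : ℝ) * xs p θ)
        (fun p => ∑ θ ∈ Finset.range (T + 1), (θ : ℝ) * x' p θ) q
        (by
          intro p _ hpq
          refine Finset.sum_congr rfl fun θ _ => ?_
          simp [hx'def, hpq]),
        if_pos (mem_univ q)]
      congr 1
      rw [Finset.sum_congr rfl hterm, Finset.sum_add_distrib, Finset.sum_sub_distrib,
        Finset.sum_ite_eq' (Finset.range (T + 1)) θ1 (fun _ => (θ1 : ℝ) * ε),
        Finset.sum_ite_eq' (Finset.range (T + 1)) θ2 (fun _ => (θ2 : ℝ) * ε),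
        if_pos (Finset.mem_range.mpr (by have := hτ q; omega)),
        if_pos (Finset.mem_range.mpr (by have := hτ q; omega))]
      ring
    have hcast : (θ1 : ℝ) < (θ2 : ℝ) := by exact_mod_cast hlt
    rw [hPhiY, hPhiY', hdiff] at hle
    nlinarith
  by_cases hsq0 : size q = 0
  · exact hmove 0 (xs q θ2) (by have := Fintype.card_pos (α := P); omega) hpos le_rfl
      (by simpa [hsq0] using hvout (s q) 0)
      (by simpa [hsq0] using hvin (t q) (0 + τ q))
  · -- counting the blocked times
    have hsqpos : 0 < size q := (hsize q).lt_of_ne (Ne.symm hsq0)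
    have hdq : 0 < dout (s q) := lt_of_lt_of_le hsqpos (hout0 q)
    have hdq' : 0 < din (t q) := lt_of_lt_of_le hsqpos (hin0 q)
    have hsumq : ∀ B : Finset ℕ, θ2 ∉ B → ∑ θ ∈ B, xs q θ ≤ 1 - xs q θ2 := by
      intro B hB
      have h' : ∑ θ ∈ insert θ2 B, xs q θ ≤ 1 := by
        rw [← hv1 q]
        exact Summable.sum_le_tsum _ (fun θ _ => hv0 q θ) (hSum q)
      rw [Finset.sum_insert hB] at h'
      linarith
    have hsum1 : ∀ (p : P) (B : Finset ℕ), ∑ θ ∈ B, xs p θ ≤ 1 := by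
      intro p B
      rw [← hv1 p]
      exact Summable.sum_le_tsum _ (fun θ _ => hv0 p θ) (hSum p)
    set F : Finset P := univ.filter (fun p => s p = s q) with hFdef
    set Ft : Finset P := univ.filter (fun p => t p = t q) with hFtdef
    have hqF : q ∈ F := by simp [hFdef]
    have hqFt : q ∈ Ft := by simp [hFtdef]
    have hFcard : (F.card : ℝ) ≤ (Fintype.card P : ℝ) := by
      have : F.card ≤ Fintype.card P := by
        rw [hFdef, ← Finset.card_univ]
        exact Finset.card_filter_le _ _
      exact_mod_cast this
    have hFtcard : (Ft.card : ℝ) ≤ (Fintype.card P : ℝ) := by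
      have : Ft.card ≤ Fintype.card P := by
        rw [hFtdef, ← Finset.card_univ]
        exact Finset.card_filter_le _ _
      exact_mod_cast this
    set Bout : Finset ℕ := (Finset.range (2 * Fintype.card P)).filter
      (fun θ => dout (s q) ≤ ∑ p ∈ F, size p * xs p θ) with hBoutdef
    set Bin : Finset ℕ := (Finset.range (2 * Fintype.card P)).filter
      (fun θ => din (t q) ≤ ∑ p ∈ univ.filter (fun p => t p = t q ∧ τ p ≤ θ + τ q),
        size p * xs p (θ + τ q - τ p)) with hBindef
    have hθ2Bout : θ2 ∉ Bout := fun hmem => by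
      have := Finset.mem_range.mp (Finset.mem_filter.mp hmem).1; omega
    have hθ2Bin : θ2 ∉ Bin := fun hmem => by
      have := Finset.mem_range.mp (Finset.mem_filter.mp hmem).1; omega
    -- bounding |Bout|
    have hBoutcard : Bout.card < Fintype.card P := by
      have key : (Bout.card : ℝ) * dout (s q) < (Fintype.card P : ℝ) * dout (s q) := by
        have e1 : (Bout.card : ℝ) * dout (s q) = ∑ _θ ∈ Bout, dout (s q) := by
          rw [Finset.sum_const, nsmul_eq_mul]
        have e2 : ∑ _θ ∈ Bout, dout (s q) ≤ ∑ θ ∈ Bout, ∑ p ∈ F, size p * xs p θ :=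
          Finset.sum_le_sum (fun θ hθ => (Finset.mem_filter.mp hθ).2)
        have e3 : ∑ θ ∈ Bout, ∑ p ∈ F, size p * xs p θ
            = ∑ p ∈ F, size p * (∑ θ ∈ Bout, xs p θ) := by
          rw [Finset.sum_comm]
          exact Finset.sum_congr rfl fun p _ => (Finset.mul_sum _ _ _).symm
        have e4 : ∑ p ∈ F, size p * (∑ θ ∈ Bout, xs p θ)
            ≤ ∑ p ∈ F, (if p = q then size q * (1 - xs q θ2) else size p) := by
          apply Finset.sum_le_sum
          intro p hp
          by_cases hpq : p = q
          · rw [if_pos hpq, hpq]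
            exact mul_le_mul_of_nonneg_left (hsumq Bout hθ2Bout) (hsize q)
          · rw [if_neg hpq]
            calc size p * (∑ θ ∈ Bout, xs p θ) ≤ size p * 1 :=
                mul_le_mul_of_nonneg_left (hsum1 p Bout) (hsize p)
              _ = size p := mul_one _
        have e5 : ∑ p ∈ F, (if p = q then size q * (1 - xs q θ2) else size p)
            = (∑ p ∈ F, size p) - size q * xs q θ2 := by
          rw [sum_add_single F (fun p => size p)
            (fun p => if p = q then size q * (1 - xs q θ2) else size p) q
            (fun p _ hpq => if_neg hpq), if_pos hqF, if_pos rfl]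
          ring
        have e6 : (∑ p ∈ F, size p) ≤ (F.card : ℝ) * dout (s q) := by
          calc ∑ p ∈ F, size p ≤ ∑ p ∈ F, dout (s q) := by
                apply Finset.sum_le_sum
                intro p hp
                have hps : s p = s q := by
                  have := (Finset.mem_filter.mp (hFdef ▸ hp)).2
                  exact this
                rw [← hps]
                exact hout0 p
            _ = (F.card : ℝ) * dout (s q) := by rw [Finset.sum_const, nsmul_eq_mul]
        have e8 : 0 < size q * xs q θ2 := mul_pos hsqpos hpos
        nlinarith [mul_le_mul_of_nonneg_right hFcard hdq.le]
      have := (mul_lt_mul_iff_of_pos_right hdq).mp key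
      exact_mod_cast this
    -- bounding |Bin|
    have hiload : ∀ σ : ℕ,
        (∑ p ∈ univ.filter (fun p => t p = t q ∧ τ p ≤ σ), size p * xs p (σ - τ p))
        = ∑ p ∈ Ft, (if τ p ≤ σ then size p * xs p (σ - τ p) else 0) := by
      intro σ
      rw [hFtdef, ← Finset.filter_filter, Finset.sum_filter]
    have hBincard : Bin.card < Fintype.card P := by
      have key : (Bin.card : ℝ) * din (t q) < (Fintype.card P : ℝ) * din (t q) := by
        have e1 : (Bin.card : ℝ) * din (t q) = ∑ _θ ∈ Bin, din (t q) := by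
          rw [Finset.sum_const, nsmul_eq_mul]
        have e2 : ∑ _θ ∈ Bin, din (t q)
            ≤ ∑ θ ∈ Bin, ∑ p ∈ Ft, (if τ p ≤ θ + τ q then size p * xs p (θ + τ q - τ p) else 0) := by
          apply Finset.sum_le_sum
          intro θ hθ
          have := (Finset.mem_filter.mp hθ).2
          rw [← hiload]
          exact this
        have e3 : ∑ θ ∈ Bin, ∑ p ∈ Ft, (if τ p ≤ θ + τ q then size p * xs p (θ + τ q - τ p) else 0)
            = ∑ p ∈ Ft, ∑ θ ∈ Bin, (if τ p ≤ θ + τ q then size p * xs p (θ + τ q - τ p) else 0) :=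
          Finset.sum_comm
        have e4 : ∑ p ∈ Ft, ∑ θ ∈ Bin, (if τ p ≤ θ + τ q then size p * xs p (θ + τ q - τ p) else 0)
            ≤ ∑ p ∈ Ft, (if p = q then size q * (1 - xs q θ2) else size p) := by
          apply Finset.sum_le_sum
          intro p hp
          by_cases hpq : p = q
          · rw [if_pos hpq, hpq]
            have heq : ∀ θ ∈ Bin, (if τ q ≤ θ + τ q then size q * xs q (θ + τ q - τ q) else 0)
                = size q * xs q θ := by
              intro θ _
              rw [if_pos (Nat.le_add_left _ _), Nat.add_sub_cancel]
            rw [Finset.sum_congr rfl heq, ← Finset.mul_sum]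
            exact mul_le_mul_of_nonneg_left (hsumq Bin hθ2Bin) (hsize q)
          · rw [if_neg hpq, ← Finset.sum_filter]
            have himg : ∑ θ ∈ Bin.filter (fun θ => τ p ≤ θ + τ q), size p * xs p (θ + τ q - τ p)
                = ∑ σ ∈ (Bin.filter (fun θ => τ p ≤ θ + τ q)).image (fun θ => θ + τ q - τ p),
                    size p * xs p σ := by
              refine (Finset.sum_image (f := fun σ => size p * xs p σ)
                (g := fun θ => θ + τ q - τ p) ?_).symm
              intro a ha b hb hab
              have ha' := (Finset.mem_filter.mp ha).2
              have hb' := (Finset.mem_filter.mp hb).2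
              simp only at hab ha' hb'
              omega
            rw [himg, ← Finset.mul_sum]
            calc size p * ∑ σ ∈ _, xs p σ ≤ size p * 1 :=
                mul_le_mul_of_nonneg_left (hsum1 p _) (hsize p)
              _ = size p := mul_one _
        have e5 : ∑ p ∈ Ft, (if p = q then size q * (1 - xs q θ2) else size p)
            = (∑ p ∈ Ft, size p) - size q * xs q θ2 := by
          rw [sum_add_single Ft (fun p => size p)
            (fun p => if p = q then size q * (1 - xs q θ2) else size p) q
            (fun p _ hpq => if_neg hpq), if_pos hqFt, if_pos rfl]
          ring
        have e6 : (∑ p ∈ Ft, size p) ≤ (Ft.card : ℝ) * din (t q) := by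
          calc ∑ p ∈ Ft, size p ≤ ∑ p ∈ Ft, din (t q) := by
                apply Finset.sum_le_sum
                intro p hp
                have hpt : t p = t q := by
                  have := (Finset.mem_filter.mp (hFtdef ▸ hp)).2
                  exact this
                rw [← hpt]
                exact hin0 p
            _ = (Ft.card : ℝ) * din (t q) := by rw [Finset.sum_const, nsmul_eq_mul]
        have e8 : 0 < size q * xs q θ2 := mul_pos hsqpos hpos
        nlinarith [mul_le_mul_of_nonneg_right hFtcard hdq'.le]
      have := (mul_lt_mul_iff_of_pos_right hdq').mp key
      exact_mod_cast this
    -- find a non-blocked time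
    have hU : ¬ Finset.range (2 * Fintype.card P) ⊆ Bout ∪ Bin := by
      intro hsub
      have h1 := Finset.card_le_card hsub
      have h2 := Finset.card_union_le Bout Bin
      rw [Finset.card_range] at h1
      omega
    obtain ⟨θ1, hθ1r, hθ1n⟩ := Finset.not_subset.mp hU
    have hθ1lt : θ1 < 2 * Fintype.card P := Finset.mem_range.mp hθ1r
    rw [Finset.mem_union] at hθ1n
    push_neg at hθ1n
    obtain ⟨hn1, hn2⟩ := hθ1n
    have hslackout : (∑ p ∈ F, size p * xs p θ1) < dout (s q) := by
      by_contra h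
      exact hn1 (Finset.mem_filter.mpr ⟨hθ1r, not_lt.mp h⟩)
    have hslackin : (∑ p ∈ univ.filter (fun p => t p = t q ∧ τ p ≤ θ1 + τ q),
        size p * xs p (θ1 + τ q - τ p)) < din (t q) := by
      by_contra h
      exact hn2 (Finset.mem_filter.mpr ⟨hθ1r, not_lt.mp h⟩)
    set ε : ℝ := min (xs q θ2) (min
      ((dout (s q) - ∑ p ∈ F, size p * xs p θ1) / size q)
      ((din (t q) - ∑ p ∈ univ.filter (fun p => t p = t q ∧ τ p ≤ θ1 + τ q),
        size p * xs p (θ1 + τ q - τ p)) / size q)) with hεdef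
    have hε0 : 0 < ε :=
      lt_min hpos (lt_min (div_pos (by linarith) hsqpos) (div_pos (by linarith) hsqpos))
    have hεx : ε ≤ xs q θ2 := min_le_left _ _
    have hεout : ε * size q ≤ dout (s q) - ∑ p ∈ F, size p * xs p θ1 := by
      have h : ε ≤ (dout (s q) - ∑ p ∈ F, size p * xs p θ1) / size q :=
        (min_le_right _ _).trans (min_le_left _ _)
      rw [le_div_iff₀ hsqpos] at h
      exact h
    have hεin : ε * size q ≤ din (t q) - ∑ p ∈ univ.filter (fun p => t p = t q ∧ τ p ≤ θ1 + τ q),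
        size p * xs p (θ1 + τ q - τ p) := by
      have h : ε ≤ (din (t q) - ∑ p ∈ univ.filter (fun p => t p = t q ∧ τ p ≤ θ1 + τ q),
          size p * xs p (θ1 + τ q - τ p)) / size q :=
        (min_le_right _ _).trans (min_le_right _ _)
      rw [le_div_iff₀ hsqpos] at h
      exact h
    exact hmove θ1 ε hθ1lt hε0 hεx (by linarith) (by linarith)
end

section
/- Let a reallocation instance be given with the carry-in and warehouse constraints dropped (d⁻ ≡ ∞ and c ≡ ∞). For w ∈ W with P⁺(w) ≠ ∅, let B*(w) denote the minimum number of parts in a partition of P⁺(w) into parts each of total size at most d⁺(w) (assume such a partition exists). Then every schedule φ satisfying the carry-out constraint has completion time max_{p∈P}(φ(p) + τ(p)) ≥ B*(w) − 1 + min_{p∈P⁺(w)} τ(p) for every w ∈ W with P⁺(w) ≠ ∅. -/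
open Finset

/-- bin-packing lower bound. If `B*` is the bin-packing optimum
for the items `P⁺(w)` with bin capacity `d⁺(w)`, then every carry-out-feasible
schedule has completion time at least `B* - 1 + min_{p ∈ P⁺(w)} τ(p)`. -/
theorem stmt_9 {P W : Type*} [Fintype P] [Nonempty P] [Fintype W] [DecidableEq W]
    (s t : P → W) (hst : ∀ p, s p ≠ t p)
    (size : P → ℝ) (hsize : ∀ p, 0 ≤ size p)
    (τ : P → ℕ) (hτ : ∀ p, 1 ≤ τ p)
    (dout : W → ℝ)
    (w : W) (hw : (univ.filter (fun p => s p = w)).Nonempty)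
    (Bstar : ℕ)
    (hBex : ∃ g : P → Fin Bstar, ∀ i : Fin Bstar,
      ∑ p ∈ univ.filter (fun p => s p = w ∧ g p = i), size p ≤ dout w)
    (hBmin : ∀ n : ℕ,
      (∃ g : P → Fin n, ∀ i : Fin n,
        ∑ p ∈ univ.filter (fun p => s p = w ∧ g p = i), size p ≤ dout w) → Bstar ≤ n)
    (φ : P → ℕ)
    (hout : ∀ (w' : W) (θ : ℕ),
      ∑ p ∈ univ.filter (fun p => s p = w' ∧ φ p = θ), size p ≤ dout w') :
    Bstar - 1 + (univ.filter (fun p => s p = w)).inf' hw τ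
      ≤ univ.sup' univ_nonempty (fun p => φ p + τ p) := by
  set M := univ.sup' univ_nonempty (fun p => φ p + τ p) with hM
  set m := (univ.filter (fun p => s p = w)).inf' hw τ with hm
  have hmle : ∀ p, s p = w → m ≤ τ p := by
    intro p hp
    exact inf'_le τ (mem_filter.mpr ⟨mem_univ p, hp⟩)
  have hMle : ∀ p, φ p + τ p ≤ M := fun p =>
    le_sup' (fun p => φ p + τ p) (mem_univ p)
  have hφ : ∀ p, s p = w → φ p ≤ M - m := by
    intro p hp
    have h1 := hmle p hp
    have h2 := hMle p
    omega
  have hmM : m ≤ M := by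
    obtain ⟨p, hp⟩ := hw
    simp only [mem_filter] at hp
    have h1 := hmle p hp.2
    have h2 := hMle p
    omega
  have key : Bstar ≤ M - m + 1 := by
    apply hBmin
    refine ⟨fun p => ⟨min (φ p) (M - m), by omega⟩, fun i => ?_⟩
    refine le_trans (Finset.sum_le_sum_of_subset_of_nonneg ?_
      (fun p _ _ => hsize p)) (hout w i)
    intro p hp
    simp only [mem_filter, mem_univ, true_and, Fin.ext_iff] at hp ⊢
    obtain ⟨hp1, hp2⟩ := hp
    have h1 := hφ p hp1
    refine ⟨hp1, ?_⟩
    simpa [min_eq_left h1] using hp2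
  omega
end

section
/- Let m ≥ 1 and B ≥ 1 be integers and x : {1,…,3m} → ℝ with B/4 < x_i < B/2 for every i and ∑_{i=1}^{3m} x_i = m·B. Consider the reallocation instance with W = {w₁, w₂}; product set P = P₁ ∪ P₂ where P₁ = {p₁,…,p_{3m}} with s(p_i) = w₁, t(p_i) = w₂, size(p_i) = x_i, and P₂ consists of m products p with s(p) = w₂, t(p) = w₁, size(p) = B; τ(p) = 1 for all p ∈ P; d⁺(w₁) = d⁺(w₂) = B; c(w₁) = c(w₂) = m·B; and the carry-in constraint dropped (d⁻ ≡ ∞). Then a feasible schedule (satisfying the carry-out and warehouse constraints) exists if and only if {1,…,3m} can be partitioned into m sets X₁,…,X_m with ∑_{i∈X_j} x_i = B for every j ∈ {1,…,m}. -/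
open Finset

/-- Products of the 3-Partition reduction instance: `3m` small products
(moved from `w₁ = true` to `w₂ = false`) and `m` big products
(moved from `w₂ = false` to `w₁ = true`). -/
abbrev ThreePartProd (m : ℕ) := Fin (3 * m) ⊕ Fin m

/-- Source warehouse of each product. -/
def srcW (m : ℕ) : ThreePartProd m → Bool := Sum.elim (fun _ => true) (fun _ => false)

/-- Destination warehouse of each product. -/
def tgtW (m : ℕ) : ThreePartProd m → Bool := Sum.elim (fun _ => false) (fun _ => true)

/-- Size of each product: `x i` for the small products, `B` for the big ones. -/
noncomputable def szW (m B : ℕ) (x : Fin (3 * m) → ℝ) : ThreePartProd m → ℝ :=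
  Sum.elim x (fun _ => (B : ℝ))

private lemma sum_split {m : ℕ} (P : ThreePartProd m → Prop) [DecidablePred P]
    (g : ThreePartProd m → ℝ) :
    ∑ p ∈ univ.filter P, g p =
      (∑ i ∈ univ.filter (fun i => P (Sum.inl i)), g (Sum.inl i)) +
      ∑ j ∈ univ.filter (fun j => P (Sum.inr j)), g (Sum.inr j) := by
  rw [sum_filter, sum_filter, sum_filter, Fintype.sum_sum_type]

/-- correctness of the 3-Partition reduction, feasibility version.
With `τ ≡ 1`, `d⁺ ≡ B`, `c ≡ m·B` and the carry-in constraint dropped, a feasible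
schedule exists iff the `x i` can be partitioned into `m` triples of sum `B`. -/
theorem stmt_10 (m B : ℕ) (hm : 1 ≤ m) (hB : 1 ≤ B)
    (x : Fin (3 * m) → ℝ)
    (hx : ∀ i, (B : ℝ) / 4 < x i ∧ x i < (B : ℝ) / 2)
    (hsum : ∑ i, x i = (m : ℝ) * B) :
    (∃ φ : ThreePartProd m → ℕ,
      (∀ (w : Bool) (θ : ℕ),
        ∑ p ∈ univ.filter (fun p => srcW m p = w ∧ φ p = θ), szW m B x p ≤ (B : ℝ)) ∧
      (∀ (w : Bool) (θ : ℕ),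
        (∑ p ∈ univ.filter (fun p => srcW m p = w ∧ θ ≤ φ p), szW m B x p)
          + ∑ p ∈ univ.filter (fun p => tgtW m p = w ∧ φ p + 1 ≤ θ), szW m B x p
          ≤ (m : ℝ) * B))
    ↔ ∃ f : Fin (3 * m) → Fin m, ∀ j : Fin m,
        ∑ i ∈ univ.filter (fun i => f i = j), x i = (B : ℝ) := by
  constructor
  · rintro ⟨φ, hco, hwh⟩
    classical
    have hB0 : (0:ℝ) < B := by exact_mod_cast hB
    have hxpos : ∀ i, 0 < x i := fun i => lt_trans (by positivity) (hx i).1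
    -- Step A: at most one big product ships at each time
    have hA : ∀ θ, (univ.filter (fun j => φ (Sum.inr j) = θ)).card ≤ 1 := by
      intro θ
      have h := hco false θ
      rw [sum_split] at h
      simp only [srcW, szW, Sum.elim_inl, Sum.elim_inr] at h
      simp at h
      by_contra hc
      push_neg at hc
      have : (2:ℝ) ≤ ((univ.filter (fun j => φ (Sum.inr j) = θ)).card : ℝ) := by exact_mod_cast hc
      nlinarith
    -- Step E: exact balance at every time θ
    have hE : ∀ θ, ∑ i ∈ univ.filter (fun i => ¬ θ ≤ φ (Sum.inl i)), x i
        = ((univ.filter (fun j => ¬ θ ≤ φ (Sum.inr j))).card : ℝ) * B := by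
      intro θ
      have h1 := hwh true θ
      have h2 := hwh false θ
      rw [sum_split, sum_split] at h1 h2
      simp only [srcW, tgtW, szW, Sum.elim_inl, Sum.elim_inr] at h1 h2
      simp at h1 h2
      -- rewrite `φ p + 1 ≤ θ` as `¬ θ ≤ φ p`
      have hconv : ∀ (y θ : ℕ), (y + 1 ≤ θ) = (¬ θ ≤ y) := by
        intro y θ; exact propext (by omega)
      simp only [← not_le] at h1 h2
      have hsplit : (∑ i ∈ univ.filter (fun i => θ ≤ φ (Sum.inl i)), x i)
          + ∑ i ∈ univ.filter (fun i => ¬ θ ≤ φ (Sum.inl i)), x i = (m : ℝ) * B := by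
        rw [sum_filter_add_sum_filter_not, hsum]
      have hcard : (univ.filter (fun j => θ ≤ φ (Sum.inr j))).card
          + (univ.filter (fun j => ¬ θ ≤ φ (Sum.inr j))).card = m := by
        rw [card_filter_add_card_filter_not, card_univ, Fintype.card_fin]
      have hcard' : ((univ.filter (fun j => θ ≤ φ (Sum.inr j))).card : ℝ)
          + ((univ.filter (fun j => ¬ θ ≤ φ (Sum.inr j))).card : ℝ) = m := by exact_mod_cast hcard
      have hcardB : ((univ.filter (fun j => θ ≤ φ (Sum.inr j))).card : ℝ) * B
          + ((univ.filter (fun j => ¬ θ ≤ φ (Sum.inr j))).card : ℝ) * B = (m : ℝ) * B := by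
        rw [← add_mul, hcard']
      linarith
    have hD : ∀ θ, ∑ i ∈ univ.filter (fun i => φ (Sum.inl i) = θ), x i
        = ((univ.filter (fun j => φ (Sum.inr j) = θ)).card : ℝ) * B := by
      intro θ
      have e1 := hE θ
      have e2 := hE (θ + 1)
      have hs : ∑ i ∈ univ.filter (fun i => ¬ θ + 1 ≤ φ (Sum.inl i)), x i
          = ∑ i ∈ univ.filter (fun i => ¬ θ ≤ φ (Sum.inl i)), x i
            + ∑ i ∈ univ.filter (fun i => φ (Sum.inl i) = θ), x i := by
        rw [← sum_filter_add_sum_filter_not (univ.filter (fun i => ¬ θ + 1 ≤ φ (Sum.inl i)))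
          (fun i => ¬ θ ≤ φ (Sum.inl i)) x]
        congr 1
        · congr 1; ext i; simp only [mem_filter, mem_univ, true_and]; omega
        · congr 1; ext i; simp only [mem_filter, mem_univ, true_and]; omega
      have hc : (univ.filter (fun j => ¬ θ + 1 ≤ φ (Sum.inr j))).card
          = (univ.filter (fun j => ¬ θ ≤ φ (Sum.inr j))).card
            + (univ.filter (fun j => φ (Sum.inr j) = θ)).card := by
        rw [← card_filter_add_card_filter_not
          (s := univ.filter (fun j => ¬ θ + 1 ≤ φ (Sum.inr j)))
          (p := fun j => ¬ θ ≤ φ (Sum.inr j))]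
        congr 1
        · congr 1; ext j; simp only [mem_filter, mem_univ, true_and]; omega
        · congr 1; ext j; simp only [mem_filter, mem_univ, true_and]; omega
      have hc' : ((univ.filter (fun j => ¬ θ + 1 ≤ φ (Sum.inr j))).card : ℝ)
          = ((univ.filter (fun j => ¬ θ ≤ φ (Sum.inr j))).card : ℝ)
            + ((univ.filter (fun j => φ (Sum.inr j) = θ)).card : ℝ) := by exact_mod_cast hc
      rw [hs, e1, hc', add_mul] at e2
      linarith
    have hex : ∀ i, ∃ j, φ (Sum.inr j) = φ (Sum.inl i) := by
      intro i
      by_contra hc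
      push_neg at hc
      have h0 : (univ.filter (fun j => φ (Sum.inr j) = φ (Sum.inl i))) = ∅ := by
        ext j; simp [hc j]
      have hD' := hD (φ (Sum.inl i))
      rw [h0] at hD'
      simp at hD'
      have hmem : i ∈ univ.filter (fun i' => φ (Sum.inl i') = φ (Sum.inl i)) := by simp
      have hle : x i ≤ ∑ i' ∈ univ.filter (fun i' => φ (Sum.inl i') = φ (Sum.inl i)), x i' :=
        single_le_sum (fun i' _ => (hxpos i').le) hmem
      have := hxpos i
      linarith
    choose f hf using hex
    refine ⟨f, fun j => ?_⟩
    have hset : univ.filter (fun i => f i = j)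
        = univ.filter (fun i => φ (Sum.inl i) = φ (Sum.inr j)) := by
      ext i
      simp only [mem_filter, mem_univ, true_and]
      constructor
      · rintro rfl; exact (hf i).symm
      · intro h
        have h1 : f i ∈ univ.filter (fun j' => φ (Sum.inr j') = φ (Sum.inr j)) := by
          simp [hf i, h]
        have h2 : j ∈ univ.filter (fun j' => φ (Sum.inr j') = φ (Sum.inr j)) := by simp
        exact Finset.card_le_one.mp (hA (φ (Sum.inr j))) _ h1 _ h2
    have hone : (univ.filter (fun j' => φ (Sum.inr j') = φ (Sum.inr j))).card = 1 := by
      refine le_antisymm (hA _) ?_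
      exact card_pos.mpr ⟨j, by simp⟩
    rw [hset, hD (φ (Sum.inr j)), hone]
    simp
  · rintro ⟨f, hf⟩
    classical
    have hB0 : (0:ℝ) < B := by exact_mod_cast hB
    have key : ∀ (p : ℕ → Prop) [DecidablePred p],
        ∑ i ∈ univ.filter (fun i => p (f i : ℕ)), x i
          = ((univ.filter (fun j : Fin m => p (j : ℕ))).card : ℝ) * B := by
      intro p _
      calc ∑ i ∈ univ.filter (fun i => p (f i : ℕ)), x i
          = ∑ j : Fin m, ∑ i ∈ (univ.filter (fun i => p (f i : ℕ))).filter (fun i => f i = j), x i :=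
            (Finset.sum_fiberwise _ f x).symm
        _ = ∑ j : Fin m, (if p (j : ℕ) then (B:ℝ) else 0) := by
            refine Finset.sum_congr rfl fun j _ => ?_
            by_cases hj : p (j : ℕ)
            · rw [if_pos hj, ← hf j]
              congr 1
              ext i
              simp only [mem_filter, mem_univ, true_and]
              exact ⟨fun h => h.2, fun h2 => ⟨by rw [h2]; exact hj, h2⟩⟩
            · rw [if_neg hj]
              refine Finset.sum_eq_zero fun i hi => ?_
              simp only [mem_filter, mem_univ, true_and] at hi
              exact absurd (by rw [← hi.2]; exact hi.1) hj
        _ = ∑ j ∈ univ.filter (fun j : Fin m => p (j : ℕ)), (B:ℝ) := (sum_filter _ _).symm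
        _ = _ := by rw [sum_const, nsmul_eq_mul]
    have hcard1 : ∀ θ : ℕ, (univ.filter (fun j : Fin m => (j : ℕ) = θ)).card ≤ 1 := by
      intro θ
      refine Finset.card_le_one.mpr fun a ha b hb => ?_
      simp only [mem_filter, mem_univ, true_and] at ha hb
      exact Fin.ext (ha.trans hb.symm)
    have hle1 : ∀ θ : ℕ, ((univ.filter (fun j : Fin m => (j : ℕ) = θ)).card : ℝ) * B ≤ B := by
      intro θ
      have h1 : ((univ.filter (fun j : Fin m => (j : ℕ) = θ)).card : ℝ) ≤ 1 := by
        exact_mod_cast hcard1 θ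
      nlinarith
    have hsplitc : ∀ θ : ℕ,
        ((univ.filter (fun j : Fin m => θ ≤ (j : ℕ))).card : ℝ) * B
          + ((univ.filter (fun j : Fin m => (j : ℕ) + 1 ≤ θ)).card : ℝ) * B = (m : ℝ) * B := by
      intro θ
      have hcompl : (univ.filter (fun j : Fin m => θ ≤ (j : ℕ))).card
          + (univ.filter (fun j : Fin m => (j : ℕ) + 1 ≤ θ)).card = m := by
        have hs : univ.filter (fun j : Fin m => (j : ℕ) + 1 ≤ θ)
            = univ.filter (fun j : Fin m => ¬ θ ≤ (j : ℕ)) := by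
          ext j; simp only [mem_filter, mem_univ, true_and]; omega
        rw [hs, card_filter_add_card_filter_not, card_univ, Fintype.card_fin]
      have h' : ((univ.filter (fun j : Fin m => θ ≤ (j : ℕ))).card : ℝ)
          + ((univ.filter (fun j : Fin m => (j : ℕ) + 1 ≤ θ)).card : ℝ) = m := by
        exact_mod_cast hcompl
      rw [← add_mul, h']
    refine ⟨Sum.elim (fun i => (f i : ℕ)) (fun j => (j : ℕ)), ?_, ?_⟩
    · intro w θ
      rw [sum_split]
      cases w
      · simp only [srcW, szW, Sum.elim_inl, Sum.elim_inr]
        simp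
        exact hle1 θ
      · simp only [srcW, szW, Sum.elim_inl, Sum.elim_inr]
        simp
        rw [key (fun y => y = θ)]
        exact hle1 θ
    · intro w θ
      rw [sum_split, sum_split]
      cases w
      · simp only [srcW, tgtW, szW, Sum.elim_inl, Sum.elim_inr]
        simp
        rw [key (fun y => y < θ)]
        exact le_of_eq (by simpa only [Nat.add_one_le_iff] using hsplitc θ)
      · simp only [srcW, tgtW, szW, Sum.elim_inl, Sum.elim_inr]
        simp
        rw [key (fun y => θ ≤ y)]
        exact le_of_eq (hsplitc θ)
end

section
/- Let m ≥ 1 and B ≥ 1 be integers and x : {1,…,3m} → ℝ with B/4 < x_i < B/2 for every i and ∑_{i=1}^{3m} x_i = m·B. Consider the reallocation instance with W = {w₁, w₂}; product set P = P₁ ∪ P₂ where P₁ = {p₁,…,p_{3m}} with s(p_i) = w₁, t(p_i) = w₂, size(p_i) = x_i, and P₂ consists of m products p with s(p) = w₂, t(p) = w₁, size(p) = B; τ(p) = 1 for all p ∈ P; d⁺(w₁) = d⁺(w₂) = B; and the carry-in and warehouse constraints dropped (d⁻ ≡ ∞ and c ≡ ∞). Then there exists a schedule satisfying the carry-out constraint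 with completion time at most m if and only if {1,…,3m} can be partitioned into m sets X₁,…,X_m with ∑_{i∈X_j} x_i = B for every j ∈ {1,…,m}. -/
open Finset

lemma szW_key (m B : ℕ) (x : Fin (3 * m) → ℝ) (φ : ThreePartProd m → ℕ) (θ : ℕ) :
    ∑ p ∈ univ.filter (fun p => srcW m p = true ∧ φ p = θ), szW m B x p
      = ∑ i ∈ univ.filter (fun i => φ (Sum.inl i) = θ), x i := by
  rw [Finset.sum_filter, Finset.sum_filter, Fintype.sum_sum_type]
  simp [srcW, szW]

lemma szW_key' (m B : ℕ) (x : Fin (3 * m) → ℝ) (φ : ThreePartProd m → ℕ) (θ : ℕ) :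
    ∑ p ∈ univ.filter (fun p => srcW m p = false ∧ φ p = θ), szW m B x p
      = ∑ k ∈ univ.filter (fun k : Fin m => φ (Sum.inr k) = θ), (B : ℝ) := by
  rw [Finset.sum_filter, Finset.sum_filter, Fintype.sum_sum_type]
  simp [srcW, szW]

/-- correctness of the 3-Partition reduction, optimization version.
With `τ ≡ 1`, `d⁺ ≡ B`, and the carry-in and warehouse constraints dropped, a
carry-out-feasible schedule with completion time at most `m` exists iff the
`x i` can be partitioned into `m` triples of sum `B`. -/
theorem stmt_11 (m B : ℕ) (hm : 1 ≤ m) (hB : 1 ≤ B)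
    (x : Fin (3 * m) → ℝ)
    (hx : ∀ i, (B : ℝ) / 4 < x i ∧ x i < (B : ℝ) / 2)
    (hsum : ∑ i, x i = (m : ℝ) * B) :
    (∃ φ : ThreePartProd m → ℕ,
      (∀ (w : Bool) (θ : ℕ),
        ∑ p ∈ univ.filter (fun p => srcW m p = w ∧ φ p = θ), szW m B x p ≤ (B : ℝ)) ∧
      univ.sup (fun p : ThreePartProd m => φ p + 1) ≤ m)
    ↔ ∃ f : Fin (3 * m) → Fin m, ∀ j : Fin m,
        ∑ i ∈ univ.filter (fun i => f i = j), x i = (B : ℝ) := by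
  constructor
  · rintro ⟨φ, hcar, hsup⟩
    have hφlt : ∀ p, φ p < m := by
      intro p
      have := Finset.sup_le_iff.mp hsup p (mem_univ p)
      omega
    set f : Fin (3 * m) → Fin m := fun i => ⟨φ (Sum.inl i), hφlt _⟩ with hf
    refine ⟨f, ?_⟩
    set g : Fin m → ℝ := fun j => ∑ i ∈ univ.filter (fun i => f i = j), x i with hg
    have hgle : ∀ j, g j ≤ (B : ℝ) := by
      intro j
      have h := hcar true (j : ℕ)
      rw [szW_key] at h
      have : univ.filter (fun i => f i = j)
          = univ.filter (fun i => φ (Sum.inl i) = (j : ℕ)) := by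
        apply Finset.filter_congr
        intro i _
        simp [hf, Fin.ext_iff]
      rw [hg]
      simpa [this] using h
    have hgsum : ∑ j, g j = (m : ℝ) * B := by
      rw [hg]
      rw [Finset.sum_fiberwise_of_maps_to (fun i _ => mem_univ (f i))]
      exact hsum
    have hzero : ∑ j : Fin m, ((B : ℝ) - g j) = 0 := by
      rw [Finset.sum_sub_distrib, hgsum]
      simp [mul_comm]
    have := (Finset.sum_eq_zero_iff_of_nonneg
      (fun j _ => by linarith [hgle j])).mp hzero
    intro j
    have hj := this j (mem_univ j)
    have : g j = (B : ℝ) := by linarith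
    simpa [hg] using this
  · rintro ⟨f, hf⟩
    have hB0 : (0 : ℝ) ≤ B := by positivity
    refine ⟨Sum.elim (fun i => (f i : ℕ)) (fun k => (k : ℕ)), ?_, ?_⟩
    · intro w θ
      cases w
      · rw [szW_key']
        by_cases hθ : θ < m
        · have : univ.filter (fun k : Fin m => (k : ℕ) = θ) = {(⟨θ, hθ⟩ : Fin m)} := by
            ext k; simp [Fin.ext_iff]
          rw [show univ.filter (fun k : Fin m => @Sum.elim (Fin (3 * m)) (Fin m) ℕ (fun i => (f i : ℕ)) (fun k => (k : ℕ)) (Sum.inr k) = θ) = {(⟨θ, hθ⟩ : Fin m)} from this]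
          simp
        · have : univ.filter (fun k : Fin m => (k : ℕ) = θ) = ∅ := by
            ext k; simp only [mem_filter, mem_univ, true_and, Finset.notMem_empty, iff_false]
            intro h; exact hθ (h ▸ k.isLt)
          rw [show univ.filter (fun k : Fin m => @Sum.elim (Fin (3 * m)) (Fin m) ℕ (fun i => (f i : ℕ)) (fun k => (k : ℕ)) (Sum.inr k) = θ) = ∅ from this]
          simp [hB0]
      · rw [szW_key]
        by_cases hθ : θ < m
        · have heq : univ.filter (fun i => ((f i : ℕ)) = θ)
              = univ.filter (fun i => f i = (⟨θ, hθ⟩ : Fin m)) := by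
            apply Finset.filter_congr; intro i _; simp [Fin.ext_iff]
          rw [show univ.filter (fun i => @Sum.elim (Fin (3 * m)) (Fin m) ℕ (fun i => (f i : ℕ)) (fun k => (k : ℕ)) (Sum.inl i) = θ) = _ from heq, hf ⟨θ, hθ⟩]
        · have : univ.filter (fun i => ((f i : ℕ)) = θ) = ∅ := by
            ext i; simp only [mem_filter, mem_univ, true_and, Finset.notMem_empty, iff_false]
            intro h; exact hθ (h ▸ (f i).isLt)
          rw [show univ.filter (fun i => @Sum.elim (Fin (3 * m)) (Fin m) ℕ (fun i => (f i : ℕ)) (fun k => (k : ℕ)) (Sum.inl i) = θ) = ∅ from this]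
          simpa using hB0
    · rw [Finset.sup_le_iff]
      rintro (i | k) _
      · have := (f i).isLt; simp only [Sum.elim_inl]; omega
      · have := k.isLt; simp only [Sum.elim_inr]; omega
end

section
/- Let J be a finite nonempty set of jobs, ℓ : J → ℕ a delay function, and T ≥ 1 an integer. Consider the reallocation instance with W = {w₁, w₂}; P = J with s(j) = w₁, t(j) = w₂, size(j) = 1, and τ(j) = ℓ(j) + 1 for every j ∈ J; d⁺(w₁) = d⁺(w₂) = d⁻(w₁) = d⁻(w₂) = 1; and the warehouse constraint dropped (c ≡ ∞). Then the following are equivalent: (1) there exists a map φ' : J → ℕ such that φ' is injective, the map j ↦ φ'(j) + ℓ(j) is injective, and φ'(j) + ℓ(j) + 2 ≤ T for every j ∈ J (i.e., a two-machine flowshop schedule with unit processing times, delays ℓ(j), and completion time at most T); (2) there exists a schedule for the reallocation instance satisfying the carry-out and carry-in constraints with completion time at most T − 1. -/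
open Finset

/-- correctness of the reduction from two-machine flowshop with
delays (unit processing times). `w₁ = true`, `w₂ = false`, `s ≡ w₁`, `t ≡ w₂`,
`size ≡ 1`, `τ(j) = ℓ(j) + 1`, all carry-out/in capacities equal to `1`, and the
warehouse constraint dropped. -/
theorem stmt_12 {J : Type*} [Fintype J] [Nonempty J]
    (ℓ : J → ℕ) (T : ℕ) (hT : 1 ≤ T) :
    (∃ φ' : J → ℕ, Function.Injective φ' ∧
        Function.Injective (fun j => φ' j + ℓ j) ∧
        ∀ j, φ' j + ℓ j + 2 ≤ T)
    ↔ (∃ φ : J → ℕ,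
        (∀ (w : Bool) (θ : ℕ),
          ∑ j ∈ univ.filter (fun j : J => (true : Bool) = w ∧ φ j = θ), (1 : ℝ) ≤ 1) ∧
        (∀ (w : Bool) (θ : ℕ),
          ∑ j ∈ univ.filter (fun j : J => (false : Bool) = w ∧ φ j + (ℓ j + 1) = θ),
            (1 : ℝ) ≤ 1) ∧
        univ.sup' univ_nonempty (fun j => φ j + (ℓ j + 1)) ≤ T - 1) := by
  constructor
  · rintro ⟨φ, hinj, hinj2, hcomp⟩
    refine ⟨φ, ?_, ?_, ?_⟩
    · intro w θ
      cases w with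
      | false => simp
      | true =>
        rw [Finset.sum_const, nsmul_eq_mul, mul_one]
        rw [show (1:ℝ) = ((1:ℕ):ℝ) by norm_num, Nat.cast_le]
        rw [Finset.card_le_one]
        intro a ha b hb
        simp only [mem_filter, mem_univ, true_and] at ha hb
        exact hinj (ha.trans hb.symm)
    · intro w θ
      cases w with
      | true => simp
      | false =>
        rw [Finset.sum_const, nsmul_eq_mul, mul_one]
        rw [show (1:ℝ) = ((1:ℕ):ℝ) by norm_num, Nat.cast_le]
        rw [Finset.card_le_one]
        intro a ha b hb
        simp only [mem_filter, mem_univ, true_and] at ha hb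
        apply hinj2
        have := ha.trans hb.symm
        simp only []
        omega
    · apply Finset.sup'_le
      intro j _
      have := hcomp j
      omega
  · rintro ⟨φ, h1, h2, h3⟩
    have hcard : ∀ θ, (univ.filter (fun j : J => φ j = θ)).card ≤ 1 := by
      intro θ
      have := h1 true θ
      simp only [true_and] at this
      rw [Finset.sum_const, nsmul_eq_mul, mul_one] at this
      exact_mod_cast this
    have hcard2 : ∀ θ, (univ.filter (fun j : J => φ j + (ℓ j + 1) = θ)).card ≤ 1 := by
      intro θ
      have := h2 false θ
      simp only [true_and] at this
      rw [Finset.sum_const, nsmul_eq_mul, mul_one] at this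
      exact_mod_cast this
    refine ⟨φ, ?_, ?_, ?_⟩
    · intro a b hab
      by_contra hne
      have h2le : 2 ≤ (univ.filter (fun j : J => φ j = φ b)).card := by
        apply Finset.one_lt_card.mpr
        exact ⟨a, by simp [hab], b, by simp, hne⟩
      have := hcard (φ b)
      omega
    · intro a b hab
      simp only [] at hab
      by_contra hne
      have h2le : 2 ≤ (univ.filter (fun j : J => φ j + (ℓ j + 1) = φ b + (ℓ b + 1))).card := by
        apply Finset.one_lt_card.mpr
        exact ⟨a, by simp; omega, b, by simp, hne⟩
      have := hcard2 (φ b + (ℓ b + 1))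
      omega
    · intro j
      have := Finset.le_sup' (fun j => φ j + (ℓ j + 1)) (mem_univ j)
      omega
end

section
/- Let (E, A, B, a, b) be a bipartite multigraph and w : E → ℝ a weight function. Suppose Q ⊆ E satisfies: (1) for every u ∈ A with {e ∈ E : a(e) = u} ≠ ∅ there exists e ∈ Q with a(e) = u and w(e) = max{w(e') : e' ∈ E, a(e') = u}, and for every v ∈ B with {e ∈ E : b(e) = v} ≠ ∅ there exists e ∈ Q with b(e) = v and w(e) = max{w(e') : e' ∈ E, b(e') = v}; and (2) no proper subset of Q satisfies (1). Then Q is acyclic. -/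
open Finset

/-- `MaxCover a b w Q` says that for every vertex of the bipartite multigraph
incident to at least one edge, `Q` contains an edge incident to that vertex of
maximum weight among all edges incident to it. -/
def MaxCover {E A B : Type*} (a : E → A) (b : E → B) (w : E → ℝ) (Q : Finset E) : Prop :=
  (∀ u : A, (∃ e : E, a e = u) →
    ∃ e ∈ Q, a e = u ∧ ∀ e' : E, a e' = u → w e' ≤ w e) ∧
  (∀ v : B, (∃ e : E, b e = v) →
    ∃ e ∈ Q, b e = v ∧ ∀ e' : E, b e' = v → w e' ≤ w e)

/-- a minimal set of per-vertex maximum-weight edges in a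
bipartite multigraph is acyclic. -/
theorem stmt_13 {E A B : Type*} [Fintype E] [Fintype A] [Fintype B]
    (a : E → A) (b : E → B) (w : E → ℝ) (Q : Finset E)
    (hQ : MaxCover a b w Q)
    (hmin : ∀ Q' : Finset E, Q' ⊂ Q → ¬ MaxCover a b w Q') :
    ∀ S : Finset E, S ⊆ Q → S.Nonempty →
      ∃ e ∈ S, (∀ e' ∈ S, a e' = a e → e' = e) ∨ (∀ e' ∈ S, b e' = b e → e' = e) := by
  intro S hSQ hSne
  classical
  by_contra h
  push_neg at h
  obtain ⟨e, heS, hemin⟩ := S.exists_min_image w hSne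
  obtain ⟨ha', hb'⟩ := h e heS
  obtain ⟨ea, heaS, haea, hane⟩ := ha'
  obtain ⟨eb, hebS, hbeb, hbne⟩ := hb'
  refine hmin (Q.erase e) (Finset.erase_ssubset (hSQ heS)) ⟨?_, ?_⟩
  · intro u hu
    obtain ⟨f, hfQ, hfa, hfmax⟩ := hQ.1 u hu
    by_cases hf : f = e
    · subst hf
      exact ⟨ea, Finset.mem_erase.2 ⟨hane, hSQ heaS⟩, haea.trans hfa,
        fun e' he' => (hfmax e' he').trans (hemin ea heaS)⟩
    · exact ⟨f, Finset.mem_erase.2 ⟨hf, hfQ⟩, hfa, hfmax⟩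
  · intro v hv
    obtain ⟨f, hfQ, hfb, hfmax⟩ := hQ.2 v hv
    by_cases hf : f = e
    · subst hf
      exact ⟨eb, Finset.mem_erase.2 ⟨hbne, hSQ hebS⟩, hbeb.trans hfb,
        fun e' he' => (hfmax e' he').trans (hemin eb hebS)⟩
    · exact ⟨f, Finset.mem_erase.2 ⟨hf, hfQ⟩, hfb, hfmax⟩
end

section
/- Let (E, A, B, a, b) be a bipartite multigraph whose edge set E is acyclic, let size : E → ℝ with size(e) ≥ 0 be a weight function, and let capA : A → ℝ and capB : B → ℝ be capacity functions. Suppose that for every u ∈ A the set {e ∈ E : a(e) = u} can be partitioned into three parts each of total weight at most capA(u), and for every v ∈ B the set {e ∈ E : b(e) = v} can be partitioned into three parts each of total weight at most capB(v). Then E can be partitioned into three sets E₁, E₂, E₃ such that for every i ∈ {1,2,3}, every u ∈ A satisfies ∑_{e∈E_i, a(e)=u} size(e) ≤ capA(u) and every v ∈ B satisfies ∑_{e∈E_i, b(e)=v} size(e) ≤ capB(v). -/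
open Finset

private lemma perm_feas14 {E V : Type*} [Fintype E] [DecidableEq V] (p : E → V) (size : E → ℝ)
    (cap : ℝ) (u : V) (σ : Equiv.Perm (Fin 3)) (h : E → Fin 3)
    (hf : ∀ i, ∑ e ∈ univ.filter (fun e => p e = u ∧ h e = i), size e ≤ cap) :
    ∀ i, ∑ e ∈ univ.filter (fun e => p e = u ∧ σ (h e) = i), size e ≤ cap := by
  intro i
  have hfil : univ.filter (fun e => p e = u ∧ σ (h e) = i) =
      univ.filter (fun e => p e = u ∧ h e = σ.symm i) := by
    ext e
    simp [Equiv.apply_eq_iff_eq_symm_apply]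
  rw [hfil]
  exact hf _

/-- in an acyclic bipartite multigraph, if the edges at every
vertex can be locally partitioned into three parts respecting the vertex
capacity, then there is a single global partition into three parts respecting
all vertex capacities simultaneously. -/
theorem stmt_14 {E A B : Type*} [Fintype E] [DecidableEq A] [DecidableEq B]
    (a : E → A) (b : E → B)
    (size : E → ℝ) (hsize : ∀ e, 0 ≤ size e)
    (capA : A → ℝ) (capB : B → ℝ)
    (hacyc : ∀ S : Finset E, S.Nonempty →
      ∃ e ∈ S, (∀ e' ∈ S, a e' = a e → e' = e) ∨ (∀ e' ∈ S, b e' = b e → e' = e))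
    (hA : ∀ u : A, ∃ g : E → Fin 3, ∀ i : Fin 3,
      ∑ e ∈ univ.filter (fun e => a e = u ∧ g e = i), size e ≤ capA u)
    (hB : ∀ v : B, ∃ g : E → Fin 3, ∀ i : Fin 3,
      ∑ e ∈ univ.filter (fun e => b e = v ∧ g e = i), size e ≤ capB v) :
    ∃ g : E → Fin 3, ∀ i : Fin 3,
      (∀ u : A, ∑ e ∈ univ.filter (fun e => g e = i ∧ a e = u), size e ≤ capA u) ∧
      (∀ v : B, ∑ e ∈ univ.filter (fun e => g e = i ∧ b e = v), size e ≤ capB v) := by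
  classical
  suffices H : ∀ S : Finset E, ∃ g : E → Fin 3,
      (∀ u : A, ∃ h : E → Fin 3, (∀ i : Fin 3,
        ∑ e ∈ univ.filter (fun e => a e = u ∧ h e = i), size e ≤ capA u) ∧
        ∀ e ∈ S, a e = u → h e = g e) ∧
      (∀ v : B, ∃ h : E → Fin 3, (∀ i : Fin 3,
        ∑ e ∈ univ.filter (fun e => b e = v ∧ h e = i), size e ≤ capB v) ∧
        ∀ e ∈ S, b e = v → h e = g e) by
    obtain ⟨g, hgA, hgB⟩ := H univ
    refine ⟨g, fun i => ⟨fun u => ?_, fun v => ?_⟩⟩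
    · obtain ⟨h, hfeas, hagree⟩ := hgA u
      have hfil : univ.filter (fun e => g e = i ∧ a e = u) =
          univ.filter (fun e => a e = u ∧ h e = i) := by
        ext e
        simp only [mem_filter, mem_univ, true_and]
        constructor
        · rintro ⟨h1, h2⟩
          exact ⟨h2, by rw [hagree e (mem_univ e) h2]; exact h1⟩
        · rintro ⟨h1, h2⟩
          exact ⟨by rw [← hagree e (mem_univ e) h1]; exact h2, h1⟩
      rw [hfil]
      exact hfeas i
    · obtain ⟨h, hfeas, hagree⟩ := hgB v
      have hfil : univ.filter (fun e => g e = i ∧ b e = v) =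
          univ.filter (fun e => b e = v ∧ h e = i) := by
        ext e
        simp only [mem_filter, mem_univ, true_and]
        constructor
        · rintro ⟨h1, h2⟩
          exact ⟨h2, by rw [hagree e (mem_univ e) h2]; exact h1⟩
        · rintro ⟨h1, h2⟩
          exact ⟨by rw [← hagree e (mem_univ e) h1]; exact h2, h1⟩
      rw [hfil]
      exact hfeas i
  intro S
  induction S using Finset.strongInduction with
  | _ S ih =>
    rcases S.eq_empty_or_nonempty with rfl | hne
    · refine ⟨fun _ => 0, fun u => ?_, fun v => ?_⟩
      · obtain ⟨h, hh⟩ := hA u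
        exact ⟨h, hh, by simp⟩
      · obtain ⟨h, hh⟩ := hB v
        exact ⟨h, hh, by simp⟩
    · obtain ⟨e, heS, hcase⟩ := hacyc S hne
      obtain ⟨g, hgA, hgB⟩ := ih (S.erase e) (erase_ssubset heS)
      rcases hcase with hu | hv
      · -- e is the unique edge of S at its A-endpoint
        obtain ⟨hb, hbfeas, hbagree⟩ := hgB (b e)
        refine ⟨Function.update g e (hb e), fun u => ?_, fun v => ?_⟩
        · by_cases hau : a e = u
          · obtain ⟨ha, hafeas⟩ := hA u
            refine ⟨(Equiv.swap (hb e) (ha e)) ∘ ha,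
              perm_feas14 a size (capA u) u _ ha hafeas, ?_⟩
            intro e' he'S hae'
            have he' : e' = e := hu e' he'S (hae'.trans hau.symm)
            subst he'
            simp [Function.update_self, Equiv.swap_apply_right]
          · obtain ⟨h, hfeas, hagree⟩ := hgA u
            refine ⟨h, hfeas, fun e' he'S hae' => ?_⟩
            have hne' : e' ≠ e := fun h' => hau (h' ▸ hae')
            rw [Function.update_of_ne hne']
            exact hagree e' (mem_erase.2 ⟨hne', he'S⟩) hae'
        · by_cases hbv : b e = v
          · refine ⟨hb, hbv ▸ hbfeas, fun e' he'S hbe' => ?_⟩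
            by_cases he' : e' = e
            · subst he'; simp [Function.update_self]
            · rw [Function.update_of_ne he']
              exact hbagree e' (mem_erase.2 ⟨he', he'S⟩) (hbe'.trans hbv.symm)
          · obtain ⟨h, hfeas, hagree⟩ := hgB v
            refine ⟨h, hfeas, fun e' he'S hbe' => ?_⟩
            have hne' : e' ≠ e := fun h' => hbv (h' ▸ hbe')
            rw [Function.update_of_ne hne']
            exact hagree e' (mem_erase.2 ⟨hne', he'S⟩) hbe'
      · -- e is the unique edge of S at its B-endpoint
        obtain ⟨ha, hafeas, haagree⟩ := hgA (a e)
        refine ⟨Function.update g e (ha e), fun u => ?_, fun v => ?_⟩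
        · by_cases hau : a e = u
          · refine ⟨ha, hau ▸ hafeas, fun e' he'S hae' => ?_⟩
            by_cases he' : e' = e
            · subst he'; simp [Function.update_self]
            · rw [Function.update_of_ne he']
              exact haagree e' (mem_erase.2 ⟨he', he'S⟩) (hae'.trans hau.symm)
          · obtain ⟨h, hfeas, hagree⟩ := hgA u
            refine ⟨h, hfeas, fun e' he'S hae' => ?_⟩
            have hne' : e' ≠ e := fun h' => hau (h' ▸ hae')
            rw [Function.update_of_ne hne']
            exact hagree e' (mem_erase.2 ⟨hne', he'S⟩) hae'
        · by_cases hbv : b e = v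
          · obtain ⟨hb, hbfeas⟩ := hB v
            refine ⟨(Equiv.swap (ha e) (hb e)) ∘ hb,
              perm_feas14 b size (capB v) v _ hb hbfeas, ?_⟩
            intro e' he'S hbe'
            have he' : e' = e := hv e' he'S (hbe'.trans hbv.symm)
            subst he'
            simp [Function.update_self, Equiv.swap_apply_right]
          · obtain ⟨h, hfeas, hagree⟩ := hgB v
            refine ⟨h, hfeas, fun e' he'S hbe' => ?_⟩
            have hne' : e' ≠ e := fun h' => hbv (h' ▸ hbe')
            rw [Function.update_of_ne hne']
            exact hagree e' (mem_erase.2 ⟨hne', he'S⟩) hbe'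
end

section
/- Let (E, A, B, a, b) be a bipartite multigraph and let dA : A → ℕ and dB : B → ℕ be capacity functions with dA(u) ≥ 1 for every u ∈ A and dB(v) ≥ 1 for every v ∈ B. Suppose that |{e ∈ E : a(e) = u}| ≤ dA(u) + 2 for every u ∈ A and |{e ∈ E : b(e) = v}| ≤ dB(v) + 2 for every v ∈ B. Then E can be partitioned into four sets E₁, E₂, E₃, E₄ such that for every i ∈ {1,2,3,4}, every u ∈ A satisfies |{e ∈ E_i : a(e) = u}| ≤ dA(u) and every v ∈ B satisfies |{e ∈ E_i : b(e) = v}| ≤ dB(v). -/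
set_option maxRecDepth 4000
set_option maxHeartbeats 2000000

open Finset

private lemma card_filter_insert' {E : Type*} [DecidableEq E] (e : E) (s : Finset E)
    (h : e ∉ s) (p : E → Prop) [DecidablePred p] :
    ((insert e s).filter p).card = (s.filter p).card + if p e then 1 else 0 := by
  rw [Finset.filter_insert]
  split_ifs
  · rw [Finset.card_insert_of_notMem (fun hc => h (Finset.filter_subset p s hc))]
  · simp

private lemma orient_aux {E V : Type*} [DecidableEq E] [DecidableEq V] :
    ∀ (n : ℕ) (S : Finset E) (f g : E → V), S.card = n →
    ∃ o : E → Bool, ∀ v : V,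
      (S.filter fun e => (if o e then f e else g e) = v).card
        ≤ ((S.filter fun e => f e = v).card + (S.filter fun e => g e = v).card + 1) / 2 ∧
      (S.filter fun e => (if o e then g e else f e) = v).card
        ≤ ((S.filter fun e => f e = v).card + (S.filter fun e => g e = v).card + 1) / 2 := by
  intro n
  induction n using Nat.strong_induction_on with
  | _ n ih =>
  intro S f g hS
  by_cases hloop : ∃ e ∈ S, f e = g e
  · -- loop case
    obtain ⟨e, he, hl⟩ := hloop
    have hn : 0 < n := hS ▸ Finset.card_pos.mpr ⟨e, he⟩
    have hcard : (S.erase e).card = n - 1 := by rw [Finset.card_erase_of_mem he, hS]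
    obtain ⟨o, ho⟩ := ih (n-1) (by omega) (S.erase e) f g hcard
    refine ⟨o, fun w => ?_⟩
    obtain ⟨h1, h2⟩ := ho w
    have hSeq : S = insert e (S.erase e) := (Finset.insert_erase he).symm
    rw [hSeq]
    simp only [card_filter_insert' e (S.erase e) (Finset.notMem_erase e S)]
    rw [← hl, ite_self]
    by_cases hw : f e = w <;> simp [hw] <;> omega
  · by_cases htwo : ∃ v : V, ∃ e1 ∈ S, ∃ e2 ∈ S, e1 ≠ e2 ∧
        (f e1 = v ∨ g e1 = v) ∧ (f e2 = v ∨ g e2 = v)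
    · -- contraction case
      obtain ⟨v, e1, he1, e2, he2, hne, hi1, hi2⟩ := htwo
      have hn : 0 < n := hS ▸ Finset.card_pos.mpr ⟨e1, he1⟩
      obtain ⟨x, hx⟩ : ∃ x, x = if f e1 = v then g e1 else f e1 := ⟨_, rfl⟩
      obtain ⟨y, hy⟩ : ∃ y, y = if f e2 = v then g e2 else f e2 := ⟨_, rfl⟩
      obtain ⟨f', hf'⟩ : ∃ f'', f'' = Function.update f e1 x := ⟨_, rfl⟩
      obtain ⟨g', hg'⟩ : ∃ g'', g'' = Function.update g e1 y := ⟨_, rfl⟩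
      have hcard : (S.erase e2).card = n - 1 := by rw [Finset.card_erase_of_mem he2, hS]
      obtain ⟨o', ho'⟩ := ih (n-1) (by omega) (S.erase e2) f' g' hcard
      obtain ⟨o, hodef⟩ : ∃ o : E → Bool, o = fun e => if e = e1 then
          (if o' e1 then !(decide (f e1 = v)) else decide (f e1 = v))
        else if e = e2 then
          (if o' e1 then decide (f e2 = v) else !(decide (f e2 = v)))
        else o' e := ⟨_, rfl⟩
      obtain ⟨T, hT⟩ : ∃ T, T = (S.erase e2).erase e1 := ⟨_, rfl⟩
      have he1T : e1 ∉ T := by rw [hT]; exact Finset.notMem_erase _ _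
      have he1' : e1 ∈ S.erase e2 := Finset.mem_erase.mpr ⟨hne, he1⟩
      have hS'eq : S.erase e2 = insert e1 T := by
        rw [hT]; exact (Finset.insert_erase he1').symm
      have he2' : e2 ∉ insert e1 T := by
        rw [← hS'eq]; exact Finset.notMem_erase _ _
      have hSeq : S = insert e2 (insert e1 T) := by
        rw [← hS'eq]; exact (Finset.insert_erase he2).symm
      refine ⟨o, fun w => ?_⟩
      obtain ⟨h1, h2⟩ := ho' w
      rw [hS'eq] at h1 h2
      simp only [card_filter_insert' e1 T he1T] at h1 h2
      rw [hSeq]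
      simp only [card_filter_insert' e2 (insert e1 T) he2',
        card_filter_insert' e1 T he1T]
      -- align T-filters
      have ho_ne : ∀ e ∈ T, o e = o' e := by
        intro e he
        rw [hT] at he
        have h1 : e ≠ e1 := (Finset.mem_erase.mp he).1
        have h2 : e ≠ e2 := (Finset.mem_erase.mp ((Finset.mem_erase.mp he).2)).1
        simp [hodef, h1, h2]
      have hf_ne : ∀ e ∈ T, f' e = f e := by
        intro e he
        rw [hT] at he
        rw [hf']
        exact Function.update_of_ne (Finset.mem_erase.mp he).1 _ _
      have hg_ne : ∀ e ∈ T, g' e = g e := by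
        intro e he
        rw [hT] at he
        rw [hg']
        exact Function.update_of_ne (Finset.mem_erase.mp he).1 _ _
      have ct : (T.filter fun e => (if o' e then f' e else g' e) = w)
          = (T.filter fun e => (if o e then f e else g e) = w) := by
        apply Finset.filter_congr
        intro e he
        rw [ho_ne e he, hf_ne e he, hg_ne e he]
      have ch : (T.filter fun e => (if o' e then g' e else f' e) = w)
          = (T.filter fun e => (if o e then g e else f e) = w) := by
        apply Finset.filter_congr
        intro e he
        rw [ho_ne e he, hf_ne e he, hg_ne e he]
      have cf : (T.filter fun e => f' e = w) = (T.filter fun e => f e = w) := by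
        apply Finset.filter_congr
        intro e he; rw [hf_ne e he]
      have cg : (T.filter fun e => g' e = w) = (T.filter fun e => g e = w) := by
        apply Finset.filter_congr
        intro e he; rw [hg_ne e he]
      rw [ct, cf, cg] at h1
      rw [ch, cf, cg] at h2
      have hoe1 : o e1 = (if o' e1 then !(decide (f e1 = v)) else decide (f e1 = v)) := by
        simp [hodef]
      have hoe2 : o e2 = (if o' e1 then decide (f e2 = v) else !(decide (f e2 = v))) := by
        simp [hodef, hne.symm]
      have hfe1 : f' e1 = x := by rw [hf']; exact Function.update_self _ _ _
      have hge1 : g' e1 = y := by rw [hg']; exact Function.update_self _ _ _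
      rw [hfe1, hge1] at h1 h2
      rw [hoe1, hoe2]
      subst hx
      subst hy
      clear ih ho' hS hcard ho_ne hf_ne hg_ne ct ch cf cg hoe1 hoe2 hfe1 hge1 hS'eq hSeq
      clear he1' he2' he1T hn hloop he1 he2 hf' hg' hodef hT
      cases hb : o' e1 <;> rw [hb] at h1 h2 <;>
        by_cases hv1 : f e1 = v <;> by_cases hv2 : f e2 = v
      all_goals try (have hg1 : g e1 = v := hi1.resolve_left (by assumption))
      all_goals try (have hg2 : g e2 = v := hi2.resolve_left (by assumption))
      all_goals clear hi1 hi2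
      all_goals simp_all only [if_true, if_false, ite_true, ite_false, decide_true,
        decide_false, Bool.not_true, Bool.not_false, Bool.true_eq_false, Bool.false_eq_true,
        not_false_iff, eq_self_iff_true]
      all_goals (split_ifs at h1 h2 ⊢ <;> omega)
    · -- base case
      refine ⟨fun _ => true, fun w => ?_⟩
      have hle : (S.filter fun e => f e = w).card + (S.filter fun e => g e = w).card ≤ 1 := by
        by_contra hc
        push_neg at hc
        have hdisj : Disjoint (S.filter fun e => f e = w) (S.filter fun e => g e = w) := by
          rw [Finset.disjoint_left]
          intro e hef heg
          exact hloop ⟨e, (Finset.mem_filter.mp hef).1,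
            (Finset.mem_filter.mp hef).2.trans (Finset.mem_filter.mp heg).2.symm⟩
        have hcu : 1 < ((S.filter fun e => f e = w) ∪ (S.filter fun e => g e = w)).card := by
          rw [Finset.card_union_of_disjoint hdisj]; omega
        obtain ⟨a, ha, c, hc', hac⟩ := Finset.one_lt_card.mp hcu
        refine htwo ⟨w, a, ?_, c, ?_, hac, ?_, ?_⟩ <;>
          simp only [Finset.mem_union, Finset.mem_filter] at ha hc' <;>
          tauto
      constructor <;> simp only [if_true] <;> omega

private lemma split2 {E A B : Type*} [DecidableEq E] [DecidableEq A] [DecidableEq B]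
    (a : E → A) (b : E → B) (S : Finset E) :
    ∃ c : E → Bool,
      (∀ u : A, ∀ t : Bool,
        (S.filter fun e => c e = t ∧ a e = u).card ≤ ((S.filter fun e => a e = u).card + 1) / 2) ∧
      (∀ v : B, ∀ t : Bool,
        (S.filter fun e => c e = t ∧ b e = v).card ≤ ((S.filter fun e => b e = v).card + 1) / 2) := by
  obtain ⟨o, ho⟩ := orient_aux (V := A ⊕ B) S.card S
    (fun e => Sum.inl (a e)) (fun e => Sum.inr (b e)) rfl
  refine ⟨o, ?_, ?_⟩
  · intro u t
    obtain ⟨h1, h2⟩ := ho (Sum.inl u)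
    have hd1 : (S.filter fun e => (Sum.inl (a e) : A ⊕ B) = Sum.inl u).card
        = (S.filter fun e => a e = u).card := by
      apply congrArg
      apply Finset.filter_congr
      intro e _; simp
    have hd2 : (S.filter fun e => (Sum.inr (b e) : A ⊕ B) = Sum.inl u).card = 0 := by
      rw [Finset.card_eq_zero]
      apply Finset.filter_false_of_mem
      intro e _; simp
    have ht : (S.filter fun e =>
        (if o e = true then (Sum.inl (a e) : A ⊕ B) else Sum.inr (b e)) = Sum.inl u).card
        = (S.filter fun e => o e = true ∧ a e = u).card := by
      apply congrArg
      apply Finset.filter_congr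
      intro e _
      rcases h : o e <;> simp [h]
    have hh : (S.filter fun e =>
        (if o e = true then (Sum.inr (b e) : A ⊕ B) else Sum.inl (a e)) = Sum.inl u).card
        = (S.filter fun e => o e = false ∧ a e = u).card := by
      apply congrArg
      apply Finset.filter_congr
      intro e _
      rcases h : o e <;> simp [h]
    rw [hd1, hd2, ht] at h1
    rw [hd1, hd2, hh] at h2
    cases t
    · omega
    · omega
  · intro v t
    obtain ⟨h1, h2⟩ := ho (Sum.inr v)
    have hd1 : (S.filter fun e => (Sum.inl (a e) : A ⊕ B) = Sum.inr v).card = 0 := by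
      rw [Finset.card_eq_zero]
      apply Finset.filter_false_of_mem
      intro e _; simp
    have hd2 : (S.filter fun e => (Sum.inr (b e) : A ⊕ B) = Sum.inr v).card
        = (S.filter fun e => b e = v).card := by
      apply congrArg
      apply Finset.filter_congr
      intro e _; simp
    have ht : (S.filter fun e =>
        (if o e = true then (Sum.inl (a e) : A ⊕ B) else Sum.inr (b e)) = Sum.inr v).card
        = (S.filter fun e => o e = false ∧ b e = v).card := by
      apply congrArg
      apply Finset.filter_congr
      intro e _
      rcases h : o e <;> simp [h]
    have hh : (S.filter fun e =>
        (if o e = true then (Sum.inr (b e) : A ⊕ B) else Sum.inl (a e)) = Sum.inr v).card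
        = (S.filter fun e => o e = true ∧ b e = v).card := by
      apply congrArg
      apply Finset.filter_congr
      intro e _
      rcases h : o e <;> simp [h]
    rw [hd1, hd2, ht] at h1
    rw [hd1, hd2, hh] at h2
    cases t
    · omega
    · omega

/-- if every vertex of a bipartite multigraph has degree at most
its (positive, integral) capacity plus two, then the edges can be partitioned
into four parts, each respecting all degree capacities. -/
theorem stmt_15 {E A B : Type*} [Fintype E] [DecidableEq A] [DecidableEq B]
    (a : E → A) (b : E → B)
    (dA : A → ℕ) (dB : B → ℕ)
    (hdA : ∀ u, 1 ≤ dA u) (hdB : ∀ v, 1 ≤ dB v)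
    (hA : ∀ u : A, (univ.filter (fun e => a e = u)).card ≤ dA u + 2)
    (hB : ∀ v : B, (univ.filter (fun e => b e = v)).card ≤ dB v + 2) :
    ∃ g : E → Fin 4, ∀ i : Fin 4,
      (∀ u : A, (univ.filter (fun e => g e = i ∧ a e = u)).card ≤ dA u) ∧
      (∀ v : B, (univ.filter (fun e => g e = i ∧ b e = v)).card ≤ dB v) := by
  classical
  obtain ⟨c1, hc1A, hc1B⟩ := split2 a b (univ : Finset E)
  obtain ⟨c2, hc2A, hc2B⟩ := split2 a b ((univ : Finset E).filter fun e => c1 e = true)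
  obtain ⟨c3, hc3A, hc3B⟩ := split2 a b ((univ : Finset E).filter fun e => c1 e = false)
  simp only [Finset.filter_filter] at hc2A hc2B hc3A hc3B
  refine ⟨fun e => if c1 e = true then (if c2 e = true then 0 else 1)
    else (if c3 e = true then 2 else 3), fun i => ⟨fun u => ?_, fun v => ?_⟩⟩
  · fin_cases i
    · have key : (Finset.univ.filter fun e =>
          (if c1 e = true then (if c2 e = true then (0:Fin 4) else 1)
            else (if c3 e = true then 2 else 3)) = 0 ∧ a e = u)
          = (Finset.univ.filter fun e => c1 e = true ∧ c2 e = true ∧ a e = u) := by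
        apply Finset.filter_congr
        intro e _
        rcases h1 : c1 e <;> rcases h2 : c2 e <;> rcases h3 : c3 e <;> simp [h1, h2, h3]
      show (Finset.univ.filter fun e =>
          (if c1 e = true then (if c2 e = true then (0:Fin 4) else 1)
            else (if c3 e = true then 2 else 3)) = 0 ∧ a e = u).card ≤ dA u
      rw [key]
      have h2' := hc2A u true
      have h1' := hc1A u true
      have hdeg := hA u
      have hd := hdA u
      omega
    · have key : (Finset.univ.filter fun e =>
          (if c1 e = true then (if c2 e = true then (0:Fin 4) else 1)
            else (if c3 e = true then 2 else 3)) = 1 ∧ a e = u)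
          = (Finset.univ.filter fun e => c1 e = true ∧ c2 e = false ∧ a e = u) := by
        apply Finset.filter_congr
        intro e _
        rcases h1 : c1 e <;> rcases h2 : c2 e <;> rcases h3 : c3 e <;> simp [h1, h2, h3]
      show (Finset.univ.filter fun e =>
          (if c1 e = true then (if c2 e = true then (0:Fin 4) else 1)
            else (if c3 e = true then 2 else 3)) = 1 ∧ a e = u).card ≤ dA u
      rw [key]
      have h2' := hc2A u false
      have h1' := hc1A u true
      have hdeg := hA u
      have hd := hdA u
      omega
    · have key : (Finset.univ.filter fun e =>
          (if c1 e = true then (if c2 e = true then (0:Fin 4) else 1)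
            else (if c3 e = true then 2 else 3)) = 2 ∧ a e = u)
          = (Finset.univ.filter fun e => c1 e = false ∧ c3 e = true ∧ a e = u) := by
        apply Finset.filter_congr
        intro e _
        rcases h1 : c1 e <;> rcases h2 : c2 e <;> rcases h3 : c3 e <;> simp [h1, h2, h3]
      show (Finset.univ.filter fun e =>
          (if c1 e = true then (if c2 e = true then (0:Fin 4) else 1)
            else (if c3 e = true then 2 else 3)) = 2 ∧ a e = u).card ≤ dA u
      rw [key]
      have h2' := hc3A u true
      have h1' := hc1A u false
      have hdeg := hA u
      have hd := hdA u
      omega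
    · have key : (Finset.univ.filter fun e =>
          (if c1 e = true then (if c2 e = true then (0:Fin 4) else 1)
            else (if c3 e = true then 2 else 3)) = 3 ∧ a e = u)
          = (Finset.univ.filter fun e => c1 e = false ∧ c3 e = false ∧ a e = u) := by
        apply Finset.filter_congr
        intro e _
        rcases h1 : c1 e <;> rcases h2 : c2 e <;> rcases h3 : c3 e <;> simp [h1, h2, h3]
      show (Finset.univ.filter fun e =>
          (if c1 e = true then (if c2 e = true then (0:Fin 4) else 1)
            else (if c3 e = true then 2 else 3)) = 3 ∧ a e = u).card ≤ dA u
      rw [key]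
      have h2' := hc3A u false
      have h1' := hc1A u false
      have hdeg := hA u
      have hd := hdA u
      omega
  · fin_cases i
    · have key : (Finset.univ.filter fun e =>
          (if c1 e = true then (if c2 e = true then (0:Fin 4) else 1)
            else (if c3 e = true then 2 else 3)) = 0 ∧ b e = v)
          = (Finset.univ.filter fun e => c1 e = true ∧ c2 e = true ∧ b e = v) := by
        apply Finset.filter_congr
        intro e _
        rcases h1 : c1 e <;> rcases h2 : c2 e <;> rcases h3 : c3 e <;> simp [h1, h2, h3]
      show (Finset.univ.filter fun e =>
          (if c1 e = true then (if c2 e = true then (0:Fin 4) else 1)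
            else (if c3 e = true then 2 else 3)) = 0 ∧ b e = v).card ≤ dB v
      rw [key]
      have h2' := hc2B v true
      have h1' := hc1B v true
      have hdeg := hB v
      have hd := hdB v
      omega
    · have key : (Finset.univ.filter fun e =>
          (if c1 e = true then (if c2 e = true then (0:Fin 4) else 1)
            else (if c3 e = true then 2 else 3)) = 1 ∧ b e = v)
          = (Finset.univ.filter fun e => c1 e = true ∧ c2 e = false ∧ b e = v) := by
        apply Finset.filter_congr
        intro e _
        rcases h1 : c1 e <;> rcases h2 : c2 e <;> rcases h3 : c3 e <;> simp [h1, h2, h3]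
      show (Finset.univ.filter fun e =>
          (if c1 e = true then (if c2 e = true then (0:Fin 4) else 1)
            else (if c3 e = true then 2 else 3)) = 1 ∧ b e = v).card ≤ dB v
      rw [key]
      have h2' := hc2B v false
      have h1' := hc1B v true
      have hdeg := hB v
      have hd := hdB v
      omega
    · have key : (Finset.univ.filter fun e =>
          (if c1 e = true then (if c2 e = true then (0:Fin 4) else 1)
            else (if c3 e = true then 2 else 3)) = 2 ∧ b e = v)
          = (Finset.univ.filter fun e => c1 e = false ∧ c3 e = true ∧ b e = v) := by
        apply Finset.filter_congr
        intro e _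
        rcases h1 : c1 e <;> rcases h2 : c2 e <;> rcases h3 : c3 e <;> simp [h1, h2, h3]
      show (Finset.univ.filter fun e =>
          (if c1 e = true then (if c2 e = true then (0:Fin 4) else 1)
            else (if c3 e = true then 2 else 3)) = 2 ∧ b e = v).card ≤ dB v
      rw [key]
      have h2' := hc3B v true
      have h1' := hc1B v false
      have hdeg := hB v
      have hd := hdB v
      omega
    · have key : (Finset.univ.filter fun e =>
          (if c1 e = true then (if c2 e = true then (0:Fin 4) else 1)
            else (if c3 e = true then 2 else 3)) = 3 ∧ b e = v)
          = (Finset.univ.filter fun e => c1 e = false ∧ c3 e = false ∧ b e = v) := by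
        apply Finset.filter_congr
        intro e _
        rcases h1 : c1 e <;> rcases h2 : c2 e <;> rcases h3 : c3 e <;> simp [h1, h2, h3]
      show (Finset.univ.filter fun e =>
          (if c1 e = true then (if c2 e = true then (0:Fin 4) else 1)
            else (if c3 e = true then 2 else 3)) = 3 ∧ b e = v).card ≤ dB v
      rw [key]
      have h2' := hc3B v false
      have h1' := hc1B v false
      have hdeg := hB v
      have hd := hdB v
      omega
end

section
/- Let (E, A, B, a, b) be a bipartite multigraph. Then E can be partitioned into two sets E₃ and E₄ such that every vertex of degree at least 2 is incident to at least one edge of E₃ and to at least one edge of E₄; that is, for every u ∈ A with |{e ∈ E : a(e) = u}| ≥ 2 both {e ∈ E₃ : a(e) = u} and {e ∈ E₄ : a(e) = u} are nonempty, and likewise for every v ∈ B with |{e ∈ E : b(e) = v}| ≥ 2. -/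
open Finset

section BipartiteSplit

set_option linter.unusedSectionVars false

variable {E X : Type*} [Fintype E] [DecidableEq E] [DecidableEq X]

def Half (a : E → X) (s : Finset E) (g : E → Bool) : Prop :=
  ∀ u : X, 2 ≤ (s.filter fun e => a e = u).card →
    (∃ e ∈ s, a e = u ∧ g e = true) ∧ (∃ e ∈ s, a e = u ∧ g e = false)

lemma leaf (n : ℕ)
    (IH : ∀ (a b : E → X) (s : Finset E), s.card ≤ n → ∃ g, Half a s g ∧ Half b s g)
    (a b : E → X) (s : Finset E) (hcard : s.card ≤ n + 1)
    (e0 : E) (he0 : e0 ∈ s) (hdeg : (s.filter fun e => a e = a e0).card ≤ 1) :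
    ∃ g, Half a s g ∧ Half b s g := by
  classical
  set s' := s.erase e0 with hs'
  have hs'card : s'.card ≤ n := by
    rw [hs', Finset.card_erase_of_mem he0]
    omega
  obtain ⟨g', hg'a, hg'b⟩ := IH a b s' hs'card
  set T := s'.filter fun e => b e = b e0 with hT
  set c0 : Bool := if h : T.Nonempty then !(g' h.choose) else true with hc0
  set g : E → Bool := fun e => if e = e0 then c0 else g' e with hg
  have hgout : ∀ e ∈ s', g e = g' e := by
    intro e he
    have hne : e ≠ e0 := Finset.ne_of_mem_erase he
    simp [hg, hne]
  have hfins : ∀ (f : E → X) (w : X), w ≠ f e0 →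
      s.filter (fun e => f e = w) = s'.filter (fun e => f e = w) := by
    intro f w hw
    ext e
    simp only [Finset.mem_filter, hs', Finset.mem_erase]
    constructor
    · rintro ⟨he, hfe⟩
      refine ⟨⟨fun h => ?_, he⟩, hfe⟩
      subst h; exact hw hfe.symm
    · rintro ⟨⟨_, he⟩, hfe⟩; exact ⟨he, hfe⟩
  refine ⟨g, ?_, ?_⟩
  · intro u hu
    have hune : u ≠ a e0 := by
      rintro rfl
      omega
    rw [hfins a u hune] at hu
    obtain ⟨⟨e1, he1, hae1, hge1⟩, ⟨e2, he2, hae2, hge2⟩⟩ := hg'a u hu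
    exact ⟨⟨e1, Finset.mem_of_mem_erase he1, hae1, by rw [hgout e1 he1]; exact hge1⟩,
           ⟨e2, Finset.mem_of_mem_erase he2, hae2, by rw [hgout e2 he2]; exact hge2⟩⟩
  · intro w hw
    by_cases hwb : w = b e0
    · subst hwb
      have hsplit : s.filter (fun e => b e = b e0) = insert e0 T := by
        ext e
        simp only [Finset.mem_filter, hT, hs', Finset.mem_insert, Finset.mem_erase]
        constructor
        · rintro ⟨he, hbe⟩
          by_cases h : e = e0
          · exact Or.inl h
          · exact Or.inr ⟨⟨h, he⟩, hbe⟩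
        · rintro (rfl | ⟨⟨_, he⟩, hbe⟩)
          · exact ⟨he0, rfl⟩
          · exact ⟨he, hbe⟩
      have he0T : e0 ∉ T := by
        simp [hT, hs']
      have hTne : T.Nonempty := by
        rw [hsplit, Finset.card_insert_of_notMem he0T] at hw
        rw [← Finset.card_pos]
        omega
      set e1 := hTne.choose with he1def
      have he1T : e1 ∈ T := hTne.choose_spec
      have he1s' : e1 ∈ s' := (Finset.mem_filter.mp he1T).1
      have he1b : b e1 = b e0 := (Finset.mem_filter.mp he1T).2
      have he1s : e1 ∈ s := Finset.mem_of_mem_erase he1s'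
      have hge0 : g e0 = !(g' e1) := by
        simp [hg, hc0, dif_pos hTne]; rfl
      have hge1 : g e1 = g' e1 := hgout e1 he1s'
      cases hb1 : g' e1
      · exact ⟨⟨e0, he0, rfl, by rw [hge0, hb1]; rfl⟩, ⟨e1, he1s, he1b, by rw [hge1, hb1]⟩⟩
      · exact ⟨⟨e1, he1s, he1b, by rw [hge1, hb1]⟩, ⟨e0, he0, rfl, by rw [hge0, hb1]; rfl⟩⟩
    · rw [hfins b w hwb] at hw
      obtain ⟨⟨e1, he1, hbe1, hge1⟩, ⟨e2, he2, hbe2, hge2⟩⟩ := hg'b w hw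
      exact ⟨⟨e1, Finset.mem_of_mem_erase he1, hbe1, by rw [hgout e1 he1]; exact hge1⟩,
             ⟨e2, Finset.mem_of_mem_erase he2, hbe2, by rw [hgout e2 he2]; exact hge2⟩⟩


lemma consume (n : ℕ)
    (IH : ∀ (a b : E → X) (s : Finset E), s.card ≤ n → ∃ g, Half a s g ∧ Half b s g)
    (a b : E → X) (s : Finset E) (hcard : s.card ≤ n + 1)
    (m : ℕ) (hm : 0 < m) (c : ℕ → E)
    (hmem : ∀ j < 2*m, c j ∈ s)
    (hinj : ∀ j < 2*m, ∀ k < 2*m, c j = c k → j = k)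
    (hbs : ∀ i < m, b (c (2*i)) = b (c (2*i+1)))
    (has : ∀ i, i + 1 < m → a (c (2*i+1)) = a (c (2*i+2)))
    (hcl : a (c (2*m-1)) = a (c 0)) :
    ∃ g, Half a s g ∧ Half b s g := by
  classical
  set C := (Finset.range (2*m)).image c with hC
  have hCs : C ⊆ s := by
    intro e he
    rw [hC, Finset.mem_image] at he
    obtain ⟨j, hj, rfl⟩ := he
    exact hmem j (Finset.mem_range.mp hj)
  have hc0C : c 0 ∈ C := by
    rw [hC, Finset.mem_image]
    exact ⟨0, Finset.mem_range.mpr (by omega), rfl⟩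
  set s' := s \ C with hs'
  have hs'card : s'.card ≤ n := by
    have hlt : s'.card < s.card := by
      apply Finset.card_lt_card
      constructor
      · exact Finset.sdiff_subset
      · intro hsub
        have := hsub (hCs hc0C)
        rw [hs', Finset.mem_sdiff] at this
        exact this.2 hc0C
    omega
  obtain ⟨g', hg'a, hg'b⟩ := IH a b s' hs'card
  set g : E → Bool := fun e => if e ∈ C then decide (∃ i, i < m ∧ c (2*i) = e) else g' e with hg
  have hmemC : ∀ j < 2*m, c j ∈ C := fun j hj =>
    Finset.mem_image.mpr ⟨j, Finset.mem_range.mpr hj, rfl⟩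
  have geven : ∀ j < 2*m, j % 2 = 0 → g (c j) = true := by
    intro j hj hpar
    rw [hg]
    simp only [if_pos (hmemC j hj), decide_eq_true_eq]
    exact ⟨j / 2, by omega, by rw [show 2 * (j/2) = j from by omega]⟩
  have godd : ∀ j < 2*m, j % 2 = 1 → g (c j) = false := by
    intro j hj hpar
    rw [hg]
    simp only [if_pos (hmemC j hj), decide_eq_false_iff_not]
    rintro ⟨i, him, heq⟩
    have := hinj (2*i) (by omega) j hj heq
    omega
  have hgout : ∀ e ∈ s', g e = g' e := by
    intro e he
    rw [hs', Finset.mem_sdiff] at he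
    rw [hg]
    simp [he.2]
  refine ⟨g, ?_, ?_⟩
  · intro u hu
    by_cases hcyc : ∃ j, j < 2*m ∧ a (c j) = u
    · obtain ⟨j, hj, hau⟩ := hcyc
      rcases Nat.even_or_odd j with hpar | hpar
      · -- j even : true witness c j ; partner : j = 0 → 2m-1, else j-1
        have hwt : g (c j) = true := geven j hj (Nat.even_iff.mp hpar)
        by_cases hj0 : j = 0
        · subst hj0
          refine ⟨⟨c 0, hmem 0 hj, hau, hwt⟩, ⟨c (2*m-1), hmem _ (by omega), ?_, godd _ (by omega) (by omega)⟩⟩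
          rw [hcl, hau]
        · have hpar' := Nat.even_iff.mp hpar
          obtain ⟨i2, hi2⟩ : ∃ t, j = 2*t + 2 := ⟨j/2 - 1, by omega⟩
          have hstep : a (c (j-1)) = a (c j) := by
            have h := has i2 (by omega)
            rwa [show 2*i2+1 = j-1 from by omega, show 2*i2+2 = j from by omega] at h
          refine ⟨⟨c j, hmem j hj, hau, hwt⟩, ⟨c (j-1), hmem _ (by omega), by rw [hstep, hau], godd _ (by omega) (by omega)⟩⟩
      · -- j odd : false witness c j
        have hwf : g (c j) = false := godd j hj (Nat.odd_iff.mp hpar)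
        by_cases hjl : j = 2*m - 1
        · subst hjl
          refine ⟨⟨c 0, hmem 0 (by omega), by rw [← hcl, hau], geven 0 (by omega) (by omega)⟩,
                  ⟨c (2*m-1), hmem _ (by omega), hau, hwf⟩⟩
        · have hodd := Nat.odd_iff.mp hpar
          obtain ⟨i2, hi2⟩ : ∃ t, j = 2*t + 1 := ⟨j/2, by omega⟩
          have hstep : a (c j) = a (c (j+1)) := by
            have h := has i2 (by omega)
            rwa [show 2*i2+1 = j from by omega, show 2*i2+2 = j+1 from by omega] at h
          refine ⟨⟨c (j+1), hmem _ (by omega), by rw [← hstep, hau], geven _ (by omega) (by omega)⟩,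
                  ⟨c j, hmem j hj, hau, hwf⟩⟩
    · push_neg at hcyc
      have hsub : s.filter (fun e => a e = u) ⊆ s'.filter (fun e => a e = u) := by
        intro e he
        rw [Finset.mem_filter] at he
        rw [Finset.mem_filter, hs', Finset.mem_sdiff]
        refine ⟨⟨he.1, fun heC => ?_⟩, he.2⟩
        rw [hC, Finset.mem_image] at heC
        obtain ⟨j, hj, rfl⟩ := heC
        exact hcyc j (Finset.mem_range.mp hj) he.2
      have hu' : 2 ≤ (s'.filter fun e => a e = u).card :=
        le_trans hu (Finset.card_le_card hsub)
      obtain ⟨⟨e1, he1, hae1, hge1⟩, ⟨e2, he2, hae2, hge2⟩⟩ := hg'a u hu'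
      have he1s : e1 ∈ s := (Finset.mem_sdiff.mp (hs' ▸ he1)).1
      have he2s : e2 ∈ s := (Finset.mem_sdiff.mp (hs' ▸ he2)).1
      exact ⟨⟨e1, he1s, hae1, by rw [hgout e1 he1]; exact hge1⟩,
             ⟨e2, he2s, hae2, by rw [hgout e2 he2]; exact hge2⟩⟩
  · intro w hw
    by_cases hcyc : ∃ j, j < 2*m ∧ b (c j) = w
    · obtain ⟨j, hj, hbw⟩ := hcyc
      rcases Nat.even_or_odd j with hpar | hpar
      · have hpar' := Nat.even_iff.mp hpar
        obtain ⟨i2, hi2⟩ : ∃ t, j = 2*t := ⟨j/2, by omega⟩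
        have hstep : b (c j) = b (c (j+1)) := by
          have h := hbs i2 (by omega)
          rwa [show (2*i2 : ℕ) = j from by omega] at h
        refine ⟨⟨c j, hmem j hj, hbw, geven j hj hpar'⟩,
                ⟨c (j+1), hmem _ (by omega), by rw [← hstep, hbw], godd _ (by omega) (by omega)⟩⟩
      · have hpar' := Nat.odd_iff.mp hpar
        obtain ⟨i2, hi2⟩ : ∃ t, j = 2*t + 1 := ⟨j/2, by omega⟩
        have hstep : b (c (j-1)) = b (c j) := by
          have h := hbs i2 (by omega)
          rwa [show 2*i2+1 = j from by omega, show 2*i2 = j-1 from by omega] at h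
        refine ⟨⟨c (j-1), hmem _ (by omega), by rw [hstep, hbw], geven _ (by omega) (by omega)⟩,
                ⟨c j, hmem j hj, hbw, godd j hj hpar'⟩⟩
    · push_neg at hcyc
      have hsub : s.filter (fun e => b e = w) ⊆ s'.filter (fun e => b e = w) := by
        intro e he
        rw [Finset.mem_filter] at he
        rw [Finset.mem_filter, hs', Finset.mem_sdiff]
        refine ⟨⟨he.1, fun heC => ?_⟩, he.2⟩
        rw [hC, Finset.mem_image] at heC
        obtain ⟨j, hj, rfl⟩ := heC
        exact hcyc j (Finset.mem_range.mp hj) he.2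
      have hw' : 2 ≤ (s'.filter fun e => b e = w).card :=
        le_trans hw (Finset.card_le_card hsub)
      obtain ⟨⟨e1, he1, hbe1, hge1⟩, ⟨e2, he2, hbe2, hge2⟩⟩ := hg'b w hw'
      have he1s : e1 ∈ s := (Finset.mem_sdiff.mp (hs' ▸ he1)).1
      have he2s : e2 ∈ s := (Finset.mem_sdiff.mp (hs' ▸ he2)).1
      exact ⟨⟨e1, he1s, hbe1, by rw [hgout e1 he1]; exact hge1⟩,
             ⟨e2, he2s, hbe2, by rw [hgout e2 he2]; exact hge2⟩⟩


lemma window (n : ℕ)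
    (IH : ∀ (a b : E → X) (s : Finset E), s.card ≤ n → ∃ g, Half a s g ∧ Half b s g)
    (a b : E → X) (s : Finset E) (hcard : s.card ≤ n + 1)
    (r : ℕ → E) (i' j m : ℕ) (hm : 0 < m) (hjeq : j = i' + 2*m)
    (hmem : ∀ k, r k ∈ s)
    (hwinj : ∀ p q, p < q → q < j → r p ≠ r q)
    (hstepb : ∀ k, i' ≤ k → k + 1 < j → (k - i') % 2 = 0 → b (r (k+1)) = b (r k))
    (hstepa : ∀ k, i' ≤ k → k + 1 < j → (k - i') % 2 = 1 → a (r (k+1)) = a (r k))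
    (hclose : a (r (j-1)) = a (r i')) :
    ∃ g, Half a s g ∧ Half b s g := by
  apply consume n IH a b s hcard m hm (fun t => r (i' + t))
  · intro t ht
    exact hmem _
  · intro t ht t' ht' heq
    rcases lt_trichotomy t t' with h | h | h
    · exact absurd heq (hwinj (i'+t) (i'+t') (by omega) (by omega))
    · exact h
    · exact absurd heq.symm (hwinj (i'+t') (i'+t) (by omega) (by omega))
  · intro p hp
    have h := hstepb (i'+2*p) (by omega) (by omega) (by omega)
    rw [show i'+2*p+1 = i' + (2*p+1) from by omega] at h
    exact h.symm
  · intro p hp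
    have h := hstepa (i'+(2*p+1)) (by omega) (by omega) (by omega)
    rw [show i'+(2*p+1)+1 = i' + (2*p+2) from by omega] at h
    exact h.symm
  · show a (r (i' + (2*m-1))) = a (r (i' + 0))
    rw [show i' + (2*m-1) = j - 1 from by omega, show i' + 0 = i' from by omega]
    exact hclose

lemma key (n : ℕ) : ∀ (a b : E → X) (s : Finset E), s.card ≤ n →
    ∃ g, Half a s g ∧ Half b s g := by
  induction n with
  | zero =>
    intro a b s hs
    have hse : s = ∅ := Finset.card_eq_zero.mp (by omega)
    subst hse
    refine ⟨fun _ => true, ?_, ?_⟩ <;> intro u hu <;> simp at hu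
  | succ n IH =>
    intro a b s hs
    classical
    rcases s.eq_empty_or_nonempty with rfl | ⟨e0, he0⟩
    · refine ⟨fun _ => true, ?_, ?_⟩ <;> intro u hu <;> simp at hu
    by_cases hA : ∃ e ∈ s, (s.filter fun x => a x = a e).card ≤ 1
    · obtain ⟨e1, he1, hd⟩ := hA
      exact leaf n IH a b s hs e1 he1 hd
    by_cases hB : ∃ e ∈ s, (s.filter fun x => b x = b e).card ≤ 1
    · obtain ⟨e1, he1, hd⟩ := hB
      obtain ⟨g, hg1, hg2⟩ := leaf n (fun a' b' s' h' => (IH b' a' s' h').imp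
        (fun g hg => ⟨hg.2, hg.1⟩)) b a s hs e1 he1 hd
      exact ⟨g, hg2, hg1⟩
    push_neg at hA hB
    have hA' : ∀ e ∈ s, 2 ≤ (s.filter fun x => a x = a e).card := fun e he => by
      have := hA e he; omega
    have hB' : ∀ e ∈ s, 2 ≤ (s.filter fun x => b x = b e).card := fun e he => by
      have := hB e he; omega
    -- build the walk
    have hstep : ∀ (k : ℕ) (e : E), ∃ e', e ∈ s →
        (e' ∈ s ∧ e' ≠ e ∧ (k % 2 = 0 → b e' = b e) ∧ (k % 2 = 1 → a e' = a e)) := by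
      intro k e
      by_cases he : e ∈ s
      · by_cases hk : k % 2 = 0
        · obtain ⟨e', he', hne⟩ :=
            Finset.exists_mem_ne (s := s.filter fun x => b x = b e) (by have := hB' e he; omega) e
          rw [Finset.mem_filter] at he'
          exact ⟨e', fun _ => ⟨he'.1, hne, fun _ => he'.2, fun hk1 => by omega⟩⟩
        · obtain ⟨e', he', hne⟩ :=
            Finset.exists_mem_ne (s := s.filter fun x => a x = a e) (by have := hA' e he; omega) e
          rw [Finset.mem_filter] at he'
          exact ⟨e', fun _ => ⟨he'.1, hne, fun hk0 => by omega, fun _ => he'.2⟩⟩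
      · exact ⟨e, fun h => absurd h he⟩
    choose nxt hnxt using hstep
    set r : ℕ → E := fun k => Nat.rec e0 (fun k prev => nxt k prev) k with hr
    have hrS : ∀ k, r (k+1) = nxt k (r k) := fun k => rfl
    have hrs : ∀ k, r k ∈ s := by
      intro k
      induction k with
      | zero => exact he0
      | succ k ih => rw [hrS k]; exact (hnxt k (r k) ih).1
    have hrne : ∀ k, r (k+1) ≠ r k := fun k => by
      rw [hrS k]; exact (hnxt k (r k) (hrs k)).2.1
    have hrb : ∀ k, k % 2 = 0 → b (r (k+1)) = b (r k) := fun k hk => by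
      rw [hrS k]; exact (hnxt k (r k) (hrs k)).2.2.1 hk
    have hra : ∀ k, k % 2 = 1 → a (r (k+1)) = a (r k) := fun k hk => by
      rw [hrS k]; exact (hnxt k (r k) (hrs k)).2.2.2 hk
    obtain ⟨x, y, hxy, hrxy⟩ := Finite.exists_ne_map_eq_of_infinite r
    have hPex : ∃ jj, ∃ i, i < jj ∧ r i = r jj := by
      rcases hxy.lt_or_gt with h | h
      · exact ⟨y, x, h, hrxy⟩
      · exact ⟨x, y, h, hrxy.symm⟩
    set j := Nat.find hPex with hjdef
    obtain ⟨i, hij, hrij⟩ := Nat.find_spec hPex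
    have hwinj : ∀ p q, p < q → q < j → r p ≠ r q := by
      intro p q hpq hqj heq
      exact Nat.find_min hPex hqj ⟨p, hpq, heq⟩
    have hij2 : i + 2 ≤ j := by
      by_contra hcon
      have hji : j = i + 1 := by omega
      exact hrne i (by rw [← hji]; exact hrij.symm)
    by_cases hi : i % 2 = 0 <;> by_cases hj2 : j % 2 = 0
    · -- i even, j even : primal window on [i, j)
      refine window n IH a b s hs r i j ((j-i)/2) (by omega) (by omega) hrs hwinj
        (fun k hk hk1 hk2 => hrb k (by omega)) (fun k hk hk1 hk2 => hra k (by omega)) ?_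
      have h := hra (j-1) (by omega)
      rw [show j-1+1 = j from by omega, ← hrij] at h
      exact h.symm
    · -- i even, j odd : mirrored window on [i+1, j)
      have hclo : b (r (j-1)) = b (r (i+1)) := by
        have h1 := hrb (j-1) (by omega)
        rw [show j-1+1 = j from by omega, ← hrij] at h1
        have h2 := hrb i (by omega)
        exact h1.symm.trans h2.symm
      obtain ⟨g, hg1, hg2⟩ := window n IH b a s hs r (i+1) j ((j-(i+1))/2) (by omega)
        (by omega) hrs hwinj
        (fun k hk hk1 hk2 => hra k (by omega)) (fun k hk hk1 hk2 => hrb k (by omega)) hclo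
      exact ⟨g, hg2, hg1⟩
    · -- i odd, j even : primal window on [i+1, j)
      refine window n IH a b s hs r (i+1) j ((j-(i+1))/2) (by omega) (by omega) hrs hwinj
        (fun k hk hk1 hk2 => hrb k (by omega)) (fun k hk hk1 hk2 => hra k (by omega)) ?_
      have h1 := hra (j-1) (by omega)
      rw [show j-1+1 = j from by omega, ← hrij] at h1
      have h2 := hra i (by omega)
      exact h1.symm.trans h2.symm
    · -- i odd, j odd : mirrored window on [i, j)
      have hclo : b (r (j-1)) = b (r i) := by
        have h := hrb (j-1) (by omega)
        rw [show j-1+1 = j from by omega, ← hrij] at h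
        exact h.symm
      obtain ⟨g, hg1, hg2⟩ := window n IH b a s hs r i j ((j-i)/2) (by omega)
        (by omega) hrs hwinj
        (fun k hk hk1 hk2 => hra k (by omega)) (fun k hk hk1 hk2 => hrb k (by omega)) hclo
      exact ⟨g, hg2, hg1⟩


end BipartiteSplit

section Final

variable {E A : Type*}

def fib (a : E → A) : E → (E → Prop) := fun e e' => a e' = a e

lemma fib_eq_iff (a : E → A) (x y : E) : fib a x = fib a y ↔ a x = a y :=
  ⟨fun h => cast (congrFun h x) rfl, fun h => funext fun e' => by simp only [fib, h]⟩

end Final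

/-- the edges of a bipartite multigraph can be split into two
classes so that every vertex of degree at least two is incident to an edge of
each class. -/
theorem stmt_16 {E A B : Type*} [Fintype E] [DecidableEq A] [DecidableEq B]
    (a : E → A) (b : E → B) :
    ∃ g : E → Bool,
      (∀ u : A, 2 ≤ (univ.filter (fun e => a e = u)).card →
        (∃ e : E, a e = u ∧ g e = true) ∧ (∃ e : E, a e = u ∧ g e = false)) ∧
      (∀ v : B, 2 ≤ (univ.filter (fun e => b e = v)).card →
        (∃ e : E, b e = v ∧ g e = true) ∧ (∃ e : E, b e = v ∧ g e = false)) := by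
  classical
  obtain ⟨g, hga, hgb⟩ := key (Fintype.card E) (fib a) (fib b) Finset.univ
    (le_of_eq (Finset.card_univ))
  refine ⟨g, ?_, ?_⟩
  · intro u hu
    have h0 : 0 < (Finset.univ.filter fun e => a e = u).card := by omega
    obtain ⟨e0, he0⟩ := Finset.card_pos.mp h0
    have hae0 : a e0 = u := (Finset.mem_filter.mp he0).2
    have hfil : (Finset.univ.filter fun e => fib a e = fib a e0) =
        (Finset.univ.filter fun e => a e = u) := by
      apply Finset.filter_congr
      intro e _
      rw [fib_eq_iff, hae0]
    have hu' : 2 ≤ (Finset.univ.filter fun e => fib a e = fib a e0).card := by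
      rw [hfil]; exact hu
    obtain ⟨⟨e1, _, hf1, hg1⟩, ⟨e2, _, hf2, hg2⟩⟩ := hga (fib a e0) hu'
    exact ⟨⟨e1, by rw [← hae0]; exact (fib_eq_iff a e1 e0).mp hf1, hg1⟩,
           ⟨e2, by rw [← hae0]; exact (fib_eq_iff a e2 e0).mp hf2, hg2⟩⟩
  · intro v hv
    have h0 : 0 < (Finset.univ.filter fun e => b e = v).card := by omega
    obtain ⟨e0, he0⟩ := Finset.card_pos.mp h0
    have hbe0 : b e0 = v := (Finset.mem_filter.mp he0).2
    have hfil : (Finset.univ.filter fun e => fib b e = fib b e0) =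
        (Finset.univ.filter fun e => b e = v) := by
      apply Finset.filter_congr
      intro e _
      rw [fib_eq_iff, hbe0]
    have hv' : 2 ≤ (Finset.univ.filter fun e => fib b e = fib b e0).card := by
      rw [hfil]; exact hv
    obtain ⟨⟨e1, _, hf1, hg1⟩, ⟨e2, _, hf2, hg2⟩⟩ := hgb (fib b e0) hv'
    exact ⟨⟨e1, by rw [← hbe0]; exact (fib_eq_iff b e1 e0).mp hf1, hg1⟩,
           ⟨e2, by rw [← hbe0]; exact (fib_eq_iff b e2 e0).mp hf2, hg2⟩⟩
end

section
/- Let a reallocation instance be given with the warehouse constraint dropped (c ≡ ∞) and satisfying size(p) ≤ d⁺(s(p)) and size(p) ≤ d⁻(t(p)) for every p ∈ P. Suppose φ is a schedule with completion time T such that for every w ∈ W and every θ ∈ ℕ: letting D⁺ = {p ∈ P⁺(w) : φ(p) = θ} and letting a₁ and a₂ be the largest and second largest values of size on D⁺ (taken as 0 when D⁺ has fewer than one, resp. two, elements), one has ∑_{p∈D⁺} size(p) ≤ d⁺(w) + a₁ + a₂; and letting D⁻ = {p ∈ P⁻(w) : φ(p) + τ(p) = θ} and b₁, b₂ the largest and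 second largest values of size on D⁻ (taken as 0 analogously), one has ∑_{p∈D⁻} size(p) ≤ d⁻(w) + b₁ + b₂. Then there exists a schedule ψ satisfying the carry-out and carry-in constraints with completion time at most 6T. -/
open Finset

/-- `nthLargest M i` is the `(i+1)`-st largest element of the multiset `M`
(with multiplicity), or `0` if `M` has fewer than `i+1` elements. -/
noncomputable def nthLargest (M : Multiset ℝ) (i : ℕ) : ℝ :=
  ((M.sort (· ≤ ·)).reverse).getD i 0

namespace Stmt17


lemma nthLargest_zero_m (i : ℕ) : nthLargest 0 i = 0 := by
  simp [nthLargest]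

lemma nthLargest_mem {M : Multiset ℝ} (h : M ≠ 0) : nthLargest M 0 ∈ M := by
  have hlen : ((M.sort (· ≤ ·)).reverse).length = Multiset.card M := by
    simp [Multiset.length_sort]
  have hpos : 0 < ((M.sort (· ≤ ·)).reverse).length := by
    rw [hlen]; exact Multiset.card_pos.2 h
  have : nthLargest M 0 = ((M.sort (· ≤ ·)).reverse)[0] := List.getD_eq_getElem _ _ hpos
  rw [this]
  have hmem : ((M.sort (· ≤ ·)).reverse)[0] ∈ (M.sort (· ≤ ·)).reverse := List.getElem_mem _
  rw [List.mem_reverse] at hmem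
  exact (Multiset.mem_sort _).1 hmem

/-- bounds on the two largest elements: if `t₁` dominates everything and `t₂` dominates
everything else. -/
lemma nthLargest_le {P : Type*} (size : P → ℝ) (K : Finset P) (t₁ t₂ : P)
    (h1 : t₁ ∈ K) (h2 : t₂ ∈ K) (hne : t₂ ≠ t₁)
    (hd1 : ∀ r ∈ K, size r ≤ size t₁)
    (hd2 : ∀ r ∈ K, r ≠ t₁ → size r ≤ size t₂) :
    nthLargest (K.val.map size) 0 ≤ size t₁ ∧ nthLargest (K.val.map size) 1 ≤ size t₂ := by
  classical
  set M : Multiset ℝ := K.val.map size with hM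
  have hMne : M ≠ 0 := by
    intro h0
    rw [hM, Multiset.map_eq_zero, Finset.val_eq_zero] at h0
    rw [h0] at h1; simp at h1
  constructor
  · -- first bound
    have hmem := nthLargest_mem hMne
    rw [hM, Multiset.mem_map] at hmem
    obtain ⟨r, hr, hrsz⟩ := hmem
    rw [← hrsz]
    exact hd1 r hr
  · -- second bound
    by_contra hcon
    push_neg at hcon
    set L : List ℝ := (M.sort (· ≤ ·)).reverse with hL
    have hlen : L.length = Multiset.card M := by simp [hL, Multiset.length_sort]
    have hcard : Multiset.card M = K.card := by simp [hM]
    have h2len : 2 ≤ L.length := by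
      rw [hlen, hcard]
      have : ({t₂, t₁} : Finset P) ⊆ K := by
        intro x hx; rcases Finset.mem_insert.1 hx with h | h
        · rw [h]; exact h2
        · rw [Finset.mem_singleton.1 h]; exact h1
      calc 2 = ({t₂, t₁} : Finset P).card := (Finset.card_pair hne).symm
        _ ≤ K.card := Finset.card_le_card this
    have h1lt : 1 < L.length := h2len
    have h0lt : 0 < L.length := by omega
    have hnth1 : nthLargest M 1 = L[1] := List.getD_eq_getElem _ _ h1lt
    have hnth0 : nthLargest M 0 = L[0] := List.getD_eq_getElem _ _ h0lt
    -- L is sorted descending, so L[1] ≤ L[0]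
    have hsorted : List.Pairwise (· ≤ ·) (M.sort (· ≤ ·)) := Multiset.pairwise_sort _ _
    have h01 : L[1] ≤ L[0] := by
      have hlen' : L.length = (M.sort (· ≤ ·)).length := by simp [hL]
      have e1 : L[1] = (M.sort (· ≤ ·))[(M.sort (· ≤ ·)).length - 1 - 1]'(by omega) :=
        List.getElem_reverse h1lt
      have e0 : L[0] = (M.sort (· ≤ ·))[(M.sort (· ≤ ·)).length - 1 - 0]'(by omega) :=
        List.getElem_reverse h0lt
      rw [e1, e0]
      exact List.pairwise_iff_getElem.1 hsorted _ _ _ _ (by omega)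
    -- so both L[0], L[1] > size t₂
    have hgt1 : size t₂ < L[1] := hnth1 ▸ hcon
    have hgt0 : size t₂ < L[0] := lt_of_lt_of_le hgt1 h01
    -- two elements of M exceed size t₂
    have hsub : (L[0] ::ₘ L[1] ::ₘ 0 : Multiset ℝ) ≤ M := by
      have hLM : (L : Multiset ℝ) = M := by
        rw [hL]
        have : ((M.sort (· ≤ ·)).reverse : Multiset ℝ) = ((M.sort (· ≤ ·)) : Multiset ℝ) :=
          Multiset.coe_eq_coe.2 (List.reverse_perm _)
        rw [this, Multiset.sort_eq]
      rw [← hLM]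
      rcases L with _ | ⟨x, L'⟩
      · simp at h0lt
      rcases L' with _ | ⟨y, L''⟩
      · simp at h1lt
      simp only [List.getElem_cons_zero, List.getElem_cons_succ]
      show (x ::ₘ y ::ₘ 0 : Multiset ℝ) ≤ (x :: y :: L'' : List ℝ)
      rw [show ((x :: y :: L'' : List ℝ) : Multiset ℝ) = x ::ₘ y ::ₘ (L'' : Multiset ℝ) by rfl]
      exact Multiset.cons_le_cons _ (Multiset.cons_le_cons _ (Multiset.zero_le _))
    have hfilt : 2 ≤ Multiset.card (M.filter (fun x => size t₂ < x)) := by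
      have hle := Multiset.filter_le_filter (fun x => size t₂ < x) hsub
      have : Multiset.filter (fun x => size t₂ < x) (L[0] ::ₘ L[1] ::ₘ 0) =
          L[0] ::ₘ L[1] ::ₘ 0 := by
        rw [Multiset.filter_cons_of_pos _ hgt0, Multiset.filter_cons_of_pos _ hgt1,
          Multiset.filter_zero]
      rw [this] at hle
      calc 2 = Multiset.card (L[0] ::ₘ L[1] ::ₘ 0 : Multiset ℝ) := by simp
        _ ≤ _ := Multiset.card_le_card hle
    -- but at most one element of M exceeds size t₂
    have hfilt' : Multiset.card (M.filter (fun x => size t₂ < x)) ≤ 1 := by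
      rw [hM, Multiset.filter_map, Multiset.card_map]
      have hnd : (K.val.filter ((fun x => size t₂ < x) ∘ size)).Nodup :=
        Multiset.Nodup.filter _ K.nodup
      have hsub2 : K.val.filter ((fun x => size t₂ < x) ∘ size) ⊆ ({t₁} : Multiset P) := by
        intro a ha
        rw [Multiset.mem_filter] at ha
        have haK : a ∈ K := ha.1
        have haeq : a = t₁ := by
          by_contra hcon2
          exact absurd ha.2 (not_lt.2 (hd2 a haK hcon2))
        simp [haeq]
      have := Multiset.card_le_card ((Multiset.le_iff_subset hnd).2 hsub2)
      simpa using this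
    omega


variable {P : Type*}

/-- the elements of `K` strictly above `p` w.r.t. `lt`. -/
noncomputable def ups (lt : P → P → Prop) (K : Finset P) (p : P) : Finset P :=
  @Finset.filter _ (fun q => lt p q) (Classical.decPred _) K

/-- the (at most two) top elements of `K` w.r.t. `lt`. -/
noncomputable def top2 (lt : P → P → Prop) (K : Finset P) : Finset P :=
  @Finset.filter _ (fun p => (ups lt K p).card ≤ 1) (Classical.decPred _) K

lemma mem_ups {lt : P → P → Prop} {K : Finset P} {p q : P} :
    q ∈ ups lt K p ↔ q ∈ K ∧ lt p q :=
  @Finset.mem_filter _ _ (Classical.decPred _) _ _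

lemma mem_top2 {lt : P → P → Prop} {K : Finset P} {p : P} :
    p ∈ top2 lt K ↔ p ∈ K ∧ (ups lt K p).card ≤ 1 :=
  @Finset.mem_filter _ _ (Classical.decPred _) _ _

lemma top2_subset {lt : P → P → Prop} {K : Finset P} : top2 lt K ⊆ K :=
  fun _ h => (mem_top2.1 h).1

lemma top2_card_le {lt : P → P → Prop}
    (htr : ∀ a b c, lt a b → lt b c → lt a c)
    (htot : ∀ a b, a ≠ b → lt a b ∨ lt b a) (K : Finset P) :
    (top2 lt K).card ≤ 2 := by
  classical
  by_contra hcon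
  push_neg at hcon
  obtain ⟨B, hBsub, hB3⟩ := Finset.exists_subset_card_eq (show 3 ≤ (top2 lt K).card by omega)
  obtain ⟨a, b, c, hab, hac, hbc, hBeq⟩ := Finset.card_eq_three.1 hB3
  have ha : a ∈ top2 lt K := hBsub (hBeq ▸ by simp)
  have hb : b ∈ top2 lt K := hBsub (hBeq ▸ by simp)
  have hc : c ∈ top2 lt K := hBsub (hBeq ▸ by simp)
  have key : ∀ x u v : P, u ≠ v → u ∈ K → v ∈ K → lt x u → lt x v →
      (ups lt K x).card ≤ 1 → False := by
    intro x u v huv hu hv hxu hxv hcard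
    have : ({u, v} : Finset P) ⊆ ups lt K x := by
      intro y hy
      rcases Finset.mem_insert.1 hy with h | h
      · exact mem_ups.2 ⟨h ▸ hu, h ▸ hxu⟩
      · rw [Finset.mem_singleton.1 h]; exact mem_ups.2 ⟨hv, hxv⟩
    have := Finset.card_le_card this
    rw [Finset.card_pair huv] at this
    omega
  have haK := (mem_top2.1 ha).1
  have hbK := (mem_top2.1 hb).1
  have hcK := (mem_top2.1 hc).1
  rcases htot a b hab with h1 | h1
  · rcases htot a c hac with h2 | h2
    · exact key a b c hbc hbK hcK h1 h2 (mem_top2.1 ha).2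
    · exact key c a b hab haK hbK h2 (htr _ _ _ h2 h1) (mem_top2.1 hc).2
  · rcases htot b c hbc with h2 | h2
    · exact key b a c hac haK hcK h1 h2 (mem_top2.1 hb).2
    · exact key c b a (Ne.symm hab) hbK haK h2 (htr _ _ _ h2 h1) (mem_top2.1 hc).2

lemma top2_upgrade {lt : P → P → Prop}
    (htr : ∀ a b c, lt a b → lt b c → lt a c)
    {K : Finset P} {p t : P} (hp : p ∈ K) (ht : t ∈ top2 lt K)
    (hlt : lt t p) : p ∈ top2 lt K := by
  refine mem_top2.2 ⟨hp, le_trans (Finset.card_le_card ?_) (mem_top2.1 ht).2⟩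
  intro q hq
  rcases mem_ups.1 hq with ⟨hqK, hpq⟩
  exact mem_ups.2 ⟨hqK, htr _ _ _ hlt hpq⟩

lemma exists_class_max {lt : P → P → Prop} (mG : P → ℕ)
    (hmG : ∀ a b, lt a b → mG b < mG a)
    (htot : ∀ a b, a ≠ b → lt a b ∨ lt b a)
    {K : Finset P} (hK : K.Nonempty) :
    ∃ t ∈ K, ∀ r ∈ K, r ≠ t → lt r t := by
  obtain ⟨v, hv, hvmin⟩ := Finset.exists_min_image K mG hK
  refine ⟨v, hv, fun r hr hrv => ?_⟩
  rcases htot r v hrv with h | h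
  · exact h
  · exact absurd (hmG _ _ h) (not_lt.2 (hvmin r hr))

/-- two distinct top elements of a class with at least 2 elements, with domination. -/
lemma two_tops {lt : P → P → Prop} (mG : P → ℕ)
    (hmG : ∀ a b, lt a b → mG b < mG a)
    (htr : ∀ a b c, lt a b → lt b c → lt a c)
    (hirr : ∀ a, ¬ lt a a)
    (htot : ∀ a b, a ≠ b → lt a b ∨ lt b a)
    {K : Finset P} (h2 : 2 ≤ K.card) :
    ∃ t₁ t₂, t₁ ∈ top2 lt K ∧ t₂ ∈ top2 lt K ∧ t₂ ≠ t₁ ∧ t₁ ∈ K ∧ t₂ ∈ K ∧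
      lt t₂ t₁ ∧ (∀ r ∈ K, r ≠ t₁ → lt r t₁) ∧ (∀ r ∈ K, r ≠ t₁ → r ≠ t₂ → lt r t₂) := by
  classical
  have hK : K.Nonempty := Finset.card_pos.1 (by omega)
  obtain ⟨t₁, ht₁K, ht₁dom⟩ := exists_class_max mG hmG htot hK
  have hK' : (K.erase t₁).Nonempty := by
    rw [← Finset.card_pos, Finset.card_erase_of_mem ht₁K]; omega
  obtain ⟨t₂, ht₂K', ht₂dom⟩ := exists_class_max mG hmG htot hK'
  have ht₂ne : t₂ ≠ t₁ := (Finset.mem_erase.1 ht₂K').1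
  have ht₂K : t₂ ∈ K := (Finset.mem_erase.1 ht₂K').2
  have ht₁top : t₁ ∈ top2 lt K := by
    refine mem_top2.2 ⟨ht₁K, ?_⟩
    have : ups lt K t₁ = ∅ := by
      rw [Finset.eq_empty_iff_forall_notMem]
      intro q hq
      rcases mem_ups.1 hq with ⟨hqK, h1q⟩
      have hqne : q ≠ t₁ := by rintro rfl; exact hirr _ h1q
      exact hirr _ (htr _ _ _ h1q (ht₁dom q hqK hqne))
    rw [this]; simp
  have ht₂top : t₂ ∈ top2 lt K := by
    refine mem_top2.2 ⟨ht₂K, ?_⟩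
    have : ups lt K t₂ ⊆ {t₁} := by
      intro q hq
      rcases mem_ups.1 hq with ⟨hqK, h2q⟩
      rw [Finset.mem_singleton]
      by_contra hqne
      have hq' : q ∈ K.erase t₁ := Finset.mem_erase.2 ⟨hqne, hqK⟩
      have hqt₂ : q ≠ t₂ := by rintro rfl; exact hirr _ h2q
      exact hirr _ (htr _ _ _ h2q (ht₂dom q hq' hqt₂))
    calc (ups lt K t₂).card ≤ ({t₁} : Finset P).card := Finset.card_le_card this
      _ = 1 := Finset.card_singleton _
  exact ⟨t₁, t₂, ht₁top, ht₂top, ht₂ne, ht₁K, ht₂K, ht₁dom t₂ ht₂K ht₂ne, ht₁dom,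
    fun r hr hr1 hr2 => ht₂dom r (Finset.mem_erase.2 ⟨hr1, hr⟩) hr2⟩

lemma exists_coloring [Fintype P] (lt : P → P → Prop)
    (htr : ∀ a b c, lt a b → lt b c → lt a c)
    (hirr : ∀ a, ¬ lt a a)
    (htot : ∀ a b, a ≠ b → lt a b ∨ lt b a)
    (cl₁ cl₂ : P → Finset P)
    (hcl₁ : ∀ p q, q ∈ cl₁ p → cl₁ q = cl₁ p) (hm₁ : ∀ p, p ∈ cl₁ p)
    (hcl₂ : ∀ p q, q ∈ cl₂ p → cl₂ q = cl₂ p) (hm₂ : ∀ p, p ∈ cl₂ p) :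
    ∃ c : P → ℕ, (∀ p, c p ≤ 5) ∧
      (∀ p t, (t ∈ top2 lt (cl₁ p) ∨ t ∈ top2 lt (cl₂ p)) → t ≠ p → c p ≠ c t) := by
  classical
  set mG : P → ℕ := fun p => (ups lt univ p).card with hmGdef
  have hmG : ∀ a b, lt a b → mG b < mG a := by
    intro a b hab
    apply Finset.card_lt_card
    rw [Finset.ssubset_iff_of_subset]
    · exact ⟨b, mem_ups.2 ⟨mem_univ _, hab⟩, fun hb => hirr b (mem_ups.1 hb).2⟩
    · intro q hq
      exact mem_ups.2 ⟨mem_univ _, htr _ _ _ hab (mem_ups.1 hq).2⟩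
  have main : ∀ (n : ℕ) (C : Finset P), C.card = n →
      (∀ p q, p ∈ C → lt p q → q ∈ C) →
      ∃ c : P → ℕ, (∀ p, c p ≤ 5) ∧
        (∀ p, p ∈ C → ∀ t, (t ∈ top2 lt (cl₁ p) ∨ t ∈ top2 lt (cl₂ p)) → t ≠ p → t ∈ C →
          c p ≠ c t) := by
    intro n
    induction n using Nat.strong_induction_on with
    | _ n IH =>
      intro C hcard hup
      rcases Finset.eq_empty_or_nonempty C with rfl | hCne
      · exact ⟨fun _ => 0, fun _ => by simp, fun p hp => by simp at hp⟩
      obtain ⟨v, hvC, hvmax⟩ := Finset.exists_max_image C mG hCne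
      have hvmin : ∀ r ∈ C, r ≠ v → lt v r := by
        intro r hr hrv
        rcases htot v r (Ne.symm hrv) with h | h
        · exact h
        · exact absurd (hmG _ _ h) (not_lt.2 (hvmax r hr))
      set C' := C.erase v with hC'def
      have hC'card : C'.card < n := by
        rw [hC'def, Finset.card_erase_of_mem hvC]
        have : 0 < C.card := Finset.card_pos.2 hCne
        omega
      have hC'up : ∀ p q, p ∈ C' → lt p q → q ∈ C' := by
        intro p q hp hpq
        have hpC : p ∈ C := (Finset.mem_erase.1 hp).2
        have hpv : p ≠ v := (Finset.mem_erase.1 hp).1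
        have hqC : q ∈ C := hup p q hpC hpq
        refine Finset.mem_erase.2 ⟨?_, hqC⟩
        rintro rfl
        exact hirr _ (htr _ _ _ (hvmin p hpC hpv) hpq)
      obtain ⟨c', hc'5, hc'prop⟩ := IH C'.card hC'card C' rfl hC'up
      set F : Finset ℕ := ((top2 lt (cl₁ v) ∪ top2 lt (cl₂ v)) ∩ C').image c' with hFdef
      have hFcard : F.card ≤ 4 := by
        calc F.card ≤ ((top2 lt (cl₁ v) ∪ top2 lt (cl₂ v)) ∩ C').card :=
              Finset.card_image_le
          _ ≤ (top2 lt (cl₁ v) ∪ top2 lt (cl₂ v)).card :=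
              Finset.card_le_card Finset.inter_subset_left
          _ ≤ (top2 lt (cl₁ v)).card + (top2 lt (cl₂ v)).card := Finset.card_union_le _ _
          _ ≤ 4 := by
              have h1 := top2_card_le htr htot (cl₁ v)
              have h2 := top2_card_le htr htot (cl₂ v)
              omega
      have hknem : (Finset.range 6 \ F).Nonempty := by
        rw [← Finset.card_pos]
        have h6 : (Finset.range 6).card = 6 := Finset.card_range 6
        have := Finset.le_card_sdiff F (Finset.range 6)
        omega
      obtain ⟨k, hk⟩ := hknem
      have hk6 : k < 6 := Finset.mem_range.1 (Finset.mem_sdiff.1 hk).1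
      have hkF : k ∉ F := (Finset.mem_sdiff.1 hk).2
      refine ⟨Function.update c' v k, ?_, ?_⟩
      · intro p
        rcases eq_or_ne p v with rfl | hpv
        · rw [Function.update_self]; omega
        · rw [Function.update_of_ne hpv]; exact hc'5 p
      · intro p hpC t htop htp htC
        rcases eq_or_ne p v with rfl | hpv
        · have htC' : t ∈ C' := Finset.mem_erase.2 ⟨htp, htC⟩
          rw [Function.update_self, Function.update_of_ne htp]
          intro heq
          apply hkF
          rw [hFdef]
          exact Finset.mem_image.2 ⟨t, Finset.mem_inter.2
            ⟨Finset.mem_union.2 htop, htC'⟩, heq.symm⟩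
        · rcases eq_or_ne t v with rfl | htv
          · have hpC' : p ∈ C' := Finset.mem_erase.2 ⟨hpv, hpC⟩
            rw [Function.update_of_ne hpv, Function.update_self]
            have hvp : lt t p := hvmin p hpC hpv
            have hptop : p ∈ top2 lt (cl₁ t) ∨ p ∈ top2 lt (cl₂ t) := by
              rcases htop with h | h
              · left
                have hcl : cl₁ t = cl₁ p := hcl₁ p t (top2_subset h)
                rw [hcl]
                exact top2_upgrade htr (hm₁ p) h hvp
              · right
                have hcl : cl₂ t = cl₂ p := hcl₂ p t (top2_subset h)
                rw [hcl]
                exact top2_upgrade htr (hm₂ p) h hvp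
            intro heq
            apply hkF
            rw [hFdef]
            exact Finset.mem_image.2 ⟨p, Finset.mem_inter.2
              ⟨Finset.mem_union.2 hptop, hpC'⟩, heq⟩
          · have hpC' : p ∈ C' := Finset.mem_erase.2 ⟨hpv, hpC⟩
            have htC' : t ∈ C' := Finset.mem_erase.2 ⟨htv, htC⟩
            rw [Function.update_of_ne hpv, Function.update_of_ne htv]
            exact hc'prop p hpC' t htop htp htC'
  obtain ⟨c, hc5, hcprop⟩ := main univ.card univ rfl (fun p q _ _ => mem_univ q)
  exact ⟨c, hc5, fun p t htop htp => hcprop p (mem_univ p) t htop htp (mem_univ t)⟩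

/-- The core capacity bound: a monochromatic subset of a class sums to at most `cap`. -/
lemma core (size : P → ℝ) (lt : P → P → Prop) (mG : P → ℕ)
    (hmG : ∀ a b, lt a b → mG b < mG a)
    (htr : ∀ a b c, lt a b → lt b c → lt a c)
    (hirr : ∀ a, ¬ lt a a)
    (htot : ∀ a b, a ≠ b → lt a b ∨ lt b a)
    (hszmono : ∀ a b, lt a b → size a ≤ size b)
    (hsz0 : ∀ p, 0 ≤ size p)
    (c : P → ℕ) (K S : Finset P) (cap : ℝ)
    (hS : S ⊆ K) (hcap0 : 0 ≤ cap)
    (hcap : ∑ p ∈ K, size p ≤ cap + nthLargest (K.val.map size) 0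
      + nthLargest (K.val.map size) 1)
    (hsingle : ∀ p ∈ K, size p ≤ cap)
    (hmono : ∀ p ∈ S, ∀ q ∈ S, c p = c q)
    (htop : ∀ p ∈ K, ∀ t ∈ top2 lt K, t ≠ p → c p ≠ c t) :
    ∑ p ∈ S, size p ≤ cap := by
  classical
  rcases Finset.eq_empty_or_nonempty S with rfl | ⟨p₀, hp₀⟩
  · simpa using hcap0
  by_cases hex : ∃ u ∈ S, u ∈ top2 lt K
  · -- S is the singleton of a top element
    obtain ⟨u, huS, hutop⟩ := hex
    have hSu : S = {u} := by
      rw [Finset.eq_singleton_iff_unique_mem]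
      refine ⟨huS, fun q hq => ?_⟩
      by_contra hqu
      exact htop q (hS hq) u hutop (Ne.symm hqu) (hmono q hq u huS)
    rw [hSu, Finset.sum_singleton]
    exact hsingle u (hS huS)
  · push_neg at hex
    have h2 : 2 ≤ K.card := by
      by_contra hcon
      push_neg at hcon
      have h1 : K.card = 1 := by
        have : 0 < K.card := Finset.card_pos.2 ⟨p₀, hS hp₀⟩
        omega
      obtain ⟨u, hu⟩ := Finset.card_eq_one.1 h1
      have hutop : u ∈ top2 lt K := by
        refine mem_top2.2 ⟨by simp [hu], ?_⟩
        have : ups lt K u = ∅ := by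
          rw [Finset.eq_empty_iff_forall_notMem]
          intro q hq
          rcases mem_ups.1 hq with ⟨hqK, huq⟩
          rw [hu, Finset.mem_singleton] at hqK
          exact hirr _ (hqK ▸ huq)
        rw [this]; simp
      have : p₀ = u := by
        have := hS hp₀; rw [hu, Finset.mem_singleton] at this; exact this
      exact hex p₀ hp₀ (this ▸ hutop)
    obtain ⟨t₁, t₂, ht₁top, ht₂top, hne, ht₁K, ht₂K, h21, hdom1, hdom2⟩ :=
      two_tops mG hmG htr hirr htot h2
    have hd1 : ∀ r ∈ K, size r ≤ size t₁ := by
      intro r hr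
      rcases eq_or_ne r t₁ with rfl | hrne
      · exact le_refl _
      · exact hszmono _ _ (hdom1 r hr hrne)
    have hd2 : ∀ r ∈ K, r ≠ t₁ → size r ≤ size t₂ := by
      intro r hr hrne
      rcases eq_or_ne r t₂ with rfl | hrne2
      · exact le_refl _
      · exact hszmono _ _ (hdom2 r hr hrne hrne2)
    obtain ⟨hn0, hn1⟩ := nthLargest_le size K t₁ t₂ ht₁K ht₂K hne hd1 hd2
    have hSsub : S ⊆ (K.erase t₁).erase t₂ := by
      intro p hp
      refine Finset.mem_erase.2 ⟨?_, Finset.mem_erase.2 ⟨?_, hS hp⟩⟩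
      · rintro rfl; exact hex p hp ht₂top
      · rintro rfl; exact hex p hp ht₁top
    have hsum1 : ∑ p ∈ S, size p ≤ ∑ p ∈ (K.erase t₁).erase t₂, size p :=
      Finset.sum_le_sum_of_subset_of_nonneg hSsub (fun i _ _ => hsz0 i)
    have he1 : size t₁ + ∑ p ∈ K.erase t₁, size p = ∑ p ∈ K, size p :=
      Finset.add_sum_erase K size ht₁K
    have he2 : size t₂ + ∑ p ∈ (K.erase t₁).erase t₂, size p = ∑ p ∈ K.erase t₁, size p :=
      Finset.add_sum_erase _ size (Finset.mem_erase.2 ⟨hne, ht₂K⟩)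
    linarith
/-- the elementary slot-separation fact. -/
lemma slot_eq {T a b x y : ℕ} (hT : 0 < T) (ha : a < T) (hb : b < T)
    (h : a + T * x = b + T * y) : a = b ∧ x = y := by
  have hx : (a + T * x) % T = a % T := Nat.add_mul_mod_self_left a T x
  have hy : (b + T * y) % T = b % T := Nat.add_mul_mod_self_left b T y
  have hab : a = b := by
    rw [← Nat.mod_eq_of_lt ha, ← Nat.mod_eq_of_lt hb, ← hx, ← hy, h]
  refine ⟨hab, ?_⟩
  subst hab
  have : T * x = T * y := by omega
  exact Nat.eq_of_mul_eq_mul_left hT this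


end Stmt17

open Stmt17 in
/-- a schedule with completion time `T` that violates the
carry-out (resp. carry-in) capacities by at most the two largest sizes of
simultaneously departing (resp. arriving) products can be converted into a
schedule satisfying the carry-out and carry-in constraints with completion time
at most `6T` (warehouse constraint dropped). -/
theorem stmt_17 {P W : Type*} [Fintype P] [Nonempty P] [Fintype W] [DecidableEq W]
    (s t : P → W) (hst : ∀ p, s p ≠ t p)
    (size : P → ℝ) (hsize : ∀ p, 0 ≤ size p)
    (τ : P → ℕ) (hτ : ∀ p, 1 ≤ τ p)
    (dout din : W → ℝ)
    (hout0 : ∀ p, size p ≤ dout (s p)) (hin0 : ∀ p, size p ≤ din (t p))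
    (φ : P → ℕ) (T : ℕ)
    (hφT : univ.sup' univ_nonempty (fun p => φ p + τ p) = T)
    (hout : ∀ (w : W) (θ : ℕ),
      ∑ p ∈ univ.filter (fun p => s p = w ∧ φ p = θ), size p
        ≤ dout w
          + nthLargest ((univ.filter (fun p => s p = w ∧ φ p = θ)).val.map size) 0
          + nthLargest ((univ.filter (fun p => s p = w ∧ φ p = θ)).val.map size) 1)
    (hin : ∀ (w : W) (θ : ℕ),
      ∑ p ∈ univ.filter (fun p => t p = w ∧ φ p + τ p = θ), size p
        ≤ din w
          + nthLargest ((univ.filter (fun p => t p = w ∧ φ p + τ p = θ)).val.map size) 0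
          + nthLargest ((univ.filter (fun p => t p = w ∧ φ p + τ p = θ)).val.map size) 1) :
    ∃ ψ : P → ℕ,
      (∀ (w : W) (θ : ℕ),
        ∑ p ∈ univ.filter (fun p => s p = w ∧ ψ p = θ), size p ≤ dout w) ∧
      (∀ (w : W) (θ : ℕ),
        ∑ p ∈ univ.filter (fun p => t p = w ∧ ψ p + τ p = θ), size p ≤ din w) ∧
      univ.sup' univ_nonempty (fun p => ψ p + τ p) ≤ 6 * T := by
  classical
  -- basic facts about T
  have hT : ∀ p, φ p + τ p ≤ T := by
    intro p
    rw [← hφT]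
    exact Finset.le_sup' (fun q => φ q + τ q) (mem_univ p)
  obtain ⟨pstar⟩ := ‹Nonempty P›
  have hTpos : 0 < T := lt_of_lt_of_le (by have := hτ pstar; omega) (hT pstar)
  have hφlt : ∀ p, φ p < T := fun p => by have := hT p; have := hτ p; omega
  -- the global linear order on products
  set e : P → ℕ := fun p => ((Fintype.equivFin P) p : ℕ) with hedef
  have he : Function.Injective e := fun a b h => by
    apply (Fintype.equivFin P).injective
    exact Fin.val_injective h
  set lt : P → P → Prop := fun p q => size p < size q ∨ (size p = size q ∧ e p < e q)
    with hltdef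
  have htr : ∀ a b c, lt a b → lt b c → lt a c := by
    intro a b c hab hbc
    rcases hab with h1 | ⟨h1, h1'⟩ <;> rcases hbc with h2 | ⟨h2, h2'⟩
    · exact Or.inl (lt_trans h1 h2)
    · exact Or.inl (h2 ▸ h1)
    · exact Or.inl (h1 ▸ h2)
    · exact Or.inr ⟨h1.trans h2, lt_trans h1' h2'⟩
  have hirr : ∀ a, ¬ lt a a := by
    intro a h
    rcases h with h | ⟨_, h⟩
    · exact lt_irrefl _ h
    · exact lt_irrefl _ h
  have htot : ∀ a b, a ≠ b → lt a b ∨ lt b a := by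
    intro a b hab
    rcases lt_trichotomy (size a) (size b) with h | h | h
    · exact Or.inl (Or.inl h)
    · rcases Nat.lt_or_ge (e a) (e b) with h' | h'
      · exact Or.inl (Or.inr ⟨h, h'⟩)
      · rcases Nat.lt_or_ge (e b) (e a) with h'' | h''
        · exact Or.inr (Or.inr ⟨h.symm, h''⟩)
        · exact absurd (he (Nat.le_antisymm h'' h')) hab
    · exact Or.inr (Or.inl h)
  have hszmono : ∀ a b, lt a b → size a ≤ size b := by
    intro a b h
    rcases h with h | ⟨h, _⟩
    · exact le_of_lt h
    · exact le_of_eq h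
  set mG : P → ℕ := fun p => (ups lt univ p).card with hmGdef
  have hmG : ∀ a b, lt a b → mG b < mG a := by
    intro a b hab
    apply Finset.card_lt_card
    rw [Finset.ssubset_iff_of_subset]
    · exact ⟨b, mem_ups.2 ⟨mem_univ _, hab⟩, fun hb => hirr b (mem_ups.1 hb).2⟩
    · intro q hq
      exact mem_ups.2 ⟨mem_univ _, htr _ _ _ hab (mem_ups.1 hq).2⟩
  -- the classes
  set cl₁ : P → Finset P := fun p => univ.filter (fun q => s q = s p ∧ φ q = φ p)
    with hcl₁def
  set cl₂ : P → Finset P := fun p => univ.filter (fun q => t q = t p ∧ φ q + τ q = φ p + τ p)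
    with hcl₂def
  have hcl₁ : ∀ p q, q ∈ cl₁ p → cl₁ q = cl₁ p := by
    intro p q hq
    rw [hcl₁def] at hq ⊢
    simp only [Finset.mem_filter] at hq
    ext r
    simp only [Finset.mem_filter, Finset.mem_univ, true_and]
    rw [hq.2.1, hq.2.2]
  have hm₁ : ∀ p, p ∈ cl₁ p := by
    intro p; rw [hcl₁def]; simp
  have hcl₂ : ∀ p q, q ∈ cl₂ p → cl₂ q = cl₂ p := by
    intro p q hq
    rw [hcl₂def] at hq ⊢
    simp only [Finset.mem_filter] at hq
    ext r
    simp only [Finset.mem_filter, Finset.mem_univ, true_and]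
    rw [hq.2.1, hq.2.2]
  have hm₂ : ∀ p, p ∈ cl₂ p := by
    intro p; rw [hcl₂def]; simp
  -- the coloring
  obtain ⟨c, hc5, hcprop⟩ := exists_coloring lt htr hirr htot cl₁ cl₂ hcl₁ hm₁ hcl₂ hm₂
  -- the new schedule
  refine ⟨fun p => φ p + T * c p, ?_, ?_, ?_⟩
  · -- carry-out
    intro w θ
    rcases Finset.eq_empty_or_nonempty
      (univ.filter (fun p => s p = w ∧ φ p + T * c p = θ)) with hemp | ⟨p₀, hp₀⟩
    · rw [hemp, Finset.sum_empty]
      -- 0 ≤ dout w from the empty class at time T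
      have hcl : univ.filter (fun p => s p = w ∧ φ p = T) = ∅ := by
        rw [Finset.eq_empty_iff_forall_notMem]
        intro q hq
        rw [Finset.mem_filter] at hq
        exact absurd hq.2.2 (Nat.ne_of_lt (hφlt q))
      have := hout w T
      rw [hcl] at this
      simpa [nthLargest_zero_m] using this
    · rw [Finset.mem_filter] at hp₀
      obtain ⟨-, hs₀, hψ₀⟩ := hp₀
      have hKey : ∀ q, q ∈ univ.filter (fun p => s p = w ∧ φ p + T * c p = θ) →
          s q = w ∧ φ q = φ p₀ ∧ c q = c p₀ := by
        intro q hq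
        rw [Finset.mem_filter] at hq
        obtain ⟨-, hsq, hψq⟩ := hq
        have := slot_eq hTpos (hφlt q) (hφlt p₀) (by rw [hψq, hψ₀])
        exact ⟨hsq, this.1, this.2⟩
      apply core size lt mG hmG htr hirr htot hszmono hsize c
        (univ.filter (fun p => s p = w ∧ φ p = φ p₀)) _ (dout w)
      · intro q hq
        obtain ⟨h1, h2, h3⟩ := hKey q hq
        rw [Finset.mem_filter]
        exact ⟨mem_univ _, h1, h2⟩
      · -- 0 ≤ dout w
        have hcl : univ.filter (fun p => s p = w ∧ φ p = T) = ∅ := by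
          rw [Finset.eq_empty_iff_forall_notMem]
          intro q hq
          rw [Finset.mem_filter] at hq
          exact absurd hq.2.2 (Nat.ne_of_lt (hφlt q))
        have := hout w T
        rw [hcl] at this
        simpa [nthLargest_zero_m] using this
      · exact hout w (φ p₀)
      · intro q hq
        rw [Finset.mem_filter] at hq
        rw [← hq.2.1]
        exact hout0 q
      · intro q hq r hr
        rw [(hKey q hq).2.2, (hKey r hr).2.2]
      · -- the top2 property, transported to this class
        intro q hq u hu hne
        have hKq : univ.filter (fun p => s p = w ∧ φ p = φ p₀) = cl₁ q := by
          rw [Finset.mem_filter] at hq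
          rw [hcl₁def]
          ext r
          simp only [Finset.mem_filter, Finset.mem_univ, true_and]
          rw [hq.2.1, hq.2.2]
        rw [hKq] at hu
        exact hcprop q u (Or.inl hu) hne
  · -- carry-in
    intro w θ
    rcases Finset.eq_empty_or_nonempty
      (univ.filter (fun p => t p = w ∧ φ p + T * c p + τ p = θ)) with hemp | ⟨p₀, hp₀⟩
    · rw [hemp, Finset.sum_empty]
      have hcl : univ.filter (fun p => t p = w ∧ φ p + τ p = 0) = ∅ := by
        rw [Finset.eq_empty_iff_forall_notMem]
        intro q hq
        rw [Finset.mem_filter] at hq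
        have := hτ q
        omega
      have := hin w 0
      rw [hcl] at this
      simpa [nthLargest_zero_m] using this
    · rw [Finset.mem_filter] at hp₀
      obtain ⟨-, ht₀, hψ₀⟩ := hp₀
      have harr : ∀ q : P, φ q + T * c q + τ q = (φ q + τ q - 1) + 1 + T * c q := by
        intro q
        have := hτ q
        set u := T * c q
        omega
      have hlt' : ∀ q : P, φ q + τ q - 1 < T := by
        intro q
        have := hT q
        have := hτ q
        omega
      have hKey : ∀ q, q ∈ univ.filter (fun p => t p = w ∧ φ p + T * c p + τ p = θ) →
          t q = w ∧ φ q + τ q = φ p₀ + τ p₀ ∧ c q = c p₀ := by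
        intro q hq
        rw [Finset.mem_filter] at hq
        obtain ⟨-, htq, hψq⟩ := hq
        have heq : (φ q + τ q - 1) + T * c q = (φ p₀ + τ p₀ - 1) + T * c p₀ := by
          have h1 := harr q
          have h2 := harr p₀
          rw [h1] at hψq
          rw [h2] at hψ₀
          rw [← hψ₀] at hψq
          set u := T * c q
          set v := T * c p₀
          omega
        have := slot_eq hTpos (hlt' q) (hlt' p₀) heq
        have hτq := hτ q
        have hτ₀ := hτ p₀
        exact ⟨htq, by omega, this.2⟩
      apply core size lt mG hmG htr hirr htot hszmono hsize c
        (univ.filter (fun p => t p = w ∧ φ p + τ p = φ p₀ + τ p₀)) _ (din w)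
      · intro q hq
        obtain ⟨h1, h2, h3⟩ := hKey q hq
        rw [Finset.mem_filter]
        exact ⟨mem_univ _, h1, h2⟩
      · have hcl : univ.filter (fun p => t p = w ∧ φ p + τ p = 0) = ∅ := by
          rw [Finset.eq_empty_iff_forall_notMem]
          intro q hq
          rw [Finset.mem_filter] at hq
          have := hτ q
          omega
        have := hin w 0
        rw [hcl] at this
        simpa [nthLargest_zero_m] using this
      · exact hin w (φ p₀ + τ p₀)
      · intro q hq
        rw [Finset.mem_filter] at hq
        rw [← hq.2.1]
        exact hin0 q
      · intro q hq r hr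
        rw [(hKey q hq).2.2, (hKey r hr).2.2]
      · intro q hq u hu hne
        have hKq : univ.filter (fun p => t p = w ∧ φ p + τ p = φ p₀ + τ p₀) = cl₂ q := by
          rw [Finset.mem_filter] at hq
          rw [hcl₂def]
          ext r
          simp only [Finset.mem_filter, Finset.mem_univ, true_and]
          rw [hq.2.1, hq.2.2]
        rw [hKq] at hu
        exact hcprop q u (Or.inr hu) hne
  · -- completion time
    apply Finset.sup'_le
    intro p _
    show (φ p + T * c p) + τ p ≤ 6 * T
    have h1 : T * c p ≤ T * 5 := Nat.mul_le_mul_left T (hc5 p)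
    have h2 := hT p
    set u := T * c p
    omega
end

section
/- Let a reallocation instance be given with uniform product size size ≡ 1, with the carry-in and warehouse constraints dropped (d⁻ ≡ ∞ and c ≡ ∞), and with integer carry-out capacities d⁺ : W → ℕ satisfying d⁺(w) ≥ 1 for every w ∈ W. For w ∈ W with P⁺(w) ≠ ∅ and 1 ≤ j ≤ |P⁺(w)|, let τ_{(j)}(w) denote the j-th largest value (counted with multiplicity) of τ on P⁺(w). Then the minimum, over all schedules satisfying the carry-out constraint, of the completion time equals max over w ∈ W with P⁺(w) ≠ ∅ and 1 ≤ j ≤ |P⁺(w)| of ( ⌈j / d⁺(w)⌉ − 1 + τ_{(j)}(w) ). -/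
open Finset

def nthLargestNat (M : Multiset ℕ) (i : ℕ) : ℕ :=
  ((M.sort (· ≤ ·)).reverse).getD i 0

def optValue {P W : Type*} [Fintype P] [Fintype W] [DecidableEq W]
    (s : P → W) (τ : P → ℕ) (dout : W → ℕ) : ℕ :=
  (univ.filter (fun w : W => (univ.filter (fun p => s p = w)).Nonempty)).sup
    (fun w => (Finset.range (univ.filter (fun p => s p = w)).card).sup
      (fun j' => ((j' + 1) + dout w - 1) / dout w - 1
        + nthLargestNat ((univ.filter (fun p => s p = w)).val.map τ) j'))

section Aux

variable {P W : Type*} [Fintype P] [Fintype W] [DecidableEq W]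

/-- The products departing from `w`, listed in order of decreasing transit time. -/
noncomputable def sList (s : P → W) (τ : P → ℕ) (w : W) : List P :=
  (Finset.univ.filter (fun p => s p = w)).toList.mergeSort (fun a b => decide (τ b ≤ τ a))

lemma sList_perm (s : P → W) (τ : P → ℕ) (w : W) :
    (sList s τ w).Perm (Finset.univ.filter (fun p => s p = w)).toList :=
  List.mergeSort_perm _ _

lemma sList_nodup (s : P → W) (τ : P → ℕ) (w : W) : (sList s τ w).Nodup :=
  (sList_perm s τ w).nodup_iff.mpr (Finset.nodup_toList _)

lemma sList_length (s : P → W) (τ : P → ℕ) (w : W) :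
    (sList s τ w).length = (Finset.univ.filter (fun p => s p = w)).card := by
  rw [(sList_perm s τ w).length_eq, Finset.length_toList]

lemma mem_sList (s : P → W) (τ : P → ℕ) (w : W) (p : P) :
    p ∈ sList s τ w ↔ s p = w := by
  rw [(sList_perm s τ w).mem_iff, Finset.mem_toList, Finset.mem_filter]
  simp

lemma sList_sorted (s : P → W) (τ : P → ℕ) (w : W) :
    (sList s τ w).Pairwise (fun a b => τ b ≤ τ a) := by
  have h := List.pairwise_mergeSort (le := fun a b : P => decide (τ b ≤ τ a))
    (fun a b c hab hbc => by simp only [decide_eq_true_eq] at *; omega)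
    (fun a b => by simp only [Bool.or_eq_true, decide_eq_true_eq]; omega)
    (Finset.univ.filter (fun p => s p = w)).toList
  simpa [sList] using h

lemma sList_map (s : P → W) (τ : P → ℕ) (w : W) :
    ((sList s τ w).map τ).reverse =
      (((Finset.univ.filter (fun p => s p = w)).val.map τ).sort (· ≤ ·)) := by
  refine (fun hp h1 h2 => List.Perm.eq_of_pairwise' (r := ((· ≤ ·) : ℕ → ℕ → Prop)) h1 h2 hp) ?_ ?_ ?_
  · refine (List.reverse_perm _).trans ?_
    have h1 : ((sList s τ w).map τ).Perm
        ((Finset.univ.filter (fun p => s p = w)).toList.map τ) :=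
      (sList_perm s τ w).map τ
    refine h1.trans ?_
    rw [← Multiset.coe_eq_coe]
    rw [Multiset.sort_eq]
    rw [← Multiset.map_coe, Finset.coe_toList]
  · rw [List.pairwise_reverse, List.pairwise_map]
    exact sList_sorted s τ w
  · exact Multiset.pairwise_sort _ _

lemma nth_eq_getD (s : P → W) (τ : P → ℕ) (w : W) (j : ℕ) :
    nthLargestNat ((Finset.univ.filter (fun p => s p = w)).val.map τ) j
      = ((sList s τ w).map τ).getD j 0 := by
  rw [nthLargestNat, ← sList_map s τ w, List.reverse_reverse]

lemma nth_eq_getElem (s : P → W) (τ : P → ℕ) (w : W) (j : ℕ)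
    (hj : j < (sList s τ w).length) :
    nthLargestNat ((Finset.univ.filter (fun p => s p = w)).val.map τ) j
      = τ ((sList s τ w)[j]) := by
  rw [nth_eq_getD, List.getD_eq_getElem _ _ (by simpa using hj), List.getElem_map]

end Aux

/-- with unit product sizes, integral carry-out capacities, and
the carry-in and warehouse constraints dropped, the minimum completion time over
all carry-out-feasible schedules equals
`max_{w : P⁺(w) ≠ ∅, 1 ≤ j ≤ |P⁺(w)|} (⌈j / d⁺(w)⌉ - 1 + τ_{(j)}(w))`. -/
theorem stmt_18 {P W : Type*} [Fintype P] [Nonempty P] [Fintype W] [DecidableEq W]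
    (s t : P → W) (hst : ∀ p, s p ≠ t p)
    (τ : P → ℕ) (hτ : ∀ p, 1 ≤ τ p)
    (dout : W → ℕ) (hd : ∀ w, 1 ≤ dout w) :
    (∃ φ : P → ℕ,
        (∀ (w : W) (θ : ℕ),
          (univ.filter (fun p => s p = w ∧ φ p = θ)).card ≤ dout w) ∧
        univ.sup' univ_nonempty (fun p => φ p + τ p) = optValue s τ dout) ∧
    (∀ φ : P → ℕ,
        (∀ (w : W) (θ : ℕ),
          (univ.filter (fun p => s p = w ∧ φ p = θ)).card ≤ dout w) →
        optValue s τ dout ≤ univ.sup' univ_nonempty (fun p => φ p + τ p)) := by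
  classical
  -- arithmetic simplification of the ceiling expression
  have harith : ∀ (j d : ℕ), 1 ≤ d → ((j + 1) + d - 1) / d - 1 = j / d := by
    intro j d hd1
    have h1 : (j + 1) + d - 1 = j + d := by omega
    rw [h1, Nat.add_div_right _ hd1, Nat.add_sub_cancel]
  have hmem : ∀ p : P, p ∈ sList s τ (s p) := fun p => (mem_sList s τ (s p) p).mpr rfl
  have hidx : ∀ p : P, List.idxOf p (sList s τ (s p)) < (sList s τ (s p)).length :=
    fun p => List.idxOf_lt_length_iff.mpr (hmem p)
  set φ₀ : P → ℕ := fun p => List.idxOf p (sList s τ (s p)) / dout (s p) with hφ₀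
  -- τ of a product in terms of nthLargestNat
  have hτp : ∀ p : P, τ p = nthLargestNat
      ((Finset.univ.filter (fun q => s q = s p)).val.map τ) (List.idxOf p (sList s τ (s p))) := by
    intro p
    rw [nth_eq_getElem s τ (s p) _ (hidx p), List.getElem_idxOf (hidx p)]
  constructor
  · refine ⟨φ₀, ?_, ?_⟩
    · -- carry-out feasibility of φ₀
      intro w θ
      have : (univ.filter (fun p => s p = w ∧ φ₀ p = θ)).card
          ≤ (Finset.Ico (θ * dout w) ((θ + 1) * dout w)).card := by
        apply Finset.card_le_card_of_injOn (fun p => List.idxOf p (sList s τ w))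
        · intro p hp
          simp only [Finset.mem_coe, mem_filter, mem_univ, true_and] at hp
          obtain ⟨hpw, hpθ⟩ := hp
          subst hpw
          rw [Finset.mem_coe, Finset.mem_Ico]
          simp only [hφ₀] at hpθ
          constructor
          · calc θ * dout (s p) = (List.idxOf p (sList s τ (s p)) / dout (s p)) * dout (s p) := by
                  rw [hpθ]
              _ ≤ List.idxOf p (sList s τ (s p)) := Nat.div_mul_le_self _ _
          · have : List.idxOf p (sList s τ (s p)) / dout (s p) < θ + 1 := by omega
            exact (Nat.div_lt_iff_lt_mul (hd (s p))).mp this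
        · intro p hp q hq hpq
          simp only at hpq
          simp only [Finset.coe_filter, Set.mem_setOf_eq, mem_univ, true_and] at hp hq
          have hpw : s p = w := hp.1
          have hqw : s q = w := hq.1
          have hpl : p ∈ sList s τ w := (mem_sList s τ w p).mpr hpw
          have hql : q ∈ sList s τ w := (mem_sList s τ w q).mpr hqw
          have h1 : List.idxOf p (sList s τ w) < (sList s τ w).length :=
            List.idxOf_lt_length_iff.mpr hpl
          calc p = (sList s τ w)[List.idxOf p (sList s τ w)] :=
                (List.getElem_idxOf h1).symm
            _ = (sList s τ w)[List.idxOf q (sList s τ w)]'(by rw [← hpq]; exact h1) := by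
                congr 1
            _ = q := List.getElem_idxOf (by rw [← hpq]; exact h1)
      refine this.trans ?_
      rw [Nat.card_Ico]
      have : (θ + 1) * dout w = θ * dout w + dout w := by ring
      omega
    · -- sup' φ₀ = optValue
      apply le_antisymm
      · apply Finset.sup'_le
        intro p _
        have hwne : (univ.filter (fun q => s q = s p)).Nonempty :=
          ⟨p, by simp⟩
        have hjlt : List.idxOf p (sList s τ (s p)) < (univ.filter (fun q => s q = s p)).card := by
          rw [← sList_length s τ (s p)]; exact hidx p
        calc φ₀ p + τ p
            = ((List.idxOf p (sList s τ (s p)) + 1) + dout (s p) - 1) / dout (s p) - 1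
              + nthLargestNat ((Finset.univ.filter (fun q => s q = s p)).val.map τ)
                (List.idxOf p (sList s τ (s p))) := by
              rw [harith _ _ (hd (s p)), ← hτp p]
          _ ≤ (Finset.range (univ.filter (fun q => s q = s p)).card).sup
              (fun j' => ((j' + 1) + dout (s p) - 1) / dout (s p) - 1
                + nthLargestNat ((univ.filter (fun q => s q = s p)).val.map τ) j') :=
              Finset.le_sup (f := fun j' => ((j' + 1) + dout (s p) - 1) / dout (s p) - 1
                + nthLargestNat ((univ.filter (fun q => s q = s p)).val.map τ) j')
                (Finset.mem_range.mpr hjlt)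
          _ ≤ optValue s τ dout :=
              Finset.le_sup (f := fun w => (Finset.range (univ.filter (fun q => s q = w)).card).sup
                (fun j' => ((j' + 1) + dout w - 1) / dout w - 1
                  + nthLargestNat ((univ.filter (fun q => s q = w)).val.map τ) j'))
                (by simp only [mem_filter, mem_univ, true_and]; exact hwne)
      · apply Finset.sup_le
        intro w hw
        apply Finset.sup_le
        intro j' hj'
        rw [Finset.mem_range, ← sList_length s τ w] at hj'
        set p := (sList s τ w)[j'] with hp
        have hpw : s p = w := (mem_sList s τ w p).mp (List.getElem_mem hj')
        have hidxp : List.idxOf p (sList s τ w) = j' :=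
          List.Nodup.idxOf_getElem (sList_nodup s τ w) j' hj'
        have hτpv : τ p = nthLargestNat ((univ.filter (fun q => s q = w)).val.map τ) j' :=
          (nth_eq_getElem s τ w j' hj').symm ▸ rfl
        have key : ((j' + 1) + dout w - 1) / dout w - 1
            + nthLargestNat ((univ.filter (fun q => s q = w)).val.map τ) j' = φ₀ p + τ p := by
          rw [harith _ _ (hd w)]
          simp only [hφ₀]
          rw [hpw, hidxp, ← hτpv]
        rw [key]
        exact Finset.le_sup' (fun p => φ₀ p + τ p) (mem_univ p)
  · -- lower bound for any feasible schedule
    intro φ hfeas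
    apply Finset.sup_le
    intro w hw
    apply Finset.sup_le
    intro j' hj'
    rw [Finset.mem_range, ← sList_length s τ w] at hj'
    set l := sList s τ w with hl
    set S := (l.take (j' + 1)).toFinset with hS
    have hnodupS : (l.take (j' + 1)).Nodup :=
      (List.take_sublist _ _).nodup (sList_nodup s τ w)
    have hcardS : S.card = j' + 1 := by
      rw [hS, List.toFinset_card_of_nodup hnodupS, List.length_take]
      omega
    have hSw : ∀ q ∈ S, s q = w := by
      intro q hq
      rw [hS, List.mem_toFinset] at hq
      exact (mem_sList s τ w q).mp ((List.take_sublist _ _).mem hq)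
    have hτS : ∀ q ∈ S, nthLargestNat ((univ.filter (fun r => s r = w)).val.map τ) j' ≤ τ q := by
      intro q hq
      rw [hS, List.mem_toFinset] at hq
      obtain ⟨i, hi, hiq⟩ := List.getElem_of_mem hq
      have hilen : i < j' + 1 := by
        rw [List.length_take] at hi; omega
      have hil : i < l.length := by omega
      have hqi : q = l[i] := by rw [← hiq, List.getElem_take]
      rw [nth_eq_getElem s τ w j' hj', hqi]
      rcases Nat.lt_or_ge i j' with h | h
      · have := (List.pairwise_iff_getElem.mp (sList_sorted s τ w)) i j' hil hj' h
        exact this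
      · have : i = j' := by omega
        subst this
        exact le_refl _
    have hex : ∃ q ∈ S, j' / dout w ≤ φ q := by
      by_contra hcon
      push_neg at hcon
      have hsub : S ⊆ (Finset.range (j' / dout w)).biUnion
          (fun θ => univ.filter (fun p => s p = w ∧ φ p = θ)) := by
        intro q hq
        rw [Finset.mem_biUnion]
        exact ⟨φ q, Finset.mem_range.mpr (hcon q hq),
          Finset.mem_filter.mpr ⟨mem_univ q, hSw q hq, rfl⟩⟩
      have hcard : S.card ≤ (j' / dout w) * dout w := by
        calc S.card ≤ ((Finset.range (j' / dout w)).biUnion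
              (fun θ => univ.filter (fun p => s p = w ∧ φ p = θ))).card :=
            Finset.card_le_card hsub
          _ ≤ ∑ θ ∈ Finset.range (j' / dout w),
              (univ.filter (fun p => s p = w ∧ φ p = θ)).card :=
            Finset.card_biUnion_le
          _ ≤ ∑ _θ ∈ Finset.range (j' / dout w), dout w :=
            Finset.sum_le_sum (fun θ _ => hfeas w θ)
          _ = (j' / dout w) * dout w := by
            rw [Finset.sum_const, Finset.card_range, smul_eq_mul]
      have := Nat.div_mul_le_self j' (dout w)
      omega
    obtain ⟨q, hqS, hq⟩ := hex
    calc ((j' + 1) + dout w - 1) / dout w - 1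
          + nthLargestNat ((univ.filter (fun r => s r = w)).val.map τ) j'
        = j' / dout w + nthLargestNat ((univ.filter (fun r => s r = w)).val.map τ) j' := by
          rw [harith _ _ (hd w)]
      _ ≤ φ q + τ q := Nat.add_le_add hq (hτS q hqS)
      _ ≤ univ.sup' univ_nonempty (fun p => φ p + τ p) :=
          Finset.le_sup' (fun p => φ p + τ p) (mem_univ q)
end
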